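/- arXiv:1011.1790 — 8 statements merged into one kernel-verified Lean document; each statement's English description precedes it below -/
import Mathlib

section
/- For every real z, the integral over ℝ of (e^{i x z} − 1)·e^{α x}/cosh(x) dx equals π/cosh(π(z − iα)/2) − π/cos(πα/2), where |α| < 1. -/
open Real Complex MeasureTheory Set

lemma int_Ioi {b : ℝ} (hb : |b| < 1) :
    IntegrableOn (fun x : ℝ => Real.exp (b * x) / Real.cosh x) (Ioi 0) := by
  obtain ⟨hb1, hb2⟩ := abs_lt.mp hb
  have h1 : IntegrableOn (fun x : ℝ => 2 * Real.exp (-(1 - b) * x)) (Ioi 0) :=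
    (exp_neg_integrableOn_Ioi 0 (by linarith)).const_mul 2
  refine h1.mono' ?_ ?_
  · exact (Continuous.div (by continuity) Real.continuous_cosh
      (fun x => (Real.cosh_pos x).ne')).aestronglyMeasurable
  · filter_upwards with x
    have hc := Real.cosh_pos x
    have h2 : Real.exp x / 2 ≤ Real.cosh x := by
      rw [Real.cosh_eq]; have := (Real.exp_pos (-x)).le; linarith
    rw [Real.norm_eq_abs, _root_.abs_of_nonneg (by positivity)]
    have h3 : Real.exp (b * x) / Real.cosh x ≤ Real.exp (b * x) / (Real.exp x / 2) :=
      div_le_div_of_nonneg_left (Real.exp_pos _).le (by positivity) h2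
    refine h3.trans (le_of_eq ?_)
    rw [show -(1-b)*x = b*x - x by ring, Real.exp_sub]
    have := (Real.exp_pos x).ne'
    field_simp

lemma aux_integrable {a : ℝ} (ha : |a| < 1) :
    Integrable (fun x : ℝ => Real.exp (a * x) / Real.cosh x) := by
  rw [← integrableOn_univ, ← Iic_union_Ioi (a := (0:ℝ))]
  refine IntegrableOn.union ?_ (int_Ioi ha)
  have h1 : IntegrableOn (fun x : ℝ => Real.exp (-a * x) / Real.cosh x) (Ici 0) := by
    rw [integrableOn_Ici_iff_integrableOn_Ioi]
    exact int_Ioi (by rwa [abs_neg])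
  have h2 := ((Measure.measurePreserving_neg (volume : Measure ℝ)).integrableOn_comp_preimage
    (Homeomorph.neg ℝ).measurableEmbedding
    (f := fun x : ℝ => Real.exp (-a * x) / Real.cosh x) (s := Ici (0:ℝ))).mpr h1
  have hs : (Neg.neg ⁻¹' Ici (0:ℝ) : Set ℝ) = Iic 0 := by ext x; simp
  rw [hs] at h2
  refine h2.congr_fun ?_ measurableSet_Iic
  intro x _
  simp [Function.comp, Real.cosh_neg, mul_neg, neg_mul]

lemma aux_integrable_c {β : ℂ} (hβ : |β.re| < 1) :
    Integrable (fun x : ℝ => Complex.exp (β * x) / (Real.cosh x : ℂ)) := by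
  refine (aux_integrable hβ).mono' ?_ ?_
  · exact (Continuous.div (by continuity) (by continuity)
      (fun x => by exact_mod_cast (Real.cosh_pos x).ne')).aestronglyMeasurable
  · filter_upwards with x
    rw [norm_div, Complex.norm_exp, Complex.norm_real,
      Real.norm_eq_abs, _root_.abs_of_pos (Real.cosh_pos x)]
    simp [Complex.mul_re]

lemma key_integral {β : ℂ} (hβ : |β.re| < 1) :
    ∫ x : ℝ, Complex.exp (β * x) / (Real.cosh x : ℂ) = π / Complex.cos (π * β / 2) := by
  obtain ⟨hb1, hb2⟩ := abs_lt.mp hβ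
  set u : ℂ := (β + 1) / 2 with hu
  set φ : ℝ → ℝ := fun x => Real.exp (2*x) / (1 + Real.exp (2*x)) with hφ
  set φ' : ℝ → ℝ := fun x => 2 * Real.exp (2*x) / (1 + Real.exp (2*x))^2 with hφ'
  have hden : ∀ x : ℝ, (0:ℝ) < 1 + Real.exp (2*x) := fun x => by positivity
  have hderiv : ∀ x : ℝ, HasDerivAt φ (φ' x) x := by
    intro x
    have h1 : HasDerivAt (fun x : ℝ => Real.exp (2*x)) (2 * Real.exp (2*x)) x := by
      simpa [mul_comm] using ((hasDerivAt_id x).const_mul 2).exp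
    have h2 := h1.div (h1.const_add 1) (hden x).ne'
    exact h2.congr_deriv (by rw [hφ']; ring)
  have hinj : Function.Injective φ := by
    intro x y hxy
    have hx := hden x; have hy := hden y
    rw [hφ, div_eq_div_iff hx.ne' hy.ne'] at hxy
    have h3 : Real.exp (2*x) = Real.exp (2*y) := by nlinarith
    have := Real.exp_injective h3
    linarith
  have hrange : φ '' univ = Ioo 0 1 := by
    ext y
    simp only [image_univ, mem_range, mem_Ioo]
    constructor
    · rintro ⟨x, rfl⟩
      refine ⟨div_pos (Real.exp_pos _) (hden x), ?_⟩
      rw [hφ]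
      rw [div_lt_one (hden x)]; linarith [Real.exp_pos (2*x)]
    · rintro ⟨hy0, hy1⟩
      refine ⟨Real.log (y / (1-y)) / 2, ?_⟩
      have h1 : (0:ℝ) < 1 - y := by linarith
      have h2 : (0:ℝ) < y / (1-y) := div_pos hy0 h1
      rw [hφ]
      dsimp only
      rw [show 2 * (Real.log (y / (1-y)) / 2) = Real.log (y / (1-y)) by ring,
        Real.exp_log h2]
      field_simp
      ring
  have hcov := integral_image_eq_integral_abs_deriv_smul (MeasurableSet.univ)
    (fun x _ => (hderiv x).hasDerivWithinAt) (hinj.injOn)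
    (fun s : ℝ => (s:ℂ)^(u-1) * ((1:ℂ)-s)^(-u))
  rw [hrange, MeasureTheory.setIntegral_univ] at hcov
  have hpoint : ∀ x : ℝ, |φ' x| • ((φ x : ℂ)^(u-1) * ((1:ℂ) - (φ x : ℂ))^(-u))
      = Complex.exp (β * x) / (Real.cosh x : ℂ) := by
    intro x
    have hd := hden x
    have hφpos : 0 < φ x := div_pos (Real.exp_pos _) hd
    have hφlt : φ x < 1 := by rw [hφ]; rw [div_lt_one hd]; linarith [Real.exp_pos (2*x)]
    have h1φ : (1:ℝ) - φ x = 1 / (1 + Real.exp (2*x)) := by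
      rw [hφ]; field_simp; ring
    set L : ℝ := Real.log (1 + Real.exp (2*x)) with hL
    have hlogφ : Real.log (φ x) = 2*x - L := by
      rw [hφ]
      exact (Real.log_div (Real.exp_pos _).ne' hd.ne').trans (by rw [Real.log_exp])
    have hlog1φ : Real.log (1 - φ x) = -L := by
      rw [h1φ, Real.log_div one_ne_zero hd.ne', Real.log_one, zero_sub]
    have e1 : (φ x : ℂ)^(u-1) = Complex.exp ((u-1) * ((2*x : ℝ) - (L:ℝ) : ℂ)) := by
      rw [Complex.cpow_def_of_ne_zero (by exact_mod_cast hφpos.ne'),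
        ← Complex.ofReal_log hφpos.le, hlogφ]
      push_cast
      ring_nf
    have e2 : ((1:ℂ) - (φ x : ℂ))^(-u) = Complex.exp ((-u) * (-(L:ℝ) : ℂ)) := by
      have h5 : (1:ℂ) - (φ x : ℂ) = ((1 - φ x : ℝ) : ℂ) := by push_cast; ring
      rw [h5, Complex.cpow_def_of_ne_zero
        (by exact_mod_cast (by linarith : (0:ℝ) < 1 - φ x).ne'),
        ← Complex.ofReal_log (by linarith : (0:ℝ) ≤ 1 - φ x), hlog1φ]
      push_cast
      ring_nf
    have habs : |φ' x| = φ' x := _root_.abs_of_pos (by rw [hφ']; positivity)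
    rw [e1, e2, habs, ← Complex.exp_add]
    have hexp : (u-1) * ((2*x : ℝ) - (L:ℝ) : ℂ) + (-u) * (-(L:ℝ) : ℂ)
        = (β - 1) * x + (L:ℝ) := by
      rw [hu]; push_cast; ring
    rw [hexp, Complex.exp_add]
    have hLe : Complex.exp ((L:ℝ) : ℂ) = ((1 + Real.exp (2*x) : ℝ) : ℂ) := by
      rw [← Complex.ofReal_exp, hL, Real.exp_log hd]
    rw [hLe]
    set E : ℂ := Complex.exp (x : ℂ) with hE
    have hEne : E ≠ 0 := Complex.exp_ne_zero _
    have hE2 : ((Real.exp (2*x) : ℝ) : ℂ) = E^2 := by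
      rw [Complex.ofReal_exp, hE, ← Complex.exp_nat_mul]
      push_cast
      ring_nf
    have h1E : (1:ℂ) + E^2 ≠ 0 := by
      rw [← hE2, ← Complex.ofReal_one, ← Complex.ofReal_add]
      exact_mod_cast hd.ne'
    have hβ1 : Complex.exp ((β-1) * x) = Complex.exp (β * x) / E := by
      rw [hE, ← Complex.exp_sub]
      congr 1
      ring
    have hcoshE : ((Real.cosh x : ℝ) : ℂ) = (E + E⁻¹) / 2 := by
      rw [Real.cosh_eq]
      push_cast [Complex.ofReal_exp]
      rw [Complex.exp_neg]
    have hcoshne : ((Real.cosh x : ℝ) : ℂ) ≠ 0 := by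
      exact_mod_cast (Real.cosh_pos x).ne'
    rw [Complex.real_smul, hβ1]
    rw [hφ']
    push_cast
    have hE2' : Complex.exp (2 * (x:ℂ)) = E^2 := by rw [two_mul, Complex.exp_add, hE, sq]
    have hcoshE2 : (1:ℂ) + E^2 = 2 * E * ((Real.cosh x : ℝ) : ℂ) := by
      rw [hcoshE]
      field_simp [hEne]
      ring
    have hcoshne' : Complex.cosh (x:ℂ) ≠ 0 := by
      rw [← Complex.ofReal_cosh]; exact hcoshne
    rw [hE2', ← Complex.ofReal_cosh, hcoshE2]
    field_simp [hEne, hcoshne']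
  simp_rw [hpoint] at hcov
  rw [← hcov]
  have hure : u.re = (β.re + 1) / 2 := by
    rw [hu]
    simp [Complex.div_re, Complex.add_re, Complex.normSq]
  have hu1 : 0 < u.re := by rw [hure]; linarith
  have hu2 : 0 < (1 - u).re := by
    rw [Complex.sub_re, Complex.one_re, hure]; linarith
  have hbeta : ∫ x in Ioo (0:ℝ) 1, (x:ℂ)^(u-1) * ((1:ℂ)-x)^(-u)
      = Complex.betaIntegral u (1-u) := by
    rw [Complex.betaIntegral, intervalIntegral.integral_of_le zero_le_one,
      MeasureTheory.integral_Ioc_eq_integral_Ioo]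
    simp only [show (1:ℂ) - u - 1 = -u from by ring]
  rw [hbeta]
  have hG := Complex.Gamma_mul_Gamma_eq_betaIntegral hu1 hu2
  rw [show u + (1-u) = 1 by ring, Complex.Gamma_one, one_mul] at hG
  rw [← hG, Complex.Gamma_mul_Gamma_one_sub]
  congr 1
  rw [show (π:ℂ) * u = π * β / 2 + π / 2 by rw [hu]; ring, Complex.sin_add_pi_div_two]

/-- For every real `z`, the integral over ℝ of `(e^{ixz} - 1) e^{αx}/cosh x`
equals `π/cosh(π(z-iα)/2) - π/cos(πα/2)`, for `|α| < 1`. -/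
theorem stmt0 (α : ℝ) (hα : |α| < 1) (z : ℝ) :
    ∫ x : ℝ, (Complex.exp (Complex.I * x * z) - 1) * Complex.exp ((α : ℂ) * x)
        / (Real.cosh x : ℂ)
      = (π : ℂ) / Complex.cosh ((π : ℂ) * ((z : ℂ) - Complex.I * α) / 2)
        - (π : ℂ) / (Real.cos (π * α / 2) : ℂ) := by
  have hre1 : (((α:ℂ) + Complex.I * z)).re = α := by simp
  have hre2 : ((α:ℂ)).re = α := by simp
  have hi1 : Integrable (fun x : ℝ => Complex.exp (((α:ℂ) + Complex.I * z) * x) / (Real.cosh x : ℂ)) :=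
    aux_integrable_c (by rw [hre1]; exact hα)
  have hi2 : Integrable (fun x : ℝ => Complex.exp ((α:ℂ) * x) / (Real.cosh x : ℂ)) :=
    aux_integrable_c (by rw [hre2]; exact hα)
  have heq : ∀ x : ℝ, (Complex.exp (Complex.I * x * z) - 1) * Complex.exp ((α : ℂ) * x)
        / (Real.cosh x : ℂ)
      = Complex.exp (((α:ℂ) + Complex.I * z) * x) / (Real.cosh x : ℂ)
        - Complex.exp ((α:ℂ) * x) / (Real.cosh x : ℂ) := by
    intro x
    rw [sub_mul, one_mul, sub_div, ← Complex.exp_add]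
    congr 3
    ring
  rw [MeasureTheory.integral_congr_ae (Filter.Eventually.of_forall heq),
    MeasureTheory.integral_sub hi1 hi2,
    key_integral (by rw [hre1]; exact hα), key_integral (by rw [hre2]; exact hα)]
  congr 2
  · rw [← Complex.cos_mul_I]
    congr 1
    linear_combination ((π:ℂ)*(α:ℂ)/2) * Complex.I_sq
  · rw [Complex.ofReal_cos]
    norm_cast
end

section
/- For complex parameters a, b (not nonpositive integers) and complex x with a+x, b+x not nonpositive integers, the infinite product ∏_{n≥0} (1 + x/(n+a))/(1 + x/(n+b)) converges and equals Γ(a)Γ(b+x)/(Γ(b)Γ(a+x)). -/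
open Complex Filter Finset Topology

private lemma aux_ne_zero (c : ℂ) (hc : ∀ n : ℕ, c ≠ -(n : ℂ)) (n : ℕ) :
    (n : ℂ) + c ≠ 0 := by
  intro h
  exact hc n (by linear_combination h)

/-- For complex `a`, `b` (not nonpositive integers) and complex `x` with `a+x`, `b+x`
not nonpositive integers, the infinite product `∏_{n≥0} (1+x/(n+a))/(1+x/(n+b))`
converges and equals `Γ(a)Γ(b+x)/(Γ(b)Γ(a+x))`. -/
theorem stmt1 (a b x : ℂ)
    (ha : ∀ n : ℕ, a ≠ -(n : ℂ)) (hb : ∀ n : ℕ, b ≠ -(n : ℂ))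
    (hax : ∀ n : ℕ, a + x ≠ -(n : ℂ)) (hbx : ∀ n : ℕ, b + x ≠ -(n : ℂ)) :
    Multipliable (fun n : ℕ => (1 + x / ((n : ℂ) + a)) / (1 + x / ((n : ℂ) + b))) ∧
    ∏' n : ℕ, (1 + x / ((n : ℂ) + a)) / (1 + x / ((n : ℂ) + b))
      = Complex.Gamma a * Complex.Gamma (b + x)
        / (Complex.Gamma b * Complex.Gamma (a + x)) := by
  set f : ℕ → ℂ := fun n => (1 + x / ((n : ℂ) + a)) / (1 + x / ((n : ℂ) + b)) with hf
  have hna : ∀ n : ℕ, (n : ℂ) + a ≠ 0 := aux_ne_zero a ha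
  have hnb : ∀ n : ℕ, (n : ℂ) + b ≠ 0 := aux_ne_zero b hb
  have hnax : ∀ n : ℕ, (n : ℂ) + (a + x) ≠ 0 := aux_ne_zero (a + x) hax
  have hnbx : ∀ n : ℕ, (n : ℂ) + (b + x) ≠ 0 := aux_ne_zero (b + x) hbx
  -- closed form of the terms
  have hterm : ∀ n : ℕ, f n =
      (((n : ℂ) + (a + x)) * ((n : ℂ) + b)) / (((n : ℂ) + a) * ((n : ℂ) + (b + x))) := by
    intro n
    show (1 + x / ((n : ℂ) + a)) / (1 + x / ((n : ℂ) + b)) = _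
    have h1 : 1 + x / ((n : ℂ) + b) = ((n : ℂ) + (b + x)) / ((n : ℂ) + b) := by
      rw [eq_div_iff (hnb n), add_mul, one_mul, div_mul_cancel₀ _ (hnb n)]; ring
    have h2 : 1 + x / ((n : ℂ) + a) = ((n : ℂ) + (a + x)) / ((n : ℂ) + a) := by
      rw [eq_div_iff (hna n), add_mul, one_mul, div_mul_cancel₀ _ (hna n)]; ring
    rw [h1, h2, div_div_eq_mul_div, div_mul_eq_mul_div, div_div]
  have hfne : ∀ n : ℕ, f n ≠ 0 := by
    intro n
    rw [hterm n]
    exact div_ne_zero (mul_ne_zero (hnax n) (hnb n)) (mul_ne_zero (hna n) (hnbx n))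
  -- f n = 1 + g n with g summable
  set g : ℕ → ℂ := fun n => x * (b - a) / (((n : ℂ) + a) * ((n : ℂ) + (b + x))) with hg
  have hfg : ∀ n : ℕ, f n = 1 + g n := by
    intro n
    have h1 : 1 + g n = ((((n : ℂ) + a) * ((n : ℂ) + (b + x))) + x * (b - a))
        / (((n : ℂ) + a) * ((n : ℂ) + (b + x))) := by
      rw [add_div, div_self (mul_ne_zero (hna n) (hnbx n))]
    rw [hterm n, h1, div_eq_div_iff (mul_ne_zero (hna n) (hnbx n))
      (mul_ne_zero (hna n) (hnbx n))]
    ring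
  -- summability of ‖g‖
  have hgn : Summable (fun n : ℕ => ‖g n‖) := by
    apply Summable.of_norm_bounded_eventually_nat
      (g := fun n : ℕ => (4 * ‖x * (b - a)‖) * (1 / (n : ℝ) ^ 2))
      (((Real.summable_one_div_nat_pow).mpr one_lt_two).mul_left _)
    have h1 : ∀ᶠ n : ℕ in atTop, ‖a‖ ≤ (n : ℝ) / 2 :=
      ((tendsto_natCast_atTop_atTop (R := ℝ)).atTop_div_const two_pos).eventually_ge_atTop ‖a‖
    have h2 : ∀ᶠ n : ℕ in atTop, ‖b + x‖ ≤ (n : ℝ) / 2 :=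
      ((tendsto_natCast_atTop_atTop (R := ℝ)).atTop_div_const two_pos).eventually_ge_atTop ‖b + x‖
    filter_upwards [h1, h2, eventually_ge_atTop 1] with n h1 h2 hn1
    have hnpos : (0 : ℝ) < (n : ℝ) := by exact_mod_cast hn1
    have hda : (n : ℝ) / 2 ≤ ‖(n : ℂ) + a‖ := by
      have := norm_add_le ((n : ℂ) + a) (-a)
      simp only [add_neg_cancel_right, norm_neg, Complex.norm_natCast] at this
      linarith
    have hdb : (n : ℝ) / 2 ≤ ‖(n : ℂ) + (b + x)‖ := by
      have := norm_add_le ((n : ℂ) + (b + x)) (-(b + x))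
      simp only [add_neg_cancel_right, norm_neg, Complex.norm_natCast] at this
      linarith
    have hpa' : (0 : ℝ) < ‖(n : ℂ) + a‖ := lt_of_lt_of_le (by positivity) hda
    have hpb' : (0 : ℝ) < ‖(n : ℂ) + (b + x)‖ := lt_of_lt_of_le (by positivity) hdb
    rw [Real.norm_eq_abs, _root_.abs_of_nonneg (norm_nonneg _)]
    simp only [hg, norm_div, norm_mul]
    rw [div_le_iff₀ (mul_pos hpa' hpb')]
    calc ‖x‖ * ‖b - a‖
        = (4 * (‖x‖ * ‖b - a‖) * (1 / (n : ℝ) ^ 2)) * (((n : ℝ) / 2) * ((n : ℝ) / 2)) := by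
          field_simp; ring
      _ ≤ (4 * (‖x‖ * ‖b - a‖) * (1 / (n : ℝ) ^ 2)) * (‖(n : ℂ) + a‖ * ‖(n : ℂ) + (b + x)‖) := by
          apply mul_le_mul_of_nonneg_left
          · exact mul_le_mul hda hdb (by positivity) (norm_nonneg _)
          · positivity
  -- summability of logs
  have hlog : Summable (fun n : ℕ => Complex.log (f n)) := by
    apply Summable.of_norm_bounded_eventually_nat (g := fun n : ℕ => (3 / 2) * ‖g n‖)
      (hgn.mul_left _)
    have hsmall : ∀ᶠ n : ℕ in atTop, ‖g n‖ ≤ 1 / 2 :=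
      hgn.tendsto_atTop_zero.eventually (eventually_le_nhds (by norm_num))
    filter_upwards [hsmall] with n hn
    rw [hfg n]
    exact Complex.norm_log_one_add_half_le_self hn
  -- the product converges
  have hexp : (cexp ∘ fun n : ℕ => Complex.log (f n)) = f :=
    funext fun n => Complex.exp_log (hfne n)
  have hprod : HasProd f (cexp (∑' (n : ℕ), Complex.log (f n))) := by
    have := hlog.hasSum.cexp
    rwa [hexp] at this
  have hmult : Multipliable f := ⟨_, hprod⟩
  refine ⟨hmult, ?_⟩
  -- partial products equal ratios of GammaSeq
  have hkey : ∀ n : ℕ, 1 ≤ n → ∏ j ∈ range (n + 1), f j =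
      GammaSeq a n * GammaSeq (b + x) n / (GammaSeq b n * GammaSeq (a + x) n) := by
    intro n hn
    have hn0 : (n : ℂ) ≠ 0 := Nat.cast_ne_zero.mpr (by omega)
    have hfac : ((n.factorial : ℕ) : ℂ) ≠ 0 := Nat.cast_ne_zero.mpr n.factorial_ne_zero
    have hPa : ∏ j ∈ range (n + 1), (a + (j : ℂ)) ≠ 0 :=
      Finset.prod_ne_zero_iff.mpr fun j _ => by rw [add_comm]; exact hna j
    have hPb : ∏ j ∈ range (n + 1), (b + (j : ℂ)) ≠ 0 :=
      Finset.prod_ne_zero_iff.mpr fun j _ => by rw [add_comm]; exact hnb j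
    have hPax : ∏ j ∈ range (n + 1), (a + x + (j : ℂ)) ≠ 0 :=
      Finset.prod_ne_zero_iff.mpr fun j _ => by rw [add_comm]; exact hnax j
    have hPbx : ∏ j ∈ range (n + 1), (b + x + (j : ℂ)) ≠ 0 :=
      Finset.prod_ne_zero_iff.mpr fun j _ => by rw [add_comm]; exact hnbx j
    have hpow : (n : ℂ) ^ a * (n : ℂ) ^ (b + x) = (n : ℂ) ^ b * (n : ℂ) ^ (a + x) := by
      rw [← cpow_add _ _ hn0, ← cpow_add _ _ hn0]
      ring_nf
    have hpa : (n : ℂ) ^ a ≠ 0 := fun h => hn0 ((cpow_eq_zero_iff _ _).mp h).1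
    have hpb : (n : ℂ) ^ b ≠ 0 := fun h => hn0 ((cpow_eq_zero_iff _ _).mp h).1
    have hpax : (n : ℂ) ^ (a + x) ≠ 0 := fun h => hn0 ((cpow_eq_zero_iff _ _).mp h).1
    have hpbx : (n : ℂ) ^ (b + x) ≠ 0 := fun h => hn0 ((cpow_eq_zero_iff _ _).mp h).1
    have hprodeq : ∏ j ∈ range (n + 1), f j =
        (∏ j ∈ range (n + 1), (a + x + (j : ℂ))) * (∏ j ∈ range (n + 1), (b + (j : ℂ)))
          / ((∏ j ∈ range (n + 1), (a + (j : ℂ))) * (∏ j ∈ range (n + 1), (b + x + (j : ℂ)))) := by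
      rw [← prod_mul_distrib, ← prod_mul_distrib, ← prod_div_distrib]
      exact prod_congr rfl fun j _ => by rw [hterm j]; ring
    rw [hprodeq]
    simp only [Complex.GammaSeq]
    field_simp
    linear_combination (-1 : ℂ) * hpow
  -- limits
  have hQ : Tendsto (fun n : ℕ => GammaSeq a n * GammaSeq (b + x) n
      / (GammaSeq b n * GammaSeq (a + x) n)) atTop
      (𝓝 (Gamma a * Gamma (b + x) / (Gamma b * Gamma (a + x)))) :=
    Tendsto.div ((GammaSeq_tendsto_Gamma a).mul (GammaSeq_tendsto_Gamma (b + x)))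
      ((GammaSeq_tendsto_Gamma b).mul (GammaSeq_tendsto_Gamma (a + x)))
      (mul_ne_zero (Gamma_ne_zero hb) (Gamma_ne_zero hax))
  have h1 : Tendsto (fun n : ℕ => ∏ j ∈ range (n + 1), f j) atTop (𝓝 (∏' n, f n)) :=
    hmult.hasProd.tendsto_prod_nat.comp (tendsto_add_atTop_nat 1)
  have h2 : Tendsto (fun n : ℕ => ∏ j ∈ range (n + 1), f j) atTop
      (𝓝 (Gamma a * Gamma (b + x) / (Gamma b * Gamma (a + x)))) := by
    apply hQ.congr'
    filter_upwards [eventually_ge_atTop 1] with n hn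
    exact (hkey n hn).symm
  exact tendsto_nhds_unique h1 h2
end

section
/- Suppose f⁺ and f⁻ satisfy f^{±}(0)=1, f^{±} is analytic in the open upper (respectively lower) half-plane, continuous and nonvanishing on the closed half-plane, with z^{−1}·log f^{±}(z) → 0 as z → ∞ within the closed half-plane, and q/(q+Ψ(z)) = f⁺(z)·f⁻(z) for all real z. Then f⁺ ≡ φ_q⁺ and f⁻ ≡ φ_q⁻, the Wiener–Hopf factors of the Lévy process. -/
open Filter Complex

open Set Topology

lemma WH_intConst {X : Type*} [TopologicalSpace X] {S : Set X} (hS : IsPreconnected S)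
    {F : X → ℂ} (hF : ContinuousOn F S)
    (hv : ∀ z ∈ S, ∃ n : ℤ, F z = n * (2 * Real.pi * I))
    {z w : X} (hz : z ∈ S) (hw : w ∈ S) : F z = F w := by
  have h2π : (0:ℝ) < 2 * Real.pi := by positivity
  set G : X → ℝ := fun u => (F u).im / (2 * Real.pi) with hGdef
  have hGc : ContinuousOn G S := (Complex.continuous_im.comp_continuousOn hF).div_const _
  have hGv : ∀ u ∈ S, ∃ n : ℤ, G u = n := by
    intro u hu
    obtain ⟨n, hn⟩ := hv u hu
    refine ⟨n, ?_⟩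
    have h1 : (F u).im = n * (2 * Real.pi) := by rw [hn]; simp [Complex.mul_im]
    rw [hGdef]; simp only [h1]; field_simp
  obtain ⟨n, hn⟩ := hGv z hz
  obtain ⟨m, hm⟩ := hGv w hw
  have key : G z = G w := by
    by_contra hne
    have hnm : n ≠ m := by
      intro h; apply hne; rw [hn, hm, h]
    have him : IsPreconnected (G '' S) := hS.image G hGc
    rcases lt_or_gt_of_ne hnm with hlt | hlt
    · have h1 : (n:ℝ) + 1/2 ∈ Icc (G z) (G w) := by
        constructor
        · rw [hn]; linarith
        · rw [hm]
          have : (n:ℝ) + 1 ≤ m := by exact_mod_cast hlt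
          linarith
      obtain ⟨u, hu, hGu⟩ := him.Icc_subset ⟨z, hz, rfl⟩ ⟨w, hw, rfl⟩ h1
      obtain ⟨k, hk⟩ := hGv u hu
      rw [hk] at hGu
      have h2 : (2*k : ℝ) = 2*n + 1 := by push_cast; linarith
      have h3 : (2*k : ℤ) = 2*n + 1 := by exact_mod_cast h2
      omega
    · have h1 : (m:ℝ) + 1/2 ∈ Icc (G w) (G z) := by
        constructor
        · rw [hm]; linarith
        · rw [hn]
          have : (m:ℝ) + 1 ≤ n := by exact_mod_cast hlt
          linarith
      obtain ⟨u, hu, hGu⟩ := him.Icc_subset ⟨w, hw, rfl⟩ ⟨z, hz, rfl⟩ h1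
      obtain ⟨k, hk⟩ := hGv u hu
      rw [hk] at hGu
      have h2 : (2*k : ℝ) = 2*m + 1 := by push_cast; linarith
      have h3 : (2*k : ℤ) = 2*m + 1 := by exact_mod_cast h2
      omega
  obtain ⟨n', hn'⟩ := hv z hz
  obtain ⟨m', hm'⟩ := hv w hw
  have him' : (F z).im = (F w).im := by
    rw [hGdef] at key
    simp only at key
    field_simp at key
    exact key
  have hnm' : n' = m' := by
    have h1 : (F z).im = n' * (2 * Real.pi) := by rw [hn']; simp [Complex.mul_im]
    have h2 : (F w).im = m' * (2 * Real.pi) := by rw [hm']; simp [Complex.mul_im]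
    have h3 : (n' : ℝ) * (2 * Real.pi) = m' * (2 * Real.pi) := by rw [← h1, ← h2, him']
    have h4 : (n' : ℝ) = m' := mul_right_cancel₀ (ne_of_gt h2π) h3
    exact_mod_cast h4
  rw [hn', hm', hnm']

lemma WH_conj_conj_diff {f : ℂ → ℂ} {z : ℂ}
    (hf : DifferentiableAt ℂ f ((starRingEnd ℂ) z)) :
    DifferentiableAt ℂ (fun w => (starRingEnd ℂ) (f ((starRingEnd ℂ) w))) z := by
  set c := (starRingEnd ℂ) z with hc
  have hd := hf.hasDerivAt
  set f' := deriv f c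
  have hslope := hasDerivAt_iff_tendsto_slope.mp hd
  -- conj maps 𝓝[≠] z to 𝓝[≠] c
  have hconj : Tendsto (starRingEnd ℂ) (𝓝[≠] z) (𝓝[≠] c) := by
    apply tendsto_nhdsWithin_of_tendsto_nhds_of_eventually_within
    · exact (Complex.continuous_conj.tendsto z).mono_left nhdsWithin_le_nhds
    · filter_upwards [self_mem_nhdsWithin] with w hw
      simp only [Set.mem_compl_iff, Set.mem_singleton_iff] at hw ⊢
      intro h
      apply hw
      have := congrArg (starRingEnd ℂ) h
      rw [hc] at this
      simpa using this
  have h2 : Tendsto (fun w => (starRingEnd ℂ) (slope f c ((starRingEnd ℂ) w))) (𝓝[≠] z)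
      (𝓝 ((starRingEnd ℂ) f')) :=
    (Complex.continuous_conj.tendsto f').comp (hslope.comp hconj)
  have h3 : (fun w => (starRingEnd ℂ) (slope f c ((starRingEnd ℂ) w))) =
      fun w => slope (fun w => (starRingEnd ℂ) (f ((starRingEnd ℂ) w))) z w := by
    funext w
    rw [slope_def_field, slope_def_field]
    rw [map_div₀, map_sub, map_sub]
    simp [hc]
  rw [h3] at h2
  exact (hasDerivAt_iff_tendsto_slope.mpr h2).differentiableAt

lemma WH_log_diff {g f : ℂ → ℂ} {z : ℂ} {U : Set ℂ} (hU : U ∈ 𝓝 z)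
    (hg : ContinuousOn g U) (hfe : ∀ w ∈ U, Complex.exp (g w) = f w)
    (hf : ∀ w ∈ U, DifferentiableAt ℂ f w) : DifferentiableAt ℂ g z := by
  have hzU : z ∈ U := mem_of_mem_nhds hU
  have hfz : f z ≠ 0 := by rw [← hfe z hzU]; exact Complex.exp_ne_zero _
  -- find a ball on which f w / f z is close to 1
  have hfc : ContinuousAt (fun w => f w / f z) z := ((hf z hzU).continuousAt).div_const _
  have h1 : ∀ᶠ w in 𝓝 z, ‖f w / f z - 1‖ < 1 := by
    have : Tendsto (fun w => f w / f z) (𝓝 z) (𝓝 1) := by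
      have : f z / f z = 1 := div_self hfz
      simpa [this] using hfc.tendsto
    have := this (Metric.ball_mem_nhds (1:ℂ) one_pos)
    filter_upwards [this] with w hw
    simpa [Complex.dist_eq] using hw
  obtain ⟨r, hr, hball⟩ := Metric.mem_nhds_iff.mp (inter_mem hU h1)
  have hsub : Metric.ball z r ⊆ U := fun w hw => (hball hw).1
  have hclose : ∀ w ∈ Metric.ball z r, ‖f w / f z - 1‖ < 1 :=
    fun w hw => (hball hw).2
  have hslit : ∀ w ∈ Metric.ball z r, f w / f z ∈ Complex.slitPlane := by
    intro w hw
    rw [Complex.mem_slitPlane_iff]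
    left
    have h := Complex.abs_re_le_norm (f w / f z - 1)
    simp only [Complex.sub_re, Complex.one_re] at h
    have h2 := abs_lt.mp (lt_of_le_of_lt h (hclose w hw))
    linarith [h2.1]
  have hne : ∀ w ∈ Metric.ball z r, f w / f z ≠ 0 := by
    intro w hw h0
    have := hclose w hw
    rw [h0] at this
    simp at this
  set h : ℂ → ℂ := fun w => Complex.log (f w / f z) + g z with hh
  have hhd : ∀ w ∈ Metric.ball z r, DifferentiableAt ℂ h w := by
    intro w hw
    exact (((hf w (hsub hw)).div_const _).clog (hslit w hw)).add_const _
  have hhe : ∀ w ∈ Metric.ball z r, Complex.exp (h w) = f w := by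
    intro w hw
    rw [hh]
    simp only [Complex.exp_add, Complex.exp_log (hne w hw), hfe z hzU]
    field_simp
  -- g - h is 2πi ℤ valued on ball
  set F : ℂ → ℂ := fun w => g w - h w with hF
  have hFc : ContinuousOn F (Metric.ball z r) := by
    apply ContinuousOn.sub (hg.mono hsub)
    intro w hw
    exact ((hhd w hw).continuousAt).continuousWithinAt
  have hFv : ∀ w ∈ Metric.ball z r, ∃ n : ℤ, F w = n * (2 * Real.pi * I) := by
    intro w hw
    rw [← Complex.exp_eq_one_iff, hF]
    simp only [Complex.exp_sub, hhe w hw, hfe w (hsub hw)]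
    exact div_self (by rw [← hfe w (hsub hw)]; exact Complex.exp_ne_zero _)
  have hzball : z ∈ Metric.ball z r := Metric.mem_ball_self hr
  have hconst : ∀ w ∈ Metric.ball z r, F w = F z :=
    fun w hw => WH_intConst (convex_ball z r).isPreconnected hFc hFv hw hzball
  have hFz : F z = 0 := by
    rw [hF, hh]
    simp [div_self hfz, Complex.log_one]
  have heq : ∀ᶠ w in 𝓝 z, g w = h w := by
    filter_upwards [Metric.ball_mem_nhds z hr] with w hw
    have := hconst w hw
    rw [hFz, hF, sub_eq_zero] at this
    exact this
  exact (hhd z hzball).congr_of_eventuallyEq heq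

-- growth extraction helper
lemma WH_grow_bound {D : ℂ → ℂ}
    (hgrow : Tendsto (fun z => D z / z) (comap (fun z : ℂ => ‖z‖) atTop ⊓ 𝓟 {z : ℂ | 0 ≤ z.im}) (𝓝 0))
    {δ : ℝ} (hδ : 0 < δ) :
    ∃ R : ℝ, 1 ≤ R ∧ ∀ z : ℂ, 0 ≤ z.im → R ≤ ‖z‖ → ‖D z‖ ≤ δ * ‖z‖ := by
  have h1 : ∀ᶠ z in comap (fun z : ℂ => ‖z‖) atTop ⊓ 𝓟 {z : ℂ | 0 ≤ z.im},
      ‖D z / z‖ < δ := by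
    have := Metric.tendsto_nhds.mp hgrow δ hδ
    filter_upwards [this] with w hw
    simpa [Complex.dist_eq] using hw
  rw [eventually_inf_principal] at h1
  rw [eventually_comap] at h1
  obtain ⟨R₀, hR₀⟩ := eventually_atTop.mp h1
  refine ⟨max R₀ 1, le_max_right _ _, ?_⟩
  intro z him hR
  have hz0 : z ≠ 0 := by
    intro h; rw [h] at hR; simp at hR
    linarith [le_max_right R₀ 1, hR]
  have := hR₀ (‖z‖) (le_trans (le_max_left _ _) hR) z rfl him
  rw [norm_div] at this
  rw [div_lt_iff₀ (norm_pos_iff.mpr hz0)] at this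
  exact this.le

lemma WH_PL_re_nonpos {D : ℂ → ℂ}
    (hc : ContinuousOn D {z : ℂ | 0 ≤ z.im})
    (hd : ∀ z : ℂ, 0 < z.im → DifferentiableAt ℂ D z)
    (hgrow : Tendsto (fun z => D z / z) (comap (fun z : ℂ => ‖z‖) atTop ⊓ 𝓟 {z : ℂ | 0 ≤ z.im}) (𝓝 0))
    (hre : ∀ x : ℝ, (D x).re ≤ 0) :
    ∀ z : ℂ, 0 ≤ z.im → (D z).re ≤ 0 := by
  have main : ∀ ε : ℝ, 0 < ε → ∀ z : ℂ, 0 ≤ z.im → (D z).re ≤ ε * z.im := by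
    intro ε hε z hz
    set G : ℂ → ℂ := fun w => Complex.exp (D (I * w) - ε * w) with hG
    have hmem : ∀ w : ℂ, 0 ≤ w.re → (I * w) ∈ {z : ℂ | 0 ≤ z.im} := by
      intro w hw
      simp [Complex.mul_im]
      exact hw
    have hnormG : ∀ w : ℂ, ‖G w‖ = Real.exp ((D (I * w)).re - ε * w.re) := by
      intro w
      rw [hG]
      simp only [Complex.norm_exp, Complex.sub_re]
      congr 2
      simp [Complex.mul_re]
    -- DiffContOnCl
    have hdG : DiffContOnCl ℂ G {w : ℂ | 0 < w.re} := by
      constructor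
      · intro w hw
        have h1 : DifferentiableAt ℂ (fun w => D (I * w)) w := by
          have : 0 < (I * w).im := by simp [Complex.mul_im]; exact hw
          exact (hd _ this).comp w ((differentiableAt_id.const_mul I))
        exact ((h1.sub ((differentiableAt_id.const_mul (ε:ℂ)))).cexp).differentiableWithinAt
      · rw [closure_setOf_lt_re 0]
        have h1 : ContinuousOn (fun w => D (I * w)) {w : ℂ | 0 ≤ w.re} := by
          apply hc.comp (Continuous.continuousOn (continuous_mul_left I))
          intro w hw
          exact hmem w hw
        exact (h1.sub ((continuous_const.mul continuous_id).continuousOn)).cexp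
    -- growth bound
    obtain ⟨R₁, hR₁1, hR₁⟩ := WH_grow_bound hgrow one_pos
    have hexp : ∃ c < (2:ℝ), ∃ B, G =O[Bornology.cobounded ℂ ⊓ 𝓟 {w : ℂ | 0 < w.re}]
        fun w => Real.exp (B * ‖w‖ ^ c) := by
      refine ⟨1, one_lt_two, 1, ?_⟩
      rw [Asymptotics.isBigO_iff]
      refine ⟨1, ?_⟩
      have habs : ∀ᶠ (w : ℂ) in Bornology.cobounded ℂ, R₁ ≤ ‖w‖ := by
        have ht : Tendsto (fun w : ℂ => ‖w‖) (Bornology.cobounded ℂ) atTop := by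
          exact tendsto_norm_cobounded_atTop
        exact ht.eventually_ge_atTop R₁
      rw [eventually_inf_principal]
      filter_upwards [habs] with w hw hw2
      have h0 : 0 ≤ w.re := le_of_lt hw2
      have h2 : ‖I * w‖ = ‖w‖ := by simp
      have h3 : ‖D (I * w)‖ ≤ 1 * ‖I * w‖ :=
        hR₁ (I * w) (hmem w h0) (by rw [h2]; exact hw)
      rw [h2, one_mul] at h3
      have h4 : (D (I * w)).re - ε * w.re ≤ ‖w‖ := by
        have := Complex.abs_re_le_norm (D (I * w))
        have h5 : (D (I * w)).re ≤ ‖w‖ := le_trans (le_trans (le_abs_self _) this) h3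
        nlinarith
      rw [hnormG]
      have : Real.exp ((D (I * w)).re - ε * w.re) ≤ Real.exp (‖w‖) :=
        Real.exp_le_exp.mpr h4
      calc Real.exp ((D (I * w)).re - ε * w.re) ≤ Real.exp (‖w‖) := this
        _ ≤ 1 * ‖Real.exp (1 * ‖w‖ ^ (1:ℝ))‖ := by
            rw [one_mul, Real.rpow_one, one_mul, Real.norm_of_nonneg (Real.exp_pos _).le]
    -- bounded on real atTop
    obtain ⟨R₂, hR₂1, hR₂⟩ := WH_grow_bound hgrow (half_pos hε)
    have hreG : IsBoundedUnder (· ≤ ·) atTop fun x : ℝ => ‖G x‖ := by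
      apply isBoundedUnder_of_eventually_le (a := 1)
      filter_upwards [eventually_ge_atTop R₂] with x hx
      have hx0 : 0 ≤ x := le_trans (le_trans zero_le_one hR₂1) hx
      have h2 : ‖I * (x:ℂ)‖ = x := by
        rw [norm_mul, Complex.norm_I, one_mul]
        exact Complex.norm_of_nonneg hx0
      have h3 : ‖D (I * x)‖ ≤ ε/2 * x := by
        have := hR₂ (I * x) (hmem x (by simpa using hx0)) (by rw [h2]; exact hx)
        rwa [h2] at this
      rw [hnormG]
      have h4 : (D (I * x)).re - ε * (x:ℂ).re ≤ 0 := by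
        have h5 : (D (I * x)).re ≤ ε/2 * x :=
          le_trans (le_trans (le_abs_self _) (Complex.abs_re_le_norm _)) h3
        simp only [Complex.ofReal_re]
        nlinarith
      exact Real.exp_le_one_iff.mpr h4
    -- bounded on imaginary axis
    have himG : ∀ x : ℝ, ‖G (x * I)‖ ≤ 1 := by
      intro x
      rw [hnormG]
      apply Real.exp_le_one_iff.mpr
      have h1 : I * (x * I) = ((-x : ℝ) : ℂ) := by
        push_cast; ring_nf; rw [Complex.I_sq]; ring
      rw [h1]
      have h2 : ((x:ℂ) * I).re = 0 := by simp
      rw [h2]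
      simpa using hre (-x)
    -- apply PL
    have hw : 0 ≤ (-(I) * z).re := by simp; exact hz
    have := PhragmenLindelof.right_half_plane_of_bounded_on_real hdG hexp hreG himG hw
    rw [hnormG] at this
    have h1 : I * (-(I) * z) = z := by ring_nf; rw [Complex.I_sq]; ring
    rw [h1] at this
    have h2 : (-(I) * z).re = z.im := by simp
    rw [h2] at this
    have := Real.exp_le_one_iff.mp this
    linarith
  intro z hz
  by_contra hpos
  push_neg at hpos
  -- choose ε small
  have hε : 0 < (D z).re / (z.im + 1) := by positivity
  have := main _ hε z hz
  rw [div_mul_eq_mul_div] at this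
  have h2 : (D z).re * z.im / (z.im + 1) < (D z).re := by
    rw [div_lt_iff₀ (by linarith : (0:ℝ) < z.im + 1)]
    nlinarith
  linarith

lemma WH_const_of_re_zero {D : ℂ → ℂ}
    (hc : ContinuousOn D {z : ℂ | 0 ≤ z.im})
    (hd : ∀ z : ℂ, 0 < z.im → DifferentiableAt ℂ D z)
    (hre0 : ∀ z : ℂ, 0 ≤ z.im → (D z).re = 0) :
    ∀ z : ℂ, 0 ≤ z.im → D z = D 0 := by
  set U : Set ℂ := {z : ℂ | 0 < z.im} with hU
  have hsub : U ⊆ {z : ℂ | 0 ≤ z.im} := fun z hz => le_of_lt (show 0 < z.im from hz)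
  have hIU : I ∈ U := by simp [hU]
  have hopen : IsOpen U := isOpen_lt continuous_const Complex.continuous_im
  have hpre : IsPreconnected U := (convex_halfSpace_im_gt 0).isPreconnected
  have hdiff : DiffContOnCl ℂ (fun z => Complex.exp (D z)) U := by
    constructor
    · exact fun z hz => ((hd z hz).cexp).differentiableWithinAt
    · rw [hU, closure_setOf_lt_im 0]
      exact hc.cexp
  have hmax : IsMaxOn (norm ∘ fun z => Complex.exp (D z)) U I := by
    intro w hw
    simp only [Set.mem_setOf_eq, Function.comp_apply, Complex.norm_exp]
    rw [hre0 w (hsub hw), hre0 I (hsub hIU)]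
  have hconst := Complex.eqOn_closure_of_isPreconnected_of_isMaxOn_norm hpre hopen hdiff hIU hmax
  rw [hU, closure_setOf_lt_im 0] at hconst
  -- now D z - D I is 2πi ℤ valued on {0 ≤ im}
  set F : ℂ → ℂ := fun z => D z - D I with hF
  have hFc : ContinuousOn F {z : ℂ | 0 ≤ z.im} := hc.sub continuousOn_const
  have hFv : ∀ z ∈ {z : ℂ | 0 ≤ z.im}, ∃ n : ℤ, F z = n * (2 * Real.pi * I) := by
    intro z hz
    rw [← Complex.exp_eq_one_iff, hF]
    simp only [Complex.exp_sub]
    have e1 := hconst hz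
    simp only [Function.const_apply] at e1
    rw [e1]
    exact div_self (Complex.exp_ne_zero _)
  have hpre2 : IsPreconnected {z : ℂ | 0 ≤ z.im} := (convex_halfSpace_im_ge 0).isPreconnected
  intro z hz
  have h0 : (0:ℂ) ∈ {z : ℂ | 0 ≤ z.im} := by simp
  have := WH_intConst hpre2 hFc hFv hz h0
  rw [hF] at this
  simp only at this
  linear_combination this
lemma WH_rigid {D : ℂ → ℂ}
    (hc : ContinuousOn D {z : ℂ | 0 ≤ z.im})
    (hd : ∀ z : ℂ, 0 < z.im → DifferentiableAt ℂ D z)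
    (hgrow : Tendsto (fun z => D z / z) (comap (fun z : ℂ => ‖z‖) atTop ⊓ 𝓟 {z : ℂ | 0 ≤ z.im}) (𝓝 0))
    (hre : ∀ x : ℝ, (D x).re = 0) :
    ∀ z : ℂ, 0 ≤ z.im → D z = D 0 := by
  have h1 := WH_PL_re_nonpos hc hd hgrow (fun x => (hre x).le)
  have hgrow2 : Tendsto (fun z => (-D z) / z)
      (comap (fun z : ℂ => ‖z‖) atTop ⊓ 𝓟 {z : ℂ | 0 ≤ z.im}) (𝓝 0) := by
    have := hgrow.neg
    rw [neg_zero] at this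
    convert this using 2 with z
    rw [neg_div]
  have h2 := WH_PL_re_nonpos (D := fun z => -D z) hc.neg (fun z hz => (hd z hz).neg) hgrow2
    (fun x => by simp [hre x])
  have hre0 : ∀ z : ℂ, 0 ≤ z.im → (D z).re = 0 := by
    intro z hz
    have := h2 z hz
    simp only [Complex.neg_re, neg_nonpos] at this
    exact le_antisymm (h1 z hz) (by linarith)
  exact WH_const_of_re_zero hc hd hre0

/-- `WHCandidate q Ψ s f` expresses the conditions on a Wiener--Hopf factor on the
half-plane `{z | 0 ≤ s * Im z}` (upper half-plane for `s = 1`, lower for `s = -1`):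
`f 0 = 1`, `f` is analytic in the open half-plane, continuous and nonvanishing on the
closed half-plane, and there is a continuous logarithm `g` of `f` on the closed
half-plane with `g z / z → 0` as `z → ∞` within the closed half-plane. -/
def WHCandidate (s : ℝ) (f : ℂ → ℂ) : Prop :=
  f 0 = 1 ∧
  (∀ z : ℂ, 0 < s * z.im → DifferentiableAt ℂ f z) ∧
  ContinuousOn f {z : ℂ | 0 ≤ s * z.im} ∧
  (∀ z : ℂ, 0 ≤ s * z.im → f z ≠ 0) ∧
  (∃ g : ℂ → ℂ, ContinuousOn g {z : ℂ | 0 ≤ s * z.im} ∧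
    (∀ z : ℂ, 0 ≤ s * z.im → Complex.exp (g z) = f z) ∧
    Tendsto (fun z => g z / z)
      (comap (fun z : ℂ => ‖z‖) atTop ⊓ 𝓟 {z : ℂ | 0 ≤ s * z.im}) (nhds 0))

/-- Uniqueness in the Wiener--Hopf factorization: if `φ⁺, φ⁻` are the Wiener--Hopf
factors of a Lévy process with characteristic exponent `Ψ` (satisfying the listed
analytic properties, which they do) and `f⁺, f⁻` satisfy the same properties together
with the factorization identity `q/(q+Ψ z) = f⁺ z * f⁻ z` for real `z`, then
`f⁺ ≡ φ⁺` on the closed upper half-plane and `f⁻ ≡ φ⁻` on the closed lower one. -/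
theorem stmt2 (q : ℝ) (hq : 0 < q) (Ψ : ℂ → ℂ)
    (φp φm fp fm : ℂ → ℂ)
    (hφp : WHCandidate 1 φp) (hφm : WHCandidate (-1) φm)
    (hφfact : ∀ z : ℝ, (q : ℂ) / (q + Ψ z) = φp z * φm z)
    (hfp : WHCandidate 1 fp) (hfm : WHCandidate (-1) fm)
    (hffact : ∀ z : ℝ, (q : ℂ) / (q + Ψ z) = fp z * fm z) :
    (∀ z : ℂ, 0 ≤ z.im → fp z = φp z) ∧ (∀ z : ℂ, z.im ≤ 0 → fm z = φm z) := by
  -- set normalizations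
  have hsetp : {z : ℂ | 0 ≤ (1:ℝ) * z.im} = {z : ℂ | 0 ≤ z.im} := by ext z; simp
  have hsetm : {z : ℂ | 0 ≤ (-1:ℝ) * z.im} = {z : ℂ | z.im ≤ 0} := by
    ext z; simp [neg_one_mul, neg_nonneg]
  obtain ⟨hfp0, hfpd, hfpc, hfpn, gp0, hgpc, hgpe, hgpt⟩ := hfp
  obtain ⟨hPp0, hPpd, hPpc, hPpn, gP0, hgPc, hgPe, hgPt⟩ := hφp
  obtain ⟨hfm0, hfmd, hfmc, hfmn, gm0, hgmc, hgme, hgmt⟩ := hfm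
  obtain ⟨hPm0, hPmd, hPmc, hPmn, gM0, hgMc, hgMe, hgMt⟩ := hφm
  rw [hsetp] at hfpc hgpc hgpt hPpc hgPc hgPt
  rw [hsetm] at hfmc hgmc hgmt hPmc hgMc hgMt
  replace hfpd : ∀ z : ℂ, 0 < z.im → DifferentiableAt ℂ fp z :=
    fun z hz => hfpd z (by rwa [one_mul])
  replace hPpd : ∀ z : ℂ, 0 < z.im → DifferentiableAt ℂ φp z :=
    fun z hz => hPpd z (by rwa [one_mul])
  replace hfmd : ∀ z : ℂ, z.im < 0 → DifferentiableAt ℂ fm z :=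
    fun z hz => hfmd z (by rw [neg_one_mul]; linarith)
  replace hPmd : ∀ z : ℂ, z.im < 0 → DifferentiableAt ℂ φm z :=
    fun z hz => hPmd z (by rw [neg_one_mul]; linarith)
  replace hfpn : ∀ z : ℂ, 0 ≤ z.im → fp z ≠ 0 := fun z hz => hfpn z (by rwa [one_mul])
  replace hPpn : ∀ z : ℂ, 0 ≤ z.im → φp z ≠ 0 := fun z hz => hPpn z (by rwa [one_mul])
  replace hfmn : ∀ z : ℂ, z.im ≤ 0 → fm z ≠ 0 := fun z hz => hfmn z (by rw [neg_one_mul]; linarith)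
  replace hPmn : ∀ z : ℂ, z.im ≤ 0 → φm z ≠ 0 := fun z hz => hPmn z (by rw [neg_one_mul]; linarith)
  replace hgpe : ∀ z : ℂ, 0 ≤ z.im → Complex.exp (gp0 z) = fp z :=
    fun z hz => hgpe z (by rwa [one_mul])
  replace hgPe : ∀ z : ℂ, 0 ≤ z.im → Complex.exp (gP0 z) = φp z :=
    fun z hz => hgPe z (by rwa [one_mul])
  replace hgme : ∀ z : ℂ, z.im ≤ 0 → Complex.exp (gm0 z) = fm z :=
    fun z hz => hgme z (by rw [neg_one_mul]; linarith)
  replace hgMe : ∀ z : ℂ, z.im ≤ 0 → Complex.exp (gM0 z) = φm z :=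
    fun z hz => hgMe z (by rw [neg_one_mul]; linarith)
  -- basics
  have h0p : (0:ℂ).im = 0 := rfl
  have hinvp : Tendsto (fun z : ℂ => z⁻¹)
      (comap (fun z : ℂ => ‖z‖) atTop ⊓ 𝓟 {z : ℂ | 0 ≤ z.im}) (𝓝 0) := by
    have hco : comap (fun z : ℂ => ‖z‖) atTop = Bornology.cobounded ℂ := by
      exact comap_norm_atTop
    rw [hco]
    exact tendsto_inv₀_cobounded.mono_left inf_le_left
  have hinvm : Tendsto (fun z : ℂ => z⁻¹)
      (comap (fun z : ℂ => ‖z‖) atTop ⊓ 𝓟 {z : ℂ | z.im ≤ 0}) (𝓝 0) := by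
    have hco : comap (fun z : ℂ => ‖z‖) atTop = Bornology.cobounded ℂ := by
      exact comap_norm_atTop
    rw [hco]
    exact tendsto_inv₀_cobounded.mono_left inf_le_left
  -- normalized logs
  set Gp : ℂ → ℂ := fun z => gp0 z - gp0 0 with hGp
  set GP : ℂ → ℂ := fun z => gP0 z - gP0 0 with hGP
  set Gm : ℂ → ℂ := fun z => gm0 z - gm0 0 with hGm
  set GM : ℂ → ℂ := fun z => gM0 z - gM0 0 with hGM
  have hexpgp0 : Complex.exp (gp0 0) = 1 := by rw [hgpe 0 (le_of_eq h0p.symm), hfp0]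
  have hexpgP0 : Complex.exp (gP0 0) = 1 := by rw [hgPe 0 (le_of_eq h0p.symm), hPp0]
  have hexpgm0 : Complex.exp (gm0 0) = 1 := by rw [hgme 0 (le_of_eq h0p), hfm0]
  have hexpgM0 : Complex.exp (gM0 0) = 1 := by rw [hgMe 0 (le_of_eq h0p), hPm0]
  have hGpe : ∀ z : ℂ, 0 ≤ z.im → Complex.exp (Gp z) = fp z := by
    intro z hz; rw [hGp]; simp only [Complex.exp_sub, hgpe z hz, hexpgp0, div_one]
  have hGPe : ∀ z : ℂ, 0 ≤ z.im → Complex.exp (GP z) = φp z := by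
    intro z hz; rw [hGP]; simp only [Complex.exp_sub, hgPe z hz, hexpgP0, div_one]
  have hGme : ∀ z : ℂ, z.im ≤ 0 → Complex.exp (Gm z) = fm z := by
    intro z hz; rw [hGm]; simp only [Complex.exp_sub, hgme z hz, hexpgm0, div_one]
  have hGMe : ∀ z : ℂ, z.im ≤ 0 → Complex.exp (GM z) = φm z := by
    intro z hz; rw [hGM]; simp only [Complex.exp_sub, hgMe z hz, hexpgM0, div_one]
  have hGpc : ContinuousOn Gp {z : ℂ | 0 ≤ z.im} := hgpc.sub continuousOn_const
  have hGPc : ContinuousOn GP {z : ℂ | 0 ≤ z.im} := hgPc.sub continuousOn_const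
  have hGmc : ContinuousOn Gm {z : ℂ | z.im ≤ 0} := hgmc.sub continuousOn_const
  have hGMc : ContinuousOn GM {z : ℂ | z.im ≤ 0} := hgMc.sub continuousOn_const
  have hGpt : Tendsto (fun z => Gp z / z)
      (comap (fun z : ℂ => ‖z‖) atTop ⊓ 𝓟 {z : ℂ | 0 ≤ z.im}) (𝓝 0) := by
    have h2 := hgpt.sub ((hinvp.const_mul (gp0 0)).trans (by rw [mul_zero]))
    rw [sub_zero] at h2
    convert h2 using 2 with z
    rw [hGp]; ring
  have hGPt : Tendsto (fun z => GP z / z)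
      (comap (fun z : ℂ => ‖z‖) atTop ⊓ 𝓟 {z : ℂ | 0 ≤ z.im}) (𝓝 0) := by
    have h2 := hgPt.sub ((hinvp.const_mul (gP0 0)).trans (by rw [mul_zero]))
    rw [sub_zero] at h2
    convert h2 using 2 with z
    rw [hGP]; ring
  have hGmt : Tendsto (fun z => Gm z / z)
      (comap (fun z : ℂ => ‖z‖) atTop ⊓ 𝓟 {z : ℂ | z.im ≤ 0}) (𝓝 0) := by
    have h2 := hgmt.sub ((hinvm.const_mul (gm0 0)).trans (by rw [mul_zero]))
    rw [sub_zero] at h2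
    convert h2 using 2 with z
    rw [hGm]; ring
  have hGMt : Tendsto (fun z => GM z / z)
      (comap (fun z : ℂ => ‖z‖) atTop ⊓ 𝓟 {z : ℂ | z.im ≤ 0}) (𝓝 0) := by
    have h2 := hgMt.sub ((hinvm.const_mul (gM0 0)).trans (by rw [mul_zero]))
    rw [sub_zero] at h2
    convert h2 using 2 with z
    rw [hGM]; ring
  -- differentiability of logs
  have hopenp : IsOpen {z : ℂ | 0 < z.im} := isOpen_lt continuous_const Complex.continuous_im
  have hopenm : IsOpen {z : ℂ | z.im < 0} := isOpen_lt Complex.continuous_im continuous_const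
  have hGpd : ∀ z : ℂ, 0 < z.im → DifferentiableAt ℂ Gp z := by
    intro z hz
    have hU : {w : ℂ | 0 < w.im} ∈ 𝓝 z := hopenp.mem_nhds hz
    have := WH_log_diff hU (hgpc.mono (fun w hw => le_of_lt (show 0 < w.im from hw)))
      (fun w hw => hgpe w (le_of_lt hw)) (fun w hw => hfpd w hw)
    exact this.sub_const _
  have hGPd : ∀ z : ℂ, 0 < z.im → DifferentiableAt ℂ GP z := by
    intro z hz
    have hU : {w : ℂ | 0 < w.im} ∈ 𝓝 z := hopenp.mem_nhds hz
    have := WH_log_diff hU (hgPc.mono (fun w hw => le_of_lt (show 0 < w.im from hw)))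
      (fun w hw => hgPe w (le_of_lt hw)) (fun w hw => hPpd w hw)
    exact this.sub_const _
  have hGmd : ∀ z : ℂ, z.im < 0 → DifferentiableAt ℂ Gm z := by
    intro z hz
    have hU : {w : ℂ | w.im < 0} ∈ 𝓝 z := hopenm.mem_nhds hz
    have := WH_log_diff hU (hgmc.mono (fun w hw => le_of_lt (show w.im < 0 from hw)))
      (fun w hw => hgme w (le_of_lt hw)) (fun w hw => hfmd w hw)
    exact this.sub_const _
  have hGMd : ∀ z : ℂ, z.im < 0 → DifferentiableAt ℂ GM z := by
    intro z hz
    have hU : {w : ℂ | w.im < 0} ∈ 𝓝 z := hopenm.mem_nhds hz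
    have := WH_log_diff hU (hgMc.mono (fun w hw => le_of_lt (show w.im < 0 from hw)))
      (fun w hw => hgMe w (le_of_lt hw)) (fun w hw => hPmd w hw)
    exact this.sub_const _
  -- A and B
  set A : ℂ → ℂ := fun z => Gp z - GP z with hA
  set B : ℂ → ℂ := fun z => GM z - Gm z with hB
  have hA0 : A 0 = 0 := by rw [hA]; simp [hGp, hGP]
  have hB0 : B 0 = 0 := by rw [hB]; simp [hGm, hGM]
  have hAc : ContinuousOn A {z : ℂ | 0 ≤ z.im} := hGpc.sub hGPc
  have hBc : ContinuousOn B {z : ℂ | z.im ≤ 0} := hGMc.sub hGmc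
  have hAd : ∀ z : ℂ, 0 < z.im → DifferentiableAt ℂ A z :=
    fun z hz => (hGpd z hz).sub (hGPd z hz)
  have hBd : ∀ z : ℂ, z.im < 0 → DifferentiableAt ℂ B z :=
    fun z hz => (hGMd z hz).sub (hGmd z hz)
  have hAt : Tendsto (fun z => A z / z)
      (comap (fun z : ℂ => ‖z‖) atTop ⊓ 𝓟 {z : ℂ | 0 ≤ z.im}) (𝓝 0) := by
    have h2 := hGpt.sub hGPt
    rw [sub_zero] at h2
    convert h2 using 2 with z
    rw [hA, sub_div]
  have hBt : Tendsto (fun z => B z / z)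
      (comap (fun z : ℂ => ‖z‖) atTop ⊓ 𝓟 {z : ℂ | z.im ≤ 0}) (𝓝 0) := by
    have h2 := hGMt.sub hGmt
    rw [sub_zero] at h2
    convert h2 using 2 with z
    rw [hB, sub_div]
  have hAe : ∀ z : ℂ, 0 ≤ z.im → Complex.exp (A z) = fp z / φp z := by
    intro z hz
    rw [hA]; simp only [Complex.exp_sub, hGpe z hz, hGPe z hz]
  have hBe : ∀ z : ℂ, z.im ≤ 0 → Complex.exp (B z) = φm z / fm z := by
    intro z hz
    rw [hB]; simp only [Complex.exp_sub, hGMe z hz, hGme z hz]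
  -- equality on the real line
  have hfact : ∀ x : ℝ, fp x * fm x = φp x * φm x := by
    intro x
    rw [← hffact x, hφfact x]
  have hAB : ∀ x : ℝ, A x = B x := by
    have hK : ∀ x : ℝ, ∃ n : ℤ, A x - B x = n * (2 * Real.pi * I) := by
      intro x
      rw [← Complex.exp_eq_one_iff, Complex.exp_sub]
      have him : ((x:ℂ)).im = 0 := Complex.ofReal_im x
      rw [hAe x (le_of_eq him.symm), hBe x (le_of_eq him)]
      have h1 := hfpn x (le_of_eq him.symm)
      have h2 := hPpn x (le_of_eq him.symm)
      have h3 := hfmn x (le_of_eq him)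
      have h4 := hPmn x (le_of_eq him)
      field_simp
      linear_combination hfact x
    have hKc : Continuous (fun t : ℝ => A t - B t) := by
      have h1 : Continuous fun t : ℝ => A (t : ℂ) :=
        hAc.comp_continuous Complex.continuous_ofReal
          (fun x => le_of_eq (Complex.ofReal_im x).symm)
      have h2 : Continuous fun t : ℝ => B (t : ℂ) :=
        hBc.comp_continuous Complex.continuous_ofReal
          (fun x => le_of_eq (Complex.ofReal_im x))
      exact h1.sub h2
    intro x
    have := WH_intConst isPreconnected_univ hKc.continuousOn
      (fun t _ => hK t) (mem_univ x) (mem_univ (0:ℝ))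
    rw [Complex.ofReal_zero, hA0, hB0, sub_zero] at this
    rw [sub_eq_zero] at this
    exact this
  -- D1 step
  set D1 : ℂ → ℂ := fun z => A z - (starRingEnd ℂ) (B ((starRingEnd ℂ) z)) with hD1
  have hmapsm : ∀ z : ℂ, 0 ≤ z.im → ((starRingEnd ℂ) z).im ≤ 0 := by
    intro z hz; rw [Complex.conj_im]; linarith
  have hD1c : ContinuousOn D1 {z : ℂ | 0 ≤ z.im} := by
    apply hAc.sub
    apply Complex.continuous_conj.comp_continuousOn
    exact hBc.comp Complex.continuous_conj.continuousOn (fun z hz => hmapsm z hz)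
  have hD1d : ∀ z : ℂ, 0 < z.im → DifferentiableAt ℂ D1 z := by
    intro z hz
    apply (hAd z hz).sub
    apply WH_conj_conj_diff
    apply hBd
    rw [Complex.conj_im]; linarith
  have hD1t : Tendsto (fun z => D1 z / z)
      (comap (fun z : ℂ => ‖z‖) atTop ⊓ 𝓟 {z : ℂ | 0 ≤ z.im}) (𝓝 0) := by
    have hT : Tendsto (starRingEnd ℂ)
        (comap (fun z : ℂ => ‖z‖) atTop ⊓ 𝓟 {z : ℂ | 0 ≤ z.im})
        (comap (fun z : ℂ => ‖z‖) atTop ⊓ 𝓟 {z : ℂ | z.im ≤ 0}) := by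
      apply Tendsto.inf
      · rw [tendsto_comap_iff]
        have : ((fun z : ℂ => ‖z‖) ∘ (starRingEnd ℂ)) = fun z : ℂ => ‖z‖ := by
          funext z; simp [Complex.norm_conj]
        rw [this]
        exact tendsto_comap
      · rw [tendsto_principal_principal]
        exact fun z hz => hmapsm z hz
    have h1 := hBt.comp hT
    have h2 := (Complex.continuous_conj.tendsto 0).comp h1
    rw [map_zero] at h2
    have h3 : Tendsto (fun z => (starRingEnd ℂ) (B ((starRingEnd ℂ) z)) / z)
        (comap (fun z : ℂ => ‖z‖) atTop ⊓ 𝓟 {z : ℂ | 0 ≤ z.im}) (𝓝 0) := by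
      convert h2 using 2 with z
      simp only [Function.comp_apply]
      rw [map_div₀, Complex.conj_conj]
    have h4 := hAt.sub h3
    rw [sub_zero] at h4
    convert h4 using 2 with z
    rw [hD1, sub_div]
  have hD1re : ∀ x : ℝ, (D1 x).re = 0 := by
    intro x
    rw [hD1]
    simp only [Complex.conj_ofReal]
    rw [hAB x]
    simp [Complex.sub_re, Complex.conj_re]
  have hD1const := WH_rigid hD1c hD1d hD1t hD1re
  have hD10 : D1 0 = 0 := by
    rw [hD1]
    simp only [map_zero, hA0, hB0, map_zero, sub_zero]
  have hA_eq : ∀ z : ℂ, 0 ≤ z.im → A z = (starRingEnd ℂ) (B ((starRingEnd ℂ) z)) := by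
    intro z hz
    have := hD1const z hz
    rw [hD10, hD1, sub_eq_zero] at this
    exact this
  -- A is real on ℝ
  have hAreal : ∀ x : ℝ, (A x).im = 0 := by
    intro x
    have := hA_eq x (le_of_eq (Complex.ofReal_im x).symm)
    rw [Complex.conj_ofReal, ← hAB x] at this
    have h2 : (A x).im = -(A x).im := by
      conv_lhs => rw [this]
      rw [Complex.conj_im]
    linarith
  -- D2 step
  set D2 : ℂ → ℂ := fun z => I * A z with hD2
  have hD2c : ContinuousOn D2 {z : ℂ | 0 ≤ z.im} := continuousOn_const.mul hAc
  have hD2d : ∀ z : ℂ, 0 < z.im → DifferentiableAt ℂ D2 z :=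
    fun z hz => (hAd z hz).const_mul I
  have hD2t : Tendsto (fun z => D2 z / z)
      (comap (fun z : ℂ => ‖z‖) atTop ⊓ 𝓟 {z : ℂ | 0 ≤ z.im}) (𝓝 0) := by
    have h2 := hAt.const_mul I
    rw [mul_zero] at h2
    convert h2 using 2 with z
    rw [hD2, mul_div_assoc]
  have hD2re : ∀ x : ℝ, (D2 x).re = 0 := by
    intro x
    rw [hD2]
    simp only [Complex.mul_re, Complex.I_re, Complex.I_im, zero_mul, one_mul, zero_sub, neg_eq_zero]
    exact hAreal x
  have hD2const := WH_rigid hD2c hD2d hD2t hD2re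
  have hD20 : D2 0 = 0 := by rw [hD2]; simp only [hA0, mul_zero]
  have hAzero : ∀ z : ℂ, 0 ≤ z.im → A z = 0 := by
    intro z hz
    have := hD2const z hz
    rw [hD20, hD2] at this
    exact (mul_eq_zero.mp this).resolve_left Complex.I_ne_zero
  -- conclusions
  constructor
  · intro z hz
    have hne := hPpn z hz
    have h1 := hAe z hz
    rw [hAzero z hz, Complex.exp_zero, eq_comm, div_eq_one_iff_eq hne] at h1
    exact h1
  · intro z hz
    have hBzero : B z = 0 := by
      have hc : 0 ≤ ((starRingEnd ℂ) z).im := by rw [Complex.conj_im]; linarith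
      have := hA_eq _ hc
      rw [hAzero _ hc, Complex.conj_conj] at this
      have h2 := congrArg (starRingEnd ℂ) this.symm
      rw [Complex.conj_conj, map_zero] at h2
      exact h2
    have hne := hfmn z hz
    have h1 := hBe z hz
    rw [hBzero, Complex.exp_zero, eq_comm, div_eq_one_iff_eq hne] at h1
    exact h1.symm
end

section
/- Let m = ⌊M⌋ for M > 0, and ε₁ > 0. Then the sum ∑_{n=1}^{m} 1/(n^{ε₁}(m+1−n)) tends to 0 as m → ∞. -/
open Filter Real

lemma harm_le (m : ℕ) : ∑ d ∈ Finset.Icc 1 m, (d : ℝ)⁻¹ ≤ 1 + Real.log m := by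
  have h := harmonic_le_one_add_log m
  rw [harmonic_eq_sum_Icc] at h
  push_cast at h
  exact h

lemma refl_sum (m : ℕ) :
    ∑ n ∈ Finset.Icc 1 m, 1 / ((m : ℝ) + 1 - n) = ∑ d ∈ Finset.Icc 1 m, (d : ℝ)⁻¹ := by
  refine Finset.sum_nbij' (fun n => m + 1 - n) (fun d => m + 1 - d) ?_ ?_ ?_ ?_ ?_
  · intro a ha
    simp only [Finset.mem_Icc] at ha ⊢
    omega
  · intro a ha
    simp only [Finset.mem_Icc] at ha ⊢
    omega
  · intro a ha
    simp only [Finset.mem_Icc] at ha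
    omega
  · intro a ha
    simp only [Finset.mem_Icc] at ha
    omega
  · intro a ha
    simp only [Finset.mem_Icc] at ha
    rw [one_div]
    congr 1
    have : (↑(m + 1 - a) : ℝ) = (m : ℝ) + 1 - a := by
      have : a ≤ m + 1 := by omega
      push_cast [Nat.cast_sub this]
      ring
    rw [this]

/-- The sum `∑_{n=1}^m 1/(n^{ε₁}(m+1-n))` tends to `0` as `m → ∞`. -/
theorem stmt4 (ε₁ : ℝ) (hε₁ : 0 < ε₁) :
    Tendsto (fun m : ℕ => ∑ n ∈ Finset.Icc 1 m, 1 / ((n : ℝ) ^ ε₁ * ((m : ℝ) + 1 - n)))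
      atTop (nhds 0) := by
  set r : ℝ := ε₁ / 2 with hr
  have hrpos : 0 < r := by positivity
  -- the bounding function
  have hB : Tendsto (fun m : ℕ => 2 / Real.sqrt m + (1 + Real.log m) * (m : ℝ) ^ (-r))
      atTop (nhds 0) := by
    have h1 : Tendsto (fun m : ℕ => 2 / Real.sqrt m) atTop (nhds 0) := by
      have hsq : Tendsto Real.sqrt atTop atTop :=
        (tendsto_rpow_atTop (by norm_num : (0:ℝ) < 1/2)).congr
          (fun x => (Real.sqrt_eq_rpow x).symm)
      have : Tendsto (fun m : ℕ => Real.sqrt m) atTop atTop :=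
        hsq.comp tendsto_natCast_atTop_atTop
      simpa [div_eq_mul_inv] using (this.inv_tendsto_atTop).const_mul (2 : ℝ)
    have h2 : Tendsto (fun m : ℕ => (1 + Real.log m) * (m : ℝ) ^ (-r)) atTop (nhds 0) := by
      have hpow : Tendsto (fun x : ℝ => x ^ (-r)) atTop (nhds 0) := tendsto_rpow_neg_atTop hrpos
      have hlog : Tendsto (fun x : ℝ => Real.log x * x ^ (-r)) atTop (nhds 0) := by
        have := (isLittleO_log_rpow_atTop hrpos).tendsto_div_nhds_zero
        refine this.congr' ?_
        filter_upwards [eventually_gt_atTop (0 : ℝ)] with x hx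
        rw [div_eq_mul_inv, ← Real.rpow_neg hx.le]
      have : Tendsto (fun x : ℝ => (1 + Real.log x) * x ^ (-r)) atTop (nhds 0) := by
        have := hpow.add hlog
        simpa [add_mul] using this
      exact this.comp tendsto_natCast_atTop_atTop
    simpa using h1.add h2
  refine tendsto_of_tendsto_of_tendsto_of_le_of_le' tendsto_const_nhds hB ?_ ?_
  · filter_upwards with m
    refine Finset.sum_nonneg fun n hn => ?_
    simp only [Finset.mem_Icc] at hn
    have h1 : (0:ℝ) < (n : ℝ) ^ ε₁ := by
      apply Real.rpow_pos_of_pos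
      exact_mod_cast Nat.lt_of_lt_of_le Nat.zero_lt_one hn.1
    have h2 : (0:ℝ) < (m : ℝ) + 1 - n := by
      have : (n : ℝ) ≤ m := by exact_mod_cast hn.2
      linarith
    positivity
  · filter_upwards [eventually_ge_atTop 4] with m hm
    set k := Nat.sqrt m with hk
    have hk2 : k ≤ m := Nat.sqrt_le_self m
    have hmR : (4:ℝ) ≤ (m:ℝ) := by exact_mod_cast hm
    have hm0 : (0:ℝ) < m := by linarith
    -- k ≤ √m ≤ m/2
    have hkle : (k : ℝ) ≤ Real.sqrt m := by
      rw [show ((k:ℝ)) = Real.sqrt ((k:ℝ)^2) from (Real.sqrt_sq (by positivity)).symm]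
      apply Real.sqrt_le_sqrt
      have h : (k ^ 2 : ℕ) ≤ m := Nat.sqrt_le' m
      have h' : ((k:ℝ)) ^ 2 ≤ (m:ℝ) := by exact_mod_cast h
      linarith
    have hsqle : Real.sqrt m ≤ (m:ℝ)/2 := by
      have : Real.sqrt ((m:ℝ)) ≤ Real.sqrt (((m:ℝ)/2)^2) := by
        apply Real.sqrt_le_sqrt
        nlinarith
      rwa [Real.sqrt_sq (by linarith)] at this
    have hden : (m:ℝ)/2 ≤ (m:ℝ) + 1 - k := by
      have := hkle.trans hsqle
      linarith
    have hdenpos : (0:ℝ) < (m:ℝ) + 1 - k := by linarith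
    -- split the sum
    have hsplit : ∑ n ∈ Finset.Icc 1 m, 1 / ((n : ℝ) ^ ε₁ * ((m : ℝ) + 1 - n))
        = ∑ n ∈ Finset.Ioc 0 k, 1 / ((n : ℝ) ^ ε₁ * ((m : ℝ) + 1 - n))
          + ∑ n ∈ Finset.Ioc k m, 1 / ((n : ℝ) ^ ε₁ * ((m : ℝ) + 1 - n)) := by
      have hIcc : Finset.Icc 1 m = Finset.Ioc 0 m := by
        rw [← Finset.Icc_add_one_left_eq_Ioc]
        rfl
      rw [hIcc, ← Finset.sum_Ioc_consecutive _ (Nat.zero_le k) hk2]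
    rw [hsplit]
    have hterm_pos : ∀ n ∈ Finset.Icc 1 m, (0:ℝ) < (n : ℝ) ^ ε₁ * ((m : ℝ) + 1 - n) := by
      intro n hn
      simp only [Finset.mem_Icc] at hn
      have h1 : (0:ℝ) < (n : ℝ) ^ ε₁ :=
        Real.rpow_pos_of_pos (by exact_mod_cast Nat.lt_of_lt_of_le Nat.zero_lt_one hn.1) _
      have h2 : (0:ℝ) < (m : ℝ) + 1 - n := by
        have : (n : ℝ) ≤ m := by exact_mod_cast hn.2
        linarith
      positivity
    -- bound sum1
    have hsum1 : ∑ n ∈ Finset.Ioc 0 k, 1 / ((n : ℝ) ^ ε₁ * ((m : ℝ) + 1 - n))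
        ≤ 2 / Real.sqrt m := by
      have hb : ∀ n ∈ Finset.Ioc 0 k, 1 / ((n : ℝ) ^ ε₁ * ((m : ℝ) + 1 - n))
          ≤ 1 / ((m:ℝ) + 1 - k) := by
        intro n hn
        simp only [Finset.mem_Ioc] at hn
        have hn1 : (1:ℝ) ≤ (n:ℝ) := by exact_mod_cast hn.1
        have hnk : (n:ℝ) ≤ k := by exact_mod_cast hn.2
        have hpow1 : (1:ℝ) ≤ (n : ℝ) ^ ε₁ := Real.one_le_rpow hn1 hε₁.le
        apply one_div_le_one_div_of_le hdenpos
        calc (m:ℝ) + 1 - k ≤ (m:ℝ) + 1 - n := by linarith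
          _ = 1 * ((m:ℝ) + 1 - n) := (one_mul _).symm
          _ ≤ (n : ℝ) ^ ε₁ * ((m : ℝ) + 1 - n) := by
              apply mul_le_mul_of_nonneg_right hpow1
              linarith
      calc ∑ n ∈ Finset.Ioc 0 k, 1 / ((n : ℝ) ^ ε₁ * ((m : ℝ) + 1 - n))
          ≤ ∑ _n ∈ Finset.Ioc 0 k, 1 / ((m:ℝ) + 1 - k) := Finset.sum_le_sum hb
        _ = k * (1 / ((m:ℝ) + 1 - k)) := by
            rw [Finset.sum_const, Nat.card_Ioc]
            simp [nsmul_eq_mul]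
        _ = (k:ℝ) / ((m:ℝ) + 1 - k) := by ring
        _ ≤ Real.sqrt m / ((m:ℝ)/2) := by
            exact div_le_div₀ (Real.sqrt_nonneg _) hkle (by positivity) hden
        _ = 2 / Real.sqrt m := by
            have hs : (0:ℝ) < Real.sqrt m := Real.sqrt_pos.mpr hm0
            rw [div_eq_div_iff (by positivity) hs.ne', Real.mul_self_sqrt hm0.le]
            ring
    -- bound sum2
    have hsum2 : ∑ n ∈ Finset.Ioc k m, 1 / ((n : ℝ) ^ ε₁ * ((m : ℝ) + 1 - n))
        ≤ (1 + Real.log m) * (m : ℝ) ^ (-r) := by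
      have hmr : (0:ℝ) < (m : ℝ) ^ r := Real.rpow_pos_of_pos hm0 _
      have hb : ∀ n ∈ Finset.Ioc k m, 1 / ((n : ℝ) ^ ε₁ * ((m : ℝ) + 1 - n))
          ≤ (m : ℝ) ^ (-r) * (1 / ((m:ℝ) + 1 - n)) := by
        intro n hn
        simp only [Finset.mem_Ioc] at hn
        have hnm : (n:ℝ) ≤ m := by exact_mod_cast hn.2
        have hden2 : (0:ℝ) < (m:ℝ) + 1 - n := by linarith
        have hsqn : Real.sqrt m ≤ (n:ℝ) := by
          have h1 : m < (k+1) ^ 2 := Nat.lt_succ_sqrt' m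
          have h2 : k + 1 ≤ n := hn.1
          have h3 : m ≤ n ^ 2 := le_of_lt (h1.trans_le (Nat.pow_le_pow_left h2 2))
          have : (m:ℝ) ≤ (n:ℝ)^2 := by exact_mod_cast h3
          calc Real.sqrt m ≤ Real.sqrt ((n:ℝ)^2) := Real.sqrt_le_sqrt this
            _ = (n:ℝ) := Real.sqrt_sq (Nat.cast_nonneg n)
        have hpow : (m:ℝ) ^ r ≤ (n : ℝ) ^ ε₁ := by
          have : (m:ℝ) ^ r = Real.sqrt m ^ ε₁ := by
            rw [Real.sqrt_eq_rpow, ← Real.rpow_mul hm0.le]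
            congr 1
            rw [hr]; ring
          rw [this]
          exact Real.rpow_le_rpow (Real.sqrt_nonneg _) hsqn hε₁.le
        rw [Real.rpow_neg hm0.le, ← one_div, div_mul_div_comm, one_mul]
        apply one_div_le_one_div_of_le (by positivity)
        exact mul_le_mul_of_nonneg_right hpow hden2.le
      calc ∑ n ∈ Finset.Ioc k m, 1 / ((n : ℝ) ^ ε₁ * ((m : ℝ) + 1 - n))
          ≤ ∑ n ∈ Finset.Ioc k m, (m : ℝ) ^ (-r) * (1 / ((m:ℝ) + 1 - n)) :=
            Finset.sum_le_sum hb
        _ = (m : ℝ) ^ (-r) * ∑ n ∈ Finset.Ioc k m, 1 / ((m:ℝ) + 1 - n) := by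
            rw [Finset.mul_sum]
        _ ≤ (m : ℝ) ^ (-r) * ∑ n ∈ Finset.Icc 1 m, 1 / ((m:ℝ) + 1 - n) := by
            apply mul_le_mul_of_nonneg_left _ (Real.rpow_nonneg hm0.le _)
            apply Finset.sum_le_sum_of_subset_of_nonneg
            · intro n hn
              simp only [Finset.mem_Ioc, Finset.mem_Icc] at hn ⊢
              omega
            · intro n hn _
              simp only [Finset.mem_Icc] at hn
              have : (n : ℝ) ≤ m := by exact_mod_cast hn.2
              have : (0:ℝ) < (m:ℝ) + 1 - n := by linarith
              positivity
        _ ≤ (m : ℝ) ^ (-r) * (1 + Real.log m) := by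
            apply mul_le_mul_of_nonneg_left _ (Real.rpow_nonneg hm0.le _)
            rw [refl_sum]
            exact harm_le m
        _ = (1 + Real.log m) * (m : ℝ) ^ (-r) := mul_comm _ _
    linarith
end

section
/- For real x > 0 and real α with |α| < 1, the integral ∫₀^∞ (e^{izx} − 1 − izx)·e^{αx}/sinh(x/2)² dx equals 4·∑_{n≥1} [ (α+iz)/(n−α−iz) − (α+iz)/(n−α) − iαz/(n−α)² ] for every real z. -/
open Real Complex

open Real Complex MeasureTheory Set Filter intervalIntegral

lemma exp_I_sub_one_norm (t : ℝ) : ‖Complex.exp (Complex.I * t) - 1‖ ≤ |t| := by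
  have hz : Complex.exp (Complex.I * ↑t) - 1
      = Complex.ofReal (Real.cos t - 1) + Complex.ofReal (Real.sin t) * Complex.I := by
    rw [mul_comm, Complex.exp_mul_I, ← Complex.ofReal_cos, ← Complex.ofReal_sin]
    push_cast; ring
  rw [hz]
  rw [Complex.norm_add_mul_I]
  rw [show |t| = Real.sqrt (t^2) from (Real.sqrt_sq_eq_abs t).symm]
  apply Real.sqrt_le_sqrt
  have h1 : Real.cos t = 2 * Real.cos (t/2)^2 - 1 := by
    rw [← Real.cos_two_mul]; ring_nf
  have h5 := Real.sin_sq_add_cos_sq (t/2)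
  have h2 : |Real.sin (t/2)| ≤ |t/2| := Real.abs_sin_le_abs
  have h3 := Real.sin_sq_add_cos_sq t
  have h4 : Real.sin (t/2)^2 ≤ (t/2)^2 := by
    rw [← _root_.sq_abs (Real.sin (t/2)), ← _root_.sq_abs (t/2)]
    exact pow_le_pow_left₀ (abs_nonneg _) h2 2
  nlinarith

lemma exp_I_taylor_norm (t : ℝ) : ‖Complex.exp (Complex.I*t) - 1 - Complex.I*t‖ ≤ t^2/2 := by
  suffices H : ∀ t : ℝ, 0 ≤ t → ‖Complex.exp (Complex.I*t) - 1 - Complex.I*t‖ ≤ t^2/2 by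
    rcases le_or_gt 0 t with ht | ht
    · exact H t ht
    · have h1 := H (-t) (by linarith)
      have h2 : Complex.exp (Complex.I*(-t:ℝ)) - 1 - Complex.I*(-t:ℝ)
          = starRingEnd ℂ (Complex.exp (Complex.I*t) - 1 - Complex.I*t) := by
        simp only [map_sub, ← Complex.exp_conj, map_mul, Complex.conj_I, Complex.conj_ofReal,
          map_one]
        push_cast; ring_nf
      rw [h2, RCLike.norm_conj] at h1
      calc ‖Complex.exp (Complex.I*t) - 1 - Complex.I*t‖ ≤ (-t)^2/2 := h1
        _ = t^2/2 := by ring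
  intro t ht
  have hderiv : ∀ x ∈ Set.uIcc (0:ℝ) t,
      HasDerivAt (fun s : ℝ => Complex.exp (Complex.I*s) - Complex.I*s)
        (Complex.I * Complex.exp (Complex.I*x) - Complex.I) x := by
    intro x _
    have h0 : HasDerivAt (fun s : ℝ => (s:ℂ)) 1 x := Complex.ofRealCLM.hasDerivAt
    have h1 : HasDerivAt (fun s : ℝ => Complex.I * (s:ℂ)) Complex.I x := by
      simpa using h0.const_mul Complex.I
    have h2 : HasDerivAt (fun s : ℝ => Complex.exp (Complex.I*s))
        (Complex.exp (Complex.I*x) * Complex.I) x := h1.cexp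
    exact (h2.sub h1).congr_deriv (by ring)
  have hcont : IntervalIntegrable (fun x : ℝ => Complex.I * Complex.exp (Complex.I*x) - Complex.I)
      MeasureTheory.volume 0 t := by
    apply Continuous.intervalIntegrable
    continuity
  have key := intervalIntegral.integral_eq_sub_of_hasDerivAt hderiv hcont
  have heq : Complex.exp (Complex.I*t) - 1 - Complex.I*t
      = ∫ x in (0:ℝ)..t, (Complex.I * Complex.exp (Complex.I*x) - Complex.I) := by
    rw [key]; push_cast; simp [Complex.exp_zero]; ring
  rw [heq]
  have hb : ∀ᵐ (s : ℝ) ∂(MeasureTheory.volume.restrict (Set.uIoc (0:ℝ) t)),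
      ‖Complex.I * Complex.exp (Complex.I*s) - Complex.I‖ ≤ s := by
    rw [MeasureTheory.ae_restrict_iff' measurableSet_uIoc]
    filter_upwards with s hs
    have hs' : 0 < s := by
      rw [Set.uIoc_of_le ht] at hs; exact hs.1
    have : Complex.I * Complex.exp (Complex.I*s) - Complex.I
        = Complex.I * (Complex.exp (Complex.I*s) - 1) := by ring
    rw [this, norm_mul, Complex.norm_I, one_mul]
    calc ‖Complex.exp (Complex.I*s) - 1‖ ≤ |s| := exp_I_sub_one_norm s
      _ = s := _root_.abs_of_pos hs'
  calc ‖∫ x in (0:ℝ)..t, (Complex.I * Complex.exp (Complex.I*x) - Complex.I)‖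
      ≤ |∫ x in (0:ℝ)..t, x| := intervalIntegral.norm_integral_le_abs_of_norm_le hb
        (by apply Continuous.intervalIntegrable; continuity)
    _ = t^2/2 := by
        rw [integral_id, show (t^2 - 0^2)/2 = t^2/2 by ring, _root_.abs_of_nonneg (by positivity)]

lemma integrableOn_sq_exp {b : ℝ} (hb : 0 < b) :
    MeasureTheory.IntegrableOn (fun x : ℝ => x^2 * Real.exp (-(b*x))) (Set.Ioi 0) := by
  have h0 := Real.GammaIntegral_convergent (s := 3) (by norm_num)
  have h1 : MeasureTheory.IntegrableOn (fun x : ℝ => Real.exp (-(b*x)) * (b*x) ^ ((3:ℝ) - 1))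
      (Set.Ioi 0) := by
    have := (integrableOn_Ioi_comp_mul_left_iff
      (fun x : ℝ => Real.exp (-x) * x ^ ((3:ℝ) - 1)) 0 hb).mpr (by simpa using h0)
    simpa using this
  have h2 := h1.const_mul (b ^ (-2 : ℝ))
  apply MeasureTheory.IntegrableOn.congr_fun h2 ?_ measurableSet_Ioi
  intro x hx
  have hx' : (0:ℝ) < x := hx
  simp only
  rw [show ((3:ℝ) - 1) = (2:ℝ) by norm_num, Real.mul_rpow hb.le hx'.le]
  rw [Real.rpow_neg hb.le, Real.rpow_two, Real.rpow_two]
  field_simp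

lemma integral_sq_exp {b : ℝ} (hb : 0 < b) :
    ∫ x in Set.Ioi (0:ℝ), x^2 * Real.exp (-(b*x)) = 2/b^3 := by
  have h := Real.integral_rpow_mul_exp_neg_mul_Ioi (a := 3) (r := b) (by norm_num) hb
  rw [show ∫ t in Set.Ioi (0:ℝ), t ^ ((3:ℝ)-1) * Real.exp (-(b*t))
      = ∫ x in Set.Ioi (0:ℝ), x^2 * Real.exp (-(b*x)) from ?_] at h
  · have hg : Real.Gamma 3 = 2 := by
      rw [show (3:ℝ)=((2:ℕ):ℝ)+1 by norm_num, Real.Gamma_nat_eq_factorial]; norm_num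
    have hp : ((1:ℝ)/b) ^ (3:ℝ) = (1/b)^(3:ℕ) := by
      rw [← Real.rpow_natCast]; norm_num
    rw [h, hg, hp]
    field_simp
  · refine MeasureTheory.setIntegral_congr_fun measurableSet_Ioi (fun x hx => ?_)
    have hx' : (0:ℝ) < x := hx
    rw [show ((3:ℝ) - 1) = (2:ℝ) by norm_num, Real.rpow_two]
    try ring

lemma hasDerivAt_cexp_mul (w : ℂ) (x : ℝ) :
    HasDerivAt (fun s : ℝ => Complex.exp (w*s)) (w * Complex.exp (w*x)) x := by
  have h0 : HasDerivAt (fun s : ℝ => (s:ℂ)) 1 x := Complex.ofRealCLM.hasDerivAt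
  have h1 : HasDerivAt (fun s : ℝ => w*(s:ℂ)) w x := by simpa using h0.const_mul w
  simpa [mul_comm] using h1.cexp

lemma norm_cexp_mul (w : ℂ) (x : ℝ) : ‖Complex.exp (w*x)‖ = Real.exp (w.re * x) := by
  rw [Complex.norm_exp]
  congr 1
  simp [Complex.mul_re]

lemma tendsto_cexp_zero {w : ℂ} (hw : w.re < 0) :
    Filter.Tendsto (fun x : ℝ => Complex.exp (w*x)) Filter.atTop (nhds 0) := by
  rw [tendsto_zero_iff_norm_tendsto_zero]
  simp_rw [norm_cexp_mul]
  have h2 : Filter.Tendsto (fun x : ℝ => (-w.re)*x) Filter.atTop Filter.atTop :=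
    Filter.Tendsto.const_mul_atTop (by linarith) Filter.tendsto_id
  have h3 := (Real.tendsto_exp_neg_atTop_nhds_zero).comp h2
  convert h3 using 2 with x
  simp [Function.comp]

lemma tendsto_x_cexp_zero {w : ℂ} (hw : w.re < 0) :
    Filter.Tendsto (fun x : ℝ => (x:ℂ) * Complex.exp (w*x)) Filter.atTop (nhds 0) := by
  have h2 : Filter.Tendsto (fun x : ℝ => (-w.re)*x) Filter.atTop Filter.atTop :=
    Filter.Tendsto.const_mul_atTop (by linarith) Filter.tendsto_id
  have h1 := (tendsto_pow_mul_exp_neg_atTop_nhds_zero 1).comp h2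
  have h4 := h1.const_mul (-w.re)⁻¹
  rw [mul_zero] at h4
  apply squeeze_zero_norm' ?_ h4
  filter_upwards [Filter.eventually_ge_atTop (0:ℝ)] with x hx
  rw [norm_mul, norm_cexp_mul, Complex.norm_real, Real.norm_eq_abs, _root_.abs_of_nonneg hx]
  simp only [Function.comp, pow_one]
  have hwr : (0:ℝ) < -w.re := by linarith
  rw [show -(-w.re*x) = w.re * x by ring, ← mul_assoc, ← mul_assoc,
    inv_mul_cancel₀ hwr.ne', one_mul]

lemma integral_piece (z : ℝ) {c : ℂ} (hc : c.re < 0) :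
    MeasureTheory.IntegrableOn
      (fun x : ℝ => (Complex.exp (Complex.I*z*x) - 1 - Complex.I*z*x) * Complex.exp (c*x))
      (Set.Ioi 0) ∧
    ∫ x in Set.Ioi (0:ℝ),
      (Complex.exp (Complex.I*z*x) - 1 - Complex.I*z*x) * Complex.exp (c*x)
      = c⁻¹ - (c+Complex.I*z)⁻¹ - Complex.I*z*(c⁻¹)^2 := by
  have hc0 : c ≠ 0 := fun h => by simp [h] at hc
  have hcz : c + Complex.I*z ≠ 0 := by
    intro h
    have := congrArg Complex.re h
    simp [Complex.add_re, Complex.mul_re] at this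
    linarith
  set g : ℝ → ℂ :=
    fun x => (Complex.exp (Complex.I*z*x) - 1 - Complex.I*z*x) * Complex.exp (c*x) with hg
  -- integrability
  have hbound : ∀ x : ℝ, ‖g x‖ ≤ z^2/2 * (x^2 * Real.exp (-(-c.re*x))) := by
    intro x
    rw [hg, norm_mul, norm_cexp_mul]
    have h1 : ‖Complex.exp (Complex.I*z*x) - 1 - Complex.I*z*x‖ ≤ (z*x)^2/2 := by
      have := exp_I_taylor_norm (z*x)
      convert this using 3 <;> push_cast <;> ring
    calc ‖Complex.exp (Complex.I*z*x) - 1 - Complex.I*z*x‖ * Real.exp (c.re*x)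
        ≤ (z*x)^2/2 * Real.exp (c.re*x) :=
          mul_le_mul_of_nonneg_right h1 (Real.exp_nonneg _)
      _ = z^2/2 * (x^2 * Real.exp (-(-c.re*x))) := by ring_nf
  have hgcont : Continuous g := by
    rw [hg]; continuity
  have hint : MeasureTheory.IntegrableOn g (Set.Ioi 0) := by
    apply MeasureTheory.Integrable.mono'
      (((integrableOn_sq_exp (b := -c.re) (by linarith)).const_mul (z^2/2)))
      (hgcont.aestronglyMeasurable.restrict)
    exact Filter.Eventually.of_forall hbound
  refine ⟨hint, ?_⟩
  -- FTC
  set F : ℝ → ℂ := fun x =>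
    (c+Complex.I*z)⁻¹ * Complex.exp ((c+Complex.I*z)*x) - c⁻¹ * Complex.exp (c*x)
      - Complex.I*z*c⁻¹*((x:ℂ) * Complex.exp (c*x)) + Complex.I*z*(c⁻¹)^2 * Complex.exp (c*x)
    with hF
  have hderiv : ∀ x ∈ Set.Ici (0:ℝ), HasDerivAt F (g x) x := by
    intro x _
    have h1 := (hasDerivAt_cexp_mul (c+Complex.I*z) x).const_mul (c+Complex.I*z)⁻¹
    have h2 := (hasDerivAt_cexp_mul c x).const_mul c⁻¹
    have h3 : HasDerivAt (fun s : ℝ => (s:ℂ) * Complex.exp (c*s))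
        (1 * Complex.exp (c*x) + (x:ℂ) * (c * Complex.exp (c*x))) x :=
      (Complex.ofRealCLM.hasDerivAt).mul (hasDerivAt_cexp_mul c x)
    have h4 := (h3.const_mul (Complex.I*z*c⁻¹))
    have h5 := (hasDerivAt_cexp_mul c x).const_mul (Complex.I*z*(c⁻¹)^2)
    have h6 := ((h1.sub h2).sub h4).add h5
    convert h6 using 1
    · rfl
    · rfl
    rw [hg, show (c+Complex.I*z)*(x:ℂ) = Complex.I*z*x + c*x by ring, Complex.exp_add]
    field_simp
    ring
  have htend : Filter.Tendsto F Filter.atTop (nhds 0) := by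
    rw [hF]
    have t1 := (tendsto_cexp_zero (w := c+Complex.I*z) (by simpa using hc)).const_mul
      (c+Complex.I*z)⁻¹
    have t2 := (tendsto_cexp_zero hc).const_mul c⁻¹
    have t3 := (tendsto_x_cexp_zero hc).const_mul (Complex.I*z*c⁻¹)
    have t4 := (tendsto_cexp_zero hc).const_mul (Complex.I*z*(c⁻¹)^2)
    have := ((t1.sub t2).sub t3).add t4
    simpa using this
  have key := MeasureTheory.integral_Ioi_of_hasDerivAt_of_tendsto' hderiv hint htend
  rw [key, hF]
  simp [Complex.exp_zero]
  ring

lemma sinh_series {x : ℝ} (hx : 0 < x) :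
    HasSum (fun n : ℕ => (4:ℂ) * ((n:ℂ)+1) * Complex.exp (-((n:ℂ)+1)*x))
      (((Real.sinh (x/2) : ℂ))^2)⁻¹ := by
  set r : ℂ := Complex.exp (-(x:ℂ)) with hr
  have hrn : ‖r‖ < 1 := by
    rw [hr, Complex.norm_exp]
    rw [show (-(x:ℂ)).re = -x by simp]
    calc Real.exp (-x) < Real.exp 0 := Real.exp_lt_exp.mpr (by linarith)
      _ = 1 := Real.exp_zero
  have h0 := hasSum_coe_mul_geometric_of_norm_lt_one (𝕜 := ℂ) hrn
  have h1 : HasSum (fun n : ℕ => ((n:ℂ)+1) * r^(n+1)) (r/(1-r)^2) := by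
    have h1' := (hasSum_nat_add_iff (f := fun n : ℕ => (n:ℂ) * r^n) 1).mpr (by simpa using h0)
    convert h1' using 2 with n
    · rfl
    push_cast
    ring
  have h2 : (fun n : ℕ => (4:ℂ) * ((n:ℂ)+1) * Complex.exp (-((n:ℂ)+1)*x))
      = fun n : ℕ => (4:ℂ) * (((n:ℂ)+1) * r^(n+1)) := by
    funext n
    rw [hr, ← Complex.exp_nat_mul]
    rw [show ((n+1 : ℕ) : ℂ) * (-(x:ℂ)) = -((n:ℂ)+1)*x by push_cast; ring]
    ring
  have h3 := h1.mul_left (4:ℂ)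
  rw [← h2] at h3
  convert h3 using 1
  · rfl
  -- value equality
  have hs0 : Real.sinh (x/2) ≠ 0 := ne_of_gt (Real.sinh_pos_iff.mpr (by linarith))
  have hS : ((Real.sinh (x/2) : ℝ) : ℂ) = Complex.sinh ((x:ℂ)/2) := by
    rw [Complex.ofReal_sinh]; norm_num
  have h1r : (1:ℂ) - r ≠ 0 := by
    have : r ≠ 1 := fun h => by rw [h] at hrn; simp at hrn
    exact sub_ne_zero.mpr (Ne.symm this)
  set u : ℂ := Complex.exp ((x:ℂ)/2) with hu
  have hu0 : u ≠ 0 := Complex.exp_ne_zero _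
  have hru : r = (u^2)⁻¹ := by
    rw [hr, hu, ← Complex.exp_nat_mul, ← Complex.exp_neg]
    norm_num
    ring_nf
  have hsinh : Complex.sinh ((x:ℂ)/2) = (u - u⁻¹)/2 := by
    rw [Complex.sinh, hu, Complex.exp_neg]
  have hne : u - u⁻¹ ≠ 0 := by
    intro h
    apply hs0
    have : ((Real.sinh (x/2) : ℝ) : ℂ) = 0 := by rw [hS, hsinh, h]; simp
    exact_mod_cast this
  have hq : u^2 - 1 ≠ 0 := by
    have h := mul_ne_zero hu0 hne
    rwa [mul_sub, mul_inv_cancel₀ hu0, ← sq] at h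
  rw [hS, hsinh, hru,
    show ((1:ℂ) - (u^2)⁻¹) = (u^2-1)/u^2 by field_simp,
    show ((u - u⁻¹)/2) = (u^2-1)/(2*u) by field_simp]
  rw [div_pow, div_pow, inv_div]
  field_simp
  ring

lemma alg_gen (a w c : ℂ) (ha : a ≠ 0) (hb : a - w ≠ 0) :
    ((-a)⁻¹ - (-(a-w))⁻¹ - w*((-a)⁻¹)^2) * (4*(a+c))
    = 4 * ((c+w)/(a-w) - (c+w)/a - c*w/a^2) := by
  rw [inv_neg, inv_neg]
  field_simp
  ring

/-- For real `α` with `|α| < 1` and every real `z`,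
`∫₀^∞ (e^{izx} - 1 - izx) e^{αx}/sinh(x/2)² dx
  = 4 ∑_{n≥1} [(α+iz)/(n-α-iz) - (α+iz)/(n-α) - iαz/(n-α)²]`. -/
theorem stmt6 (α : ℝ) (hα : |α| < 1) (z : ℝ) :
    ∫ x in Set.Ioi (0 : ℝ),
      (Complex.exp (Complex.I * z * x) - 1 - Complex.I * z * x) * Complex.exp ((α : ℂ) * x)
        / ((Real.sinh (x / 2) : ℂ)) ^ 2
    = 4 * ∑' n : ℕ,
        (((α : ℂ) + Complex.I * z) / ((n : ℂ) + 1 - α - Complex.I * z)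
          - ((α : ℂ) + Complex.I * z) / ((n : ℂ) + 1 - α)
          - Complex.I * α * z / ((n : ℂ) + 1 - α) ^ 2) := by
  have hα1 : α < 1 := lt_of_le_of_lt (le_abs_self α) hα
  have hαa : (0:ℝ) < 1 - |α| := by linarith
  set E : ℝ → ℂ := fun x => Complex.exp (Complex.I*z*x) - 1 - Complex.I*z*x with hE
  set f : ℕ → ℝ → ℂ := fun n x =>
    E x * Complex.exp (((α:ℂ) - ((n:ℂ)+1))*x) * (4*((n:ℂ)+1)) with hf
  have hcre : ∀ n : ℕ, ((α:ℂ) - ((n:ℂ)+1)).re < 0 := by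
    intro n
    have : (0:ℝ) ≤ n := n.cast_nonneg
    simp [Complex.sub_re, Complex.add_re]
    linarith
  have hA : ∀ n : ℕ, ((n:ℂ) + 1 - α) ≠ 0 := by
    intro n h
    have := congrArg Complex.re h
    have h0 : (0:ℝ) ≤ n := n.cast_nonneg
    simp [Complex.sub_re, Complex.add_re] at this
    linarith
  have hB : ∀ n : ℕ, ((n:ℂ) + 1 - α - Complex.I*z) ≠ 0 := by
    intro n h
    have := congrArg Complex.re h
    have h0 : (0:ℝ) ≤ n := n.cast_nonneg
    simp [Complex.sub_re, Complex.add_re, Complex.mul_re] at this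
    linarith
  -- integrability of each f n
  have hf_int : ∀ n : ℕ, MeasureTheory.Integrable (f n)
      (MeasureTheory.volume.restrict (Set.Ioi 0)) := by
    intro n
    exact ((integral_piece z (hcre n)).1).mul_const _
  -- value of each integral
  have hval : ∀ n : ℕ, ∫ x in Set.Ioi (0:ℝ), f n x
      = 4 * (((α : ℂ) + Complex.I * z) / ((n : ℂ) + 1 - α - Complex.I * z)
          - ((α : ℂ) + Complex.I * z) / ((n : ℂ) + 1 - α)
          - Complex.I * α * z / ((n : ℂ) + 1 - α) ^ 2) := by
    intro n
    rw [hf]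
    simp only
    rw [MeasureTheory.integral_mul_const]
    rw [(integral_piece z (hcre n)).2]
    have key := alg_gen ((n:ℂ)+1-(α:ℂ)) (Complex.I*z) (α:ℂ) (hA n) (hB n)
    rw [show (α:ℂ) - ((n:ℂ)+1) = -((n:ℂ)+1-(α:ℂ)) by ring,
      show -((n:ℂ)+1-(α:ℂ)) + Complex.I*(z:ℂ) = -(((n:ℂ)+1-(α:ℂ)) - Complex.I*z) by ring,
      show (4:ℂ)*((n:ℂ)+1) = 4*(((n:ℂ)+1-(α:ℂ)) + (α:ℂ)) by ring]
    rw [key]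
    try ring
  -- norm bound on each integral
  have hbound : ∀ n : ℕ, ∀ x : ℝ,
      ‖E x * Complex.exp (((α:ℂ) - ((n:ℂ)+1))*x)‖
        ≤ z^2/2 * (x^2 * Real.exp (-((((n:ℝ)+1) - α)*x))) := by
    intro n x
    rw [norm_mul, norm_cexp_mul]
    have h1 : ‖E x‖ ≤ (z*x)^2/2 := by
      have := exp_I_taylor_norm (z*x)
      rw [hE]
      convert this using 3 <;> push_cast <;> ring
    have h2 : ((α:ℂ) - ((n:ℂ)+1)).re = -(((n:ℝ)+1) - α) := by
      simp [Complex.sub_re, Complex.add_re]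
      try ring
    rw [h2]
    calc ‖E x‖ * Real.exp (-(((n:ℝ)+1) - α)*x)
        ≤ (z*x)^2/2 * Real.exp (-(((n:ℝ)+1) - α)*x) :=
          mul_le_mul_of_nonneg_right h1 (Real.exp_nonneg _)
      _ = z^2/2 * (x^2 * Real.exp (-((((n:ℝ)+1) - α)*x))) := by ring_nf
  have hnorm : ∀ n : ℕ, (∫ x in Set.Ioi (0:ℝ), ‖f n x‖)
      ≤ (4*z^2/(1-|α|)^3) * (1/((n:ℝ)+1)^2) := by
    intro n
    have hbpos : (0:ℝ) < ((n:ℝ)+1) - α := by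
      have h0 : (0:ℝ) ≤ n := n.cast_nonneg
      linarith
    have e1 : ∀ x : ℝ, ‖f n x‖
        = ‖E x * Complex.exp (((α:ℂ) - ((n:ℂ)+1))*x)‖ * (4*((n:ℝ)+1)) := by
      intro x
      rw [hf]
      simp only
      rw [norm_mul]
      congr 1
      rw [show (4*((n:ℂ)+1)) = (((4*((n:ℝ)+1) : ℝ)) : ℂ) by push_cast; ring,
        Complex.norm_real, Real.norm_eq_abs, _root_.abs_of_nonneg (by positivity)]
    simp_rw [e1]
    rw [MeasureTheory.integral_mul_const]
    have hIg : (∫ x in Set.Ioi (0:ℝ), ‖E x * Complex.exp (((α:ℂ) - ((n:ℂ)+1))*x)‖)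
        ≤ z^2/2 * (2/(((n:ℝ)+1) - α)^3) := by
      have hint := ((integral_piece z (hcre n)).1).norm
      have hbint := (integrableOn_sq_exp (b := ((n:ℝ)+1) - α) hbpos).const_mul (z^2/2)
      calc (∫ x in Set.Ioi (0:ℝ), ‖E x * Complex.exp (((α:ℂ) - ((n:ℂ)+1))*x)‖)
          ≤ ∫ x in Set.Ioi (0:ℝ), z^2/2 * (x^2 * Real.exp (-((((n:ℝ)+1) - α)*x))) :=
            MeasureTheory.integral_mono hint hbint (fun x => hbound n x)
        _ = z^2/2 * ∫ x in Set.Ioi (0:ℝ), x^2 * Real.exp (-((((n:ℝ)+1) - α)*x)) :=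
            MeasureTheory.integral_const_mul _ _
        _ = z^2/2 * (2/(((n:ℝ)+1) - α)^3) := by rw [integral_sq_exp hbpos]
    have hb3 : ((1-|α|)*((n:ℝ)+1))^3 ≤ (((n:ℝ)+1) - α)^3 := by
      apply pow_le_pow_left₀ (by positivity)
      have h0 : (0:ℝ) ≤ n := n.cast_nonneg
      have h2 : α ≤ |α| := le_abs_self α
      nlinarith [abs_nonneg α]
    calc (∫ x in Set.Ioi (0:ℝ), ‖E x * Complex.exp (((α:ℂ) - ((n:ℂ)+1))*x)‖) * (4*((n:ℝ)+1))
        ≤ (z^2/2 * (2/(((n:ℝ)+1) - α)^3)) * (4*((n:ℝ)+1)) := by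
          apply mul_le_mul_of_nonneg_right hIg (by positivity)
      _ ≤ (z^2/2 * (2/((1-|α|)*((n:ℝ)+1))^3)) * (4*((n:ℝ)+1)) := by
          gcongr
      _ = (4*z^2/(1-|α|)^3) * (1/((n:ℝ)+1)^2) := by
          field_simp
  -- summability
  have hsum_major : Summable (fun n : ℕ => (4*z^2/(1-|α|)^3) * (1/((n:ℝ)+1)^2)) := by
    apply Summable.mul_left
    have h1 : Summable (fun n : ℕ => 1/((n:ℝ))^2) :=
      Real.summable_one_div_nat_pow.mpr one_lt_two
    have h2 := (summable_nat_add_iff 1).mpr h1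
    convert h2 using 2 with n
    · rfl
    push_cast
    ring
  have hsummable : Summable (fun n : ℕ => ∫ x in Set.Ioi (0:ℝ), ‖f n x‖) := by
    apply Summable.of_nonneg_of_le
      (fun n => MeasureTheory.integral_nonneg (fun x => norm_nonneg _)) hnorm hsum_major
  -- swap sum and integral
  have swap := MeasureTheory.integral_tsum_of_summable_integral_norm hf_int hsummable
  -- pointwise identification
  have hpt : ∀ x ∈ Set.Ioi (0:ℝ), (∑' n : ℕ, f n x)
      = E x * Complex.exp ((α : ℂ) * x) / ((Real.sinh (x / 2) : ℂ)) ^ 2 := by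
    intro x hx
    have hx' : (0:ℝ) < x := hx
    have hs := (sinh_series hx').mul_left (E x * Complex.exp ((α : ℂ) * x))
    have he : (fun n : ℕ => E x * Complex.exp ((α : ℂ) * x)
        * ((4:ℂ) * ((n:ℂ)+1) * Complex.exp (-((n:ℂ)+1)*x))) = fun n => f n x := by
      funext n
      rw [hf]
      simp only
      rw [show ((α:ℂ) - ((n:ℂ)+1))*x = (α:ℂ)*x + (-((n:ℂ)+1)*x) by ring, Complex.exp_add]
      ring
    rw [he] at hs
    rw [hs.tsum_eq]
    exact (div_eq_mul_inv _ _).symm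
  -- conclude
  have lhs_eq : (∫ x in Set.Ioi (0:ℝ),
      (Complex.exp (Complex.I * z * x) - 1 - Complex.I * z * x) * Complex.exp ((α : ℂ) * x)
        / ((Real.sinh (x / 2) : ℂ)) ^ 2)
      = ∫ x in Set.Ioi (0:ℝ), (∑' n : ℕ, f n x) := by
    apply MeasureTheory.setIntegral_congr_fun measurableSet_Ioi
    intro x hx
    simp only
    exact (hpt x hx).symm
  rw [lhs_eq, ← swap]
  rw [tsum_congr hval, tsum_mul_left]
end

section
/- With Ψ as in the previous context and q > 0, for every integer n ≥ 1 the equation q + Ψ(iζ) = 0 has at least one real solution in the interval (n+α, n+α+1), and for every integer n ≤ −1 at least one real solution in the interval (n+α−1, n+α). -/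
open Real Complex Filter Set Topology

-- sign of sin on (k, k+1)
lemma sin_sign (k : ℤ) {x : ℝ} (hx : x ∈ Set.Ioo (k : ℝ) ((k : ℝ) + 1)) :
    0 < (-1 : ℝ) ^ k * Real.sin (π * x) := by
  have h : π * x = π * (x - k) + k * π := by ring
  rw [h, Real.sin_add_int_mul_pi]
  have h1 : 0 < Real.sin (π * (x - k)) := by
    apply Real.sin_pos_of_pos_of_lt_pi
    · have := hx.1; nlinarith [Real.pi_pos]
    · have := hx.2; nlinarith [Real.pi_pos]
  have h2 : ((-1 : ℝ) ^ k) * ((-1 : ℝ) ^ k) = 1 := by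
    rw [← zpow_add₀ (by norm_num : (-1:ℝ) ≠ 0)]
    refine Even.neg_one_zpow ⟨k, ?_⟩
    ring
  calc (0:ℝ) < 1 * Real.sin (π * (x - k)) := by linarith
    _ = (-1:ℝ)^k * ((-1:ℝ)^k * Real.sin (π * (x - k))) := by rw [← mul_assoc, h2]

lemma D_atTop (α : ℝ) (k : ℤ) {e : ℝ}
    (he : e = (k : ℝ) + α ∨ e = (k : ℝ) + α + 1) :
    Tendsto (fun ζ => ((-1 : ℝ) ^ k * Real.sin (π * (ζ - α)))⁻¹)
      (𝓝[Set.Ioo ((k : ℝ) + α) ((k : ℝ) + α + 1)] e) atTop := by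
  apply Filter.Tendsto.inv_tendsto_nhdsGT_zero
  apply tendsto_nhdsWithin_of_tendsto_nhds_of_eventually_within
  · have hc : Continuous fun ζ : ℝ => (-1 : ℝ) ^ k * Real.sin (π * (ζ - α)) := by
      fun_prop
    have := (hc.tendsto e).mono_left (nhdsWithin_le_nhds
      (s := Set.Ioo ((k : ℝ) + α) ((k : ℝ) + α + 1)))
    convert this using 2
    rcases he with rfl | rfl
    · rw [show π * ((k:ℝ) + α - α) = (k:ℝ) * π by ring, Real.sin_int_mul_pi, mul_zero]
    · rw [show π * ((k:ℝ) + α + 1 - α) = ((k+1 : ℤ):ℝ) * π by push_cast; ring,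
        Real.sin_int_mul_pi, mul_zero]
  · filter_upwards [eventually_mem_nhdsWithin] with x hx
    exact sin_sign k ⟨by linarith [hx.1], by linarith [hx.2]⟩

lemma main_real (σ ρ γ q α : ℝ) (k : ℤ) (hk : 1 ≤ k ∨ k ≤ -2) :
    ∃ ζ ∈ Set.Ioo ((k : ℝ) + α) ((k : ℝ) + α + 1),
      q - σ ^ 2 * ζ ^ 2 / 2 - ρ * ζ
        + 4 * π * (ζ - α) * (Real.cos (π * (ζ - α)) / Real.sin (π * (ζ - α))) - 4 * γ = 0 := by
  set a : ℝ := (k : ℝ) + α with ha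
  set b : ℝ := (k : ℝ) + α + 1 with hb
  have hab : a < b := by rw [ha, hb]; linarith
  set s : Set ℝ := Set.Ioo a b with hs
  set f : ℝ → ℝ := fun ζ => q - σ ^ 2 * ζ ^ 2 / 2 - ρ * ζ
    + 4 * π * (ζ - α) * (Real.cos (π * (ζ - α)) / Real.sin (π * (ζ - α))) - 4 * γ with hf
  -- sin nonzero on s
  have hsin : ∀ ζ ∈ s, Real.sin (π * (ζ - α)) ≠ 0 := by
    intro ζ hζ
    have := sin_sign k (x := ζ - α) ⟨by simpa using by linarith [hζ.1], by linarith [hζ.2]⟩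
    intro h0
    rw [h0, mul_zero] at this
    exact lt_irrefl 0 this
  -- continuity
  have hcont : ContinuousOn f s := by
    apply ContinuousOn.sub
    apply ContinuousOn.add
    · fun_prop
    · exact (continuousOn_const.mul (continuousOn_id.sub continuousOn_const) |>.mul
        (((Real.continuous_cos.comp (continuous_const.mul (continuous_id.sub continuous_const))).continuousOn).div
          ((Real.continuous_sin.comp (continuous_const.mul (continuous_id.sub continuous_const))).continuousOn)
          hsin))
    · fun_prop
  -- f equals (poly) + D⁻¹ * N on s
  set N : ℝ → ℝ := fun ζ => 4 * π * (ζ - α) * Real.cos (π * (ζ - α)) * (-1 : ℝ) ^ k with hN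
  set D : ℝ → ℝ := fun ζ => (-1 : ℝ) ^ k * Real.sin (π * (ζ - α)) with hD
  have hneg1 : ((-1 : ℝ) ^ k) * ((-1 : ℝ) ^ k) = 1 := by
    rw [← zpow_add₀ (by norm_num : (-1:ℝ) ≠ 0)]
    exact Even.neg_one_zpow ⟨k, by ring⟩
  have hEq : ∀ ζ ∈ s, f ζ = (q - σ ^ 2 * ζ ^ 2 / 2 - ρ * ζ - 4 * γ) + (D ζ)⁻¹ * N ζ := by
    intro ζ hζ
    have h0 := hsin ζ hζ
    rw [hf, hD, hN]
    field_simp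
    ring
  -- tendsto of poly part
  have hpoly : ∀ e : ℝ, Tendsto (fun ζ => q - σ ^ 2 * ζ ^ 2 / 2 - ρ * ζ - 4 * γ) (𝓝[s] e)
      (𝓝 (q - σ ^ 2 * e ^ 2 / 2 - ρ * e - 4 * γ)) := fun e =>
    ((by fun_prop : Continuous fun ζ : ℝ => q - σ ^ 2 * ζ ^ 2 / 2 - ρ * ζ - 4 * γ).tendsto e).mono_left
      nhdsWithin_le_nhds
  -- N limits
  have hNa : Tendsto N (𝓝[s] a) (𝓝 (4 * π * k)) := by
    have := ((by fun_prop : Continuous N).tendsto a).mono_left (nhdsWithin_le_nhds (s := s))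
    convert this using 2
    rw [hN]
    simp only
    rw [show π * (a - α) = 0 + (k:ℝ) * π by rw [ha]; ring, Real.cos_add_int_mul_pi,
      Real.cos_zero, ha]
    linear_combination (-(4 * π * (k:ℝ))) * hneg1
  have hNb : Tendsto N (𝓝[s] b) (𝓝 (-(4 * π * (k + 1)))) := by
    have := ((by fun_prop : Continuous N).tendsto b).mono_left (nhdsWithin_le_nhds (s := s))
    convert this using 2
    rw [hN]
    simp only
    rw [show π * (b - α) = 0 + ((k+1:ℤ):ℝ) * π by rw [hb]; push_cast; ring,
      Real.cos_add_int_mul_pi, Real.cos_zero]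
    rw [zpow_add₀ (by norm_num : (-1:ℝ) ≠ 0), zpow_one, hb]
    push_cast
    linear_combination (4 * π * ((k:ℝ)+1)) * hneg1
  have hDa := D_atTop α k (Or.inl ha)
  have hDb := D_atTop α k (Or.inr hb)
  -- combine, case on k sign
  have hpik : ∀ m : ℤ, 0 < m → (0:ℝ) < 4 * π * m := by
    intro m hm
    have : (1:ℝ) ≤ m := by exact_mod_cast hm
    nlinarith [Real.pi_pos]
  have hEq' : ∀ e : ℝ, (fun ζ => (q - σ ^ 2 * ζ ^ 2 / 2 - ρ * ζ - 4 * γ) + (D ζ)⁻¹ * N ζ)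
      =ᶠ[𝓝[s] e] f := by
    intro e
    filter_upwards [eventually_mem_nhdsWithin] with x hx
    exact (hEq x hx).symm
  haveI hna := left_nhdsWithin_Ioo_neBot hab
  haveI hnb := right_nhdsWithin_Ioo_neBot hab
  have final : ∀ u v : ℝ, Tendsto f (𝓝[s] u) atTop → Tendsto f (𝓝[s] v) atBot →
      (𝓝[s] u).NeBot → (𝓝[s] v).NeBot → ∃ ζ ∈ s, f ζ = 0 := by
    intro u v hu hv hnu hnv
    obtain ⟨p, hp0, hps⟩ :=
      ((hu.eventually (eventually_gt_atTop 0)).and eventually_mem_nhdsWithin).exists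
    obtain ⟨p', hp'0, hp's⟩ :=
      ((hv.eventually (eventually_lt_atBot 0)).and eventually_mem_nhdsWithin).exists
    rcases le_total p p' with h | h
    · have hsub : Set.Icc p p' ⊆ s := Set.Icc_subset_Ioo hps.1 hp's.2
      obtain ⟨ζ, hζ, hfζ⟩ := intermediate_value_Icc' h (hcont.mono hsub) ⟨hp'0.le, hp0.le⟩
      exact ⟨ζ, hsub hζ, hfζ⟩
    · have hsub : Set.Icc p' p ⊆ s := Set.Icc_subset_Ioo hp's.1 hps.2
      obtain ⟨ζ, hζ, hfζ⟩ := intermediate_value_Icc h (hcont.mono hsub) ⟨hp'0.le, hp0.le⟩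
      exact ⟨ζ, hsub hζ, hfζ⟩
  rcases hk with hk1 | hk2
  · have h1 : (0:ℝ) < 4 * π * k := hpik k (by omega)
    have hfa : Tendsto f (𝓝[s] a) atTop :=
      Filter.Tendsto.congr' (hEq' a) ((hpoly a).add_atTop (hDa.atTop_mul_pos h1 hNa))
    have h2 : -(4 * π * ((k:ℝ) + 1)) < 0 := by
      have := hpik (k + 1) (by omega)
      push_cast at this ⊢
      linarith
    have hfb : Tendsto f (𝓝[s] b) atBot :=
      Filter.Tendsto.congr' (hEq' b) ((hpoly b).add_atBot (hDb.atTop_mul_neg h2 hNb))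
    exact final a b hfa hfb hna hnb
  · have h1 : 4 * π * (k:ℝ) < 0 := by
      have := hpik (-k) (by omega)
      push_cast at this
      linarith
    have hfa : Tendsto f (𝓝[s] a) atBot :=
      Filter.Tendsto.congr' (hEq' a) ((hpoly a).add_atBot (hDa.atTop_mul_neg h1 hNa))
    have h2 : (0:ℝ) < -(4 * π * ((k:ℝ) + 1)) := by
      have := hpik (-(k+1)) (by omega)
      push_cast at this
      linarith
    have hfb : Tendsto f (𝓝[s] b) atTop :=
      Filter.Tendsto.congr' (hEq' b) ((hpoly b).add_atTop (hDb.atTop_mul_pos h2 hNb))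
    exact final b a hfb hfa hnb hna


lemma ofReal_reduce (σ ρ γ q α ζ : ℝ) :
    (q : ℂ) + ((σ : ℂ) ^ 2 * (Complex.I * ζ) ^ 2 / 2 + Complex.I * ρ * (Complex.I * ζ)
      + 4 * π * (Complex.I * ζ - Complex.I * α)
          * (Complex.cosh ((π : ℂ) * (Complex.I * ζ - Complex.I * α))
              / Complex.sinh ((π : ℂ) * (Complex.I * ζ - Complex.I * α)))
      - 4 * γ)
    = ((q - σ ^ 2 * ζ ^ 2 / 2 - ρ * ζ
        + 4 * π * (ζ - α) * (Real.cos (π * (ζ - α)) / Real.sin (π * (ζ - α))) - 4 * γ : ℝ) : ℂ) := by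
  have h1 : Complex.I * (ζ : ℂ) - Complex.I * α = ((ζ - α : ℝ) : ℂ) * Complex.I := by
    push_cast; ring
  have h2 : (π : ℂ) * (((ζ - α : ℝ) : ℂ) * Complex.I) = ((π * (ζ - α) : ℝ) : ℂ) * Complex.I := by
    push_cast; ring
  rw [h1, h2, Complex.cosh_mul_I, Complex.sinh_mul_I, ← Complex.ofReal_cos, ← Complex.ofReal_sin]
  push_cast
  have hkey : ∀ a w c s : ℂ, a * (w * Complex.I) * (c / (s * Complex.I)) = a * w * (c / s) := by
    intro a w c s
    rw [div_eq_mul_inv, div_eq_mul_inv, mul_inv, Complex.inv_I]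
    ring_nf
    rw [Complex.I_sq]
    ring
  rw [hkey]
  ring_nf
  rw [Complex.I_sq]
  ring

/-- For `Ψ` as before and `q > 0`: for every integer `n ≥ 1` the equation
`q + Ψ(iζ) = 0` has at least one real solution in `(n+α, n+α+1)`, and for every
integer `n ≤ -1` at least one in `(n+α-1, n+α)`. -/
theorem stmt9 (σ μ α : ℝ) (hα0 : 0 < |α|) (hα1 : |α| < 1) (q : ℝ) (hq : 0 < q)
    (γ ρ : ℝ) (hγ : γ = π * α * Real.cos (π * α) / Real.sin (π * α))
    (hρ : ρ = 4 * π ^ 2 * α + 4 * γ * (γ - 1) / α - μ)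
    (Ψ : ℂ → ℂ)
    (hΨ : ∀ z : ℂ, Ψ z = (σ : ℂ) ^ 2 * z ^ 2 / 2 + Complex.I * ρ * z
      + 4 * π * (z - Complex.I * α)
          * (Complex.cosh ((π : ℂ) * (z - Complex.I * α))
              / Complex.sinh ((π : ℂ) * (z - Complex.I * α)))
      - 4 * γ) :
    ∀ n : ℤ,
      (1 ≤ n → ∃ ζ : ℝ, ζ ∈ Set.Ioo ((n : ℝ) + α) ((n : ℝ) + α + 1) ∧
        (q : ℂ) + Ψ (Complex.I * ζ) = 0) ∧
      (n ≤ -1 → ∃ ζ : ℝ, ζ ∈ Set.Ioo ((n : ℝ) + α - 1) ((n : ℝ) + α) ∧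
        (q : ℂ) + Ψ (Complex.I * ζ) = 0) := by
  intro n
  constructor
  · intro hn
    obtain ⟨ζ, hζ, hf⟩ := main_real σ ρ γ q α n (Or.inl hn)
    refine ⟨ζ, hζ, ?_⟩
    rw [hΨ, ofReal_reduce, hf]
    norm_num
  · intro hn
    obtain ⟨ζ, hζ, hf⟩ := main_real σ ρ γ q α (n - 1) (Or.inr (by omega))
    refine ⟨ζ, ?_, ?_⟩
    · have h1 := hζ.1
      have h2 := hζ.2
      push_cast at h1 h2
      exact ⟨by linarith, by linarith⟩
    · rw [hΨ, ofReal_reduce, hf]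
      norm_num
end

section
/- For real α, β > 0, c ≥ 0 and λ ∈ (0,1), and every real y, ∫₀^∞ (e^{ixy} − 1 − ixy)·e^{−αβx}/(1−e^{−βx})^{λ} dx = (1/β)[ B(α − iy/β, 1−λ) − B(α, 1−λ) ] − (iy/β²)·B(α,1−λ)·(ψ(1+α−λ) − ψ(α)), where B is the Beta function and ψ the digamma function. -/
open Real Complex

/-- The Beta function `B(x,y) = Γ(x)Γ(y)/Γ(x+y)`. -/
noncomputable def cBeta (x y : ℂ) : ℂ := Complex.Gamma x * Complex.Gamma y / Complex.Gamma (x + y)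

/-- The digamma function `ψ = Γ'/Γ`. -/
noncomputable def digamma (x : ℂ) : ℂ := deriv Complex.Gamma x / Complex.Gamma x

open MeasureTheory Set intervalIntegral
open scoped Interval

namespace Stmt11Aux

lemma exp_neg_hasDerivAt (β x : ℝ) :
    HasDerivAt (fun x => Real.exp (-(β * x))) (-β * Real.exp (-(β * x))) x := by
  have h : HasDerivAt (fun x : ℝ => -(β * x)) (-β) x := by
    simpa using (hasDerivAt_id x).const_mul (-β)
  simpa [mul_comm] using h.exp

lemma himg {β : ℝ} (hβ : 0 < β) :
    (fun x => Real.exp (-(β * x))) '' Set.Ioi (0:ℝ) = Set.Ioo 0 1 := by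
  ext u
  constructor
  · rintro ⟨x, hx, rfl⟩
    exact ⟨Real.exp_pos _, by
      rw [Real.exp_lt_one_iff]
      have : 0 < β * x := mul_pos hβ hx
      linarith⟩
  · rintro ⟨h0, h1⟩
    refine ⟨-Real.log u / β, ?_, ?_⟩
    · have : Real.log u < 0 := Real.log_neg h0 h1
      exact div_pos (by linarith) hβ
    · show Real.exp (-(β * (-Real.log u / β))) = u
      rw [show -(β * (-Real.log u / β)) = Real.log u by field_simp]
      exact Real.exp_log h0

lemma hinj {β : ℝ} (hβ : 0 < β) :
    Set.InjOn (fun x => Real.exp (-(β * x))) (Set.Ioi (0:ℝ)) := by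
  intro a _ b _ hab
  exact mul_left_cancel₀ hβ.ne' (neg_injective (Real.exp_injective hab))

lemma sub_master {β : ℝ} (hβ : 0 < β) (g : ℝ → ℂ) :
    ∫ u in Set.Ioo (0:ℝ) 1, g u
      = ∫ x in Set.Ioi (0:ℝ), (β * Real.exp (-(β * x))) • g (Real.exp (-(β * x))) := by
  have hderiv : ∀ x ∈ Set.Ioi (0:ℝ), HasDerivWithinAt (fun x => Real.exp (-(β * x)))
      (-β * Real.exp (-(β * x))) (Set.Ioi (0:ℝ)) x :=
    fun x _ => (exp_neg_hasDerivAt β x).hasDerivWithinAt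
  rw [← himg hβ, integral_image_eq_integral_abs_deriv_smul measurableSet_Ioi hderiv (hinj hβ)]
  refine setIntegral_congr_fun measurableSet_Ioi (fun x hx => ?_)
  simp only [abs_mul, abs_neg, abs_of_pos hβ, abs_of_pos (Real.exp_pos _)]

lemma sub_master_integrable {β : ℝ} (hβ : 0 < β) (g : ℝ → ℂ)
    (hg : IntegrableOn g (Set.Ioo (0:ℝ) 1)) :
    IntegrableOn (fun x => (β * Real.exp (-(β * x))) • g (Real.exp (-(β * x))))
      (Set.Ioi (0:ℝ)) := by
  have hderiv : ∀ x ∈ Set.Ioi (0:ℝ), HasDerivWithinAt (fun x => Real.exp (-(β * x)))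
      (-β * Real.exp (-(β * x))) (Set.Ioi (0:ℝ)) x :=
    fun x _ => (exp_neg_hasDerivAt β x).hasDerivWithinAt
  rw [← himg hβ] at hg
  have := (integrableOn_image_iff_integrableOn_abs_deriv_smul measurableSet_Ioi hderiv
    (hinj hβ) g).mp hg
  refine this.congr_fun (fun x hx => ?_) measurableSet_Ioi
  simp only [abs_mul, abs_neg, abs_of_pos hβ, abs_of_pos (Real.exp_pos _)]

lemma cpow_exp_eq {β : ℝ} (x : ℝ) (hβ : β ≠ 0) (w : ℂ) :
    ((Real.exp (-(β * x)) : ℝ) : ℂ) ^ (w / β) = Complex.exp (-(w * x)) := by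
  rw [Complex.cpow_def_of_ne_zero (by exact_mod_cast (Real.exp_pos _).ne')]
  rw [← Complex.ofReal_log (Real.exp_pos _).le, Real.log_exp]
  congr 1
  have hβ' : (β : ℂ) ≠ 0 := by exact_mod_cast hβ
  push_cast
  field_simp

lemma one_sub_cpow_eq {u lam : ℝ} (h0 : 0 < u) (h1 : u < 1) :
    (1 - (u : ℂ)) ^ (((1 : ℂ) - lam) - 1) = ((((1 - u) ^ lam : ℝ)) : ℂ)⁻¹ := by
  have h : (1 : ℂ) - lam - 1 = ((-lam : ℝ) : ℂ) := by push_cast; ring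
  have h2 : (1 - (u : ℂ)) = (((1 - u : ℝ)) : ℂ) := by push_cast; ring
  rw [h, h2, ← Complex.ofReal_cpow (by linarith), Real.rpow_neg (by linarith), Complex.ofReal_inv]

lemma L1 {β lam : ℝ} (hβ : 0 < β) (w : ℂ) :
    ∫ x in Set.Ioi (0:ℝ), Complex.exp (-(w * x)) / (((1 - Real.exp (-(β * x))) ^ lam : ℝ) : ℂ)
      = (1 / β) * Complex.betaIntegral (w / β) (1 - lam) := by
  have key := sub_master hβ (fun u => (u : ℂ) ^ (w / β - 1) * (1 - (u : ℂ)) ^ (((1 : ℂ) - lam) - 1))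
  rw [Complex.betaIntegral, intervalIntegral.integral_of_le zero_le_one,
    MeasureTheory.integral_Ioc_eq_integral_Ioo, key, ← MeasureTheory.integral_const_mul]
  refine (setIntegral_congr_fun measurableSet_Ioi (fun x hx => ?_)).symm
  have hβ' : (β : ℂ) ≠ 0 := by exact_mod_cast hβ.ne'
  set u := Real.exp (-(β * x)) with hu
  have h0 : 0 < u := Real.exp_pos _
  have h1 : u < 1 := by
    rw [hu, Real.exp_lt_one_iff]
    have : 0 < β * x := mul_pos hβ hx
    linarith
  rw [Complex.real_smul, one_sub_cpow_eq h0 h1]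
  have hcpow : ((u : ℝ) : ℂ) ^ (w / β) = Complex.exp (-(w * x)) := cpow_exp_eq x hβ.ne' w
  have hu0 : ((u : ℝ) : ℂ) ≠ 0 := by exact_mod_cast h0.ne'
  have heq : ((u : ℝ) : ℂ) ^ (w / β - 1) = Complex.exp (-(w * x)) / u := by
    rw [Complex.cpow_sub _ _ hu0, hcpow, Complex.cpow_one]
  push_cast
  rw [heq]
  have hC : ((((1 - u) ^ lam : ℝ)) : ℂ) ≠ 0 := by
    exact_mod_cast (Real.rpow_pos_of_pos (by linarith) lam).ne'
  field_simp [hu0, hβ', hC]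

lemma int1 {β lam : ℝ} (hβ : 0 < β) (hlam : lam ∈ Set.Ioo (0:ℝ) 1) (w : ℂ)
    (hw : 0 < (w / β).re) :
    IntegrableOn (fun x : ℝ => Complex.exp (-(w * x))
      / (((1 - Real.exp (-(β * x))) ^ lam : ℝ) : ℂ)) (Set.Ioi (0:ℝ)) := by
  have hv : 0 < ((1:ℂ) - lam).re := by
    simp only [Complex.sub_re, Complex.one_re, Complex.ofReal_re]
    linarith [hlam.2]
  have hβ' : (β : ℂ) ≠ 0 := by exact_mod_cast hβ.ne'
  have hg : IntegrableOn
      (fun u : ℝ => (1/(β:ℂ)) * ((u : ℂ) ^ (w / β - 1) * (1 - (u : ℂ)) ^ (((1 : ℂ) - lam) - 1)))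
      (Set.Ioo (0:ℝ) 1) := by
    have h := (Complex.betaIntegral_convergent hw hv).def'
    rw [uIoc_of_le (by norm_num : (0:ℝ) ≤ 1)] at h
    exact (h.mono_set Set.Ioo_subset_Ioc_self).const_mul _
  have := sub_master_integrable hβ _ hg
  refine this.congr_fun (fun x hx => ?_) measurableSet_Ioi
  beta_reduce
  set u := Real.exp (-(β * x)) with hu
  have h0 : 0 < u := Real.exp_pos _
  have h1 : u < 1 := by
    rw [hu, Real.exp_lt_one_iff]
    have : 0 < β * x := mul_pos hβ hx
    linarith
  rw [Complex.real_smul, one_sub_cpow_eq h0 h1]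
  have hcpow : ((u : ℝ) : ℂ) ^ (w / β) = Complex.exp (-(w * x)) := cpow_exp_eq x hβ.ne' w
  have hu0 : ((u : ℝ) : ℂ) ≠ 0 := by exact_mod_cast h0.ne'
  have heq : ((u : ℝ) : ℂ) ^ (w / β - 1) = Complex.exp (-(w * x)) / u := by
    rw [Complex.cpow_sub _ _ hu0, hcpow, Complex.cpow_one]
  push_cast
  rw [heq]
  have hC : ((((1 - u) ^ lam : ℝ)) : ℂ) ≠ 0 := by
    exact_mod_cast (Real.rpow_pos_of_pos (by linarith) lam).ne'
  field_simp [hu0, hβ', hC]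

lemma log_bound {δ u : ℝ} (hδ : 0 < δ) (h0 : 0 < u) (h1 : u ≤ 1) :
    |Real.log u| ≤ (1/δ) * u ^ (-δ) := by
  rw [abs_of_nonpos (Real.log_nonpos h0.le h1)]
  have h2 : Real.log (u ^ (-δ)) ≤ u ^ (-δ) - 1 :=
    Real.log_le_sub_one_of_pos (Real.rpow_pos_of_pos h0 _)
  rw [Real.log_rpow h0] at h2
  have h3 : (0:ℝ) < u ^ (-δ) := Real.rpow_pos_of_pos h0 _
  have h4 := mul_le_mul_of_nonneg_left h2 (le_of_lt (one_div_pos.mpr hδ))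
  have h5 : (1/δ) * (-δ * Real.log u) = -Real.log u := by field_simp
  have h6 : (1/δ) * (u ^ (-δ) - 1) ≤ (1/δ) * u ^ (-δ) :=
    mul_le_mul_of_nonneg_left (by linarith) (le_of_lt (one_div_pos.mpr hδ))
  linarith

lemma L3 {α lam : ℝ} (hα : 0 < α) (hlam : lam ∈ Set.Ioo (0:ℝ) 1) :
    HasDerivAt (fun s : ℂ => Complex.betaIntegral s (1 - lam))
        (∫ u in (0:ℝ)..1, Complex.log u * (u:ℂ) ^ ((α:ℂ) - 1) * (1 - (u:ℂ)) ^ (((1:ℂ) - lam) - 1))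
        (α:ℂ)
    ∧ IntervalIntegrable
        (fun u : ℝ => Complex.log u * (u:ℂ) ^ ((α:ℂ) - 1) * (1 - (u:ℂ)) ^ (((1:ℂ) - lam) - 1))
        volume 0 1 := by
  obtain ⟨hlam0, hlam1⟩ := hlam
  have hv : 0 < ((1:ℂ) - lam).re := by simp [Complex.sub_re]; linarith
  set v : ℂ := (1:ℂ) - lam with hvdef
  set F : ℂ → ℝ → ℂ := fun s u => (u:ℂ) ^ (s - 1) * (1 - (u:ℂ)) ^ (v - 1) with hF
  set F' : ℂ → ℝ → ℂ := fun s u => Complex.log u * (u:ℂ) ^ (s - 1) * (1 - (u:ℂ)) ^ (v - 1) with hF'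
  set bound : ℝ → ℝ := fun u => (4/α) * (u ^ (α/4 - 1) * (1 - u) ^ (-lam)) with hbound
  have hmeasF : ∀ s : ℂ, 0 < s.re → AEStronglyMeasurable (F s) (volume.restrict (Ι (0:ℝ) 1)) := by
    intro s hs
    exact ((Complex.betaIntegral_convergent hs hv).def').aestronglyMeasurable
  have hαre : 0 < ((α:ℂ)).re := by simpa using hα
  have hvne : v - 1 ≠ 0 := by
    intro h
    have := congrArg Complex.re h
    simp [hvdef, Complex.sub_re] at this
    linarith
  have happ := intervalIntegral.hasDerivAt_integral_of_dominated_loc_of_deriv_le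
    (F := F) (F' := F') (x₀ := (α:ℂ)) (a := (0:ℝ)) (b := 1) (μ := volume)
    (bound := bound) (s := Metric.ball (α:ℂ) (α/2)) (Metric.ball_mem_nhds _ (by positivity))
    ?_ ?_ ?_ ?_ ?_ ?_
  · exact ⟨happ.2, happ.1⟩
  · -- hF_meas
    have hopen : ∀ᶠ s : ℂ in nhds (α:ℂ), 0 < s.re :=
      (isOpen_lt continuous_const Complex.continuous_re).eventually_mem hαre
    exact hopen.mono fun s hs => hmeasF s hs
  · exact Complex.betaIntegral_convergent hαre hv
  · -- hF'_meas
    have h1 : AEStronglyMeasurable (fun u : ℝ => Complex.log (u:ℂ))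
        (volume.restrict (Ι (0:ℝ) 1)) :=
      (Complex.measurable_log.comp Complex.measurable_ofReal).aestronglyMeasurable
    exact (h1.mul (hmeasF (α:ℂ) hαre)).congr
      (Filter.Eventually.of_forall fun u => (mul_assoc _ _ _).symm)
  · -- h_bound
    refine Filter.Eventually.of_forall fun u hu => ?_
    rw [uIoc_of_le (by norm_num : (0:ℝ) ≤ 1)] at hu
    intro s hs
    rcases eq_or_lt_of_le hu.2 with h1 | h1
    · -- u = 1
      have : (1 : ℝ) - u = 0 := by linarith
      simp only [hF', hbound, h1]
      rw [show (1 : ℂ) - ((1:ℝ):ℂ) = 0 by norm_num, Complex.zero_cpow hvne]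
      simp [Real.zero_rpow (by linarith : -lam ≠ 0)]
    · -- u < 1
      have h0 : 0 < u := hu.1
      have h1u : 0 < 1 - u := by linarith
      have hre : α/2 < s.re := by
        have hle := Complex.abs_re_le_norm (s - (α:ℂ))
        have hb : ‖s - α‖ < α/2 := by
          simpa [Complex.dist_eq] using hs
        have habs : |(s - (α:ℂ)).re| < α/2 := lt_of_le_of_lt hle hb
        have := abs_lt.mp habs
        simp [Complex.sub_re] at this
        linarith [this.1]
      have hnorm : ‖F' s u‖
          = |Real.log u| * (u ^ (s.re - 1) * (1 - u) ^ (-lam)) := by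
        simp only [hF']
        rw [norm_mul, norm_mul]
        rw [← Complex.ofReal_log h0.le]
        rw [Complex.norm_real, Real.norm_eq_abs]
        rw [Complex.norm_cpow_eq_rpow_re_of_pos h0]
        rw [show (1 : ℂ) - (u:ℝ) = ((1 - u : ℝ):ℂ) by push_cast; ring]
        rw [Complex.norm_cpow_eq_rpow_re_of_pos h1u]
        have : (v - 1).re = -lam := by simp [hvdef, Complex.sub_re]
        rw [this, Complex.sub_re, Complex.one_re]
        ring
      rw [hnorm, hbound]
      have hlog : |Real.log u| ≤ (4/α) * u ^ (-(α/4)) := by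
        have := log_bound (show 0 < α/4 by positivity) h0 hu.2
        rw [show (1:ℝ)/(α/4) = 4/α by field_simp] at this
        convert this using 3
      have hmono : u ^ (s.re - 1) ≤ u ^ (α/2 - 1) :=
        Real.rpow_le_rpow_of_exponent_ge h0 hu.2 (by linarith)
      have hC : (0:ℝ) ≤ (1 - u) ^ (-lam) := Real.rpow_nonneg h1u.le _
      calc |Real.log u| * (u ^ (s.re - 1) * (1 - u) ^ (-lam))
          ≤ ((4/α) * u ^ (-(α/4))) * (u ^ (α/2 - 1) * (1 - u) ^ (-lam)) := by
            apply mul_le_mul hlog (mul_le_mul hmono le_rfl hC (Real.rpow_nonneg h0.le _))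
              (mul_nonneg (Real.rpow_nonneg h0.le _) hC)
              (by positivity)
        _ = (4/α) * (u ^ (α/4 - 1) * (1 - u) ^ (-lam)) := by
            rw [show u ^ (α/4 - 1) = u ^ (-(α/4)) * u ^ (α/2 - 1) by
              rw [← Real.rpow_add h0]; ring_nf]
            ring
  · -- bound_integrable
    have hre4 : 0 < ((α/4 : ℝ):ℂ).re := by simpa using (by positivity : (0:ℝ) < α/4)
    have base := (Complex.betaIntegral_convergent hre4 hv).norm.const_mul (4/α)
    apply base.congr
    intro u hu
    rw [uIoc_of_le (by norm_num : (0:ℝ) ≤ 1)] at hu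
    have h0 : 0 < u := hu.1
    simp only [hbound]
    rcases eq_or_lt_of_le hu.2 with h1 | h1
    · rw [show (1 : ℂ) - (u:ℝ) = ((1 - u : ℝ):ℂ) by push_cast; ring]
      rw [← h1]
      norm_num
      rw [Complex.zero_cpow hvne, Real.zero_rpow (by linarith : -lam ≠ 0)]
      simp
    · have h1u : 0 < 1 - u := by linarith
      rw [norm_mul,
        Complex.norm_cpow_eq_rpow_re_of_pos h0,
        show (1 : ℂ) - (u:ℝ) = ((1 - u : ℝ):ℂ) by push_cast; ring,
        Complex.norm_cpow_eq_rpow_re_of_pos h1u]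
      have e1 : (((α/4 : ℝ):ℂ) - 1).re = α/4 - 1 := by simp [Complex.sub_re]
      have e2 : (v - 1).re = -lam := by simp [hvdef, Complex.sub_re]
      rw [e1, e2]
  · -- h_diff
    refine Filter.Eventually.of_forall fun u hu => ?_
    rw [uIoc_of_le (by norm_num : (0:ℝ) ≤ 1)] at hu
    intro s _hs
    rcases eq_or_lt_of_le hu.2 with h1 | h1
    · -- u = 1
      have hFzero : (fun z : ℂ => F z u) = fun _ => (0:ℂ) := by
        funext z
        simp only [hF, h1]
        rw [show (1 : ℂ) - ((1:ℝ):ℂ) = 0 by norm_num, Complex.zero_cpow hvne, mul_zero]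
      have hF'zero : F' s u = 0 := by
        simp only [hF', h1]
        rw [show (1 : ℂ) - ((1:ℝ):ℂ) = 0 by norm_num, Complex.zero_cpow hvne, mul_zero]
      rw [hFzero, hF'zero]
      exact hasDerivAt_const s 0
    · have h0 : 0 < u := hu.1
      have hu0 : ((u:ℝ):ℂ) ≠ 0 := by exact_mod_cast h0.ne'
      set L := Complex.log ((u:ℝ):ℂ) with hL
      set C := (1 - ((u:ℝ):ℂ)) ^ (v - 1) with hCs
      have key : ∀ z : ℂ, ((u:ℝ):ℂ) ^ (z - 1) = Complex.exp (L * (z - 1)) :=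
        fun z => Complex.cpow_def_of_ne_zero hu0 _
      have hd1 : HasDerivAt (fun z : ℂ => L * (z - 1)) L s := by
        simpa using (((hasDerivAt_id s).sub_const (1:ℂ)).const_mul L)
      have hd3 := (hd1.cexp).mul_const C
      have hgoal : (fun z : ℂ => F z u) = fun z => Complex.exp (L * (z - 1)) * C := by
        funext z; simp only [hF, key, hCs]
      rw [hgoal]
      have : F' s u = Complex.exp (L * (s - 1)) * L * C := by
        simp only [hF', key]; ring
      rw [this]
      convert hd3 using 1

lemma L4 {α lam : ℝ} (hα : 0 < α) (hlam : lam ∈ Set.Ioo (0:ℝ) 1) :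
    ∫ u in (0:ℝ)..1, Complex.log u * (u:ℂ) ^ ((α:ℂ) - 1) * (1 - (u:ℂ)) ^ (((1:ℂ) - lam) - 1)
      = cBeta (α:ℂ) (1 - lam)
        * (_root_.digamma (α:ℂ) - _root_.digamma ((α:ℂ) + (1 - lam))) := by
  obtain ⟨hlam0, hlam1⟩ := hlam
  set v : ℂ := (1:ℂ) - lam with hvdef
  have hvre : 0 < v.re := by simp [hvdef, Complex.sub_re]; linarith
  have hαre : 0 < ((α:ℂ)).re := by simpa using hα
  have hαvre : 0 < ((α:ℂ) + v).re := by
    simp [Complex.add_re]; positivity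
  have hΓα : Complex.Gamma (α:ℂ) ≠ 0 := Complex.Gamma_ne_zero_of_re_pos hαre
  have hΓαv : Complex.Gamma ((α:ℂ) + v) ≠ 0 := Complex.Gamma_ne_zero_of_re_pos hαvre
  have hne : ∀ m : ℕ, (α:ℂ) ≠ -m := by
    intro m h
    have := congrArg Complex.re h
    simp at this
    nlinarith [Nat.cast_nonneg (α := ℝ) m]
  have hne' : ∀ m : ℕ, (α:ℂ) + v ≠ -m := by
    intro m h
    have := congrArg Complex.re h
    simp [Complex.add_re, hvdef] at this
    nlinarith [Nat.cast_nonneg (α := ℝ) m]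
  have hGα : HasDerivAt Complex.Gamma (deriv Complex.Gamma (α:ℂ)) (α:ℂ) :=
    (Complex.differentiableAt_Gamma _ hne).hasDerivAt
  have hGαv : HasDerivAt (fun s : ℂ => Complex.Gamma (s + v)) (deriv Complex.Gamma ((α:ℂ) + v))
      (α:ℂ) := by
    have h := (Complex.differentiableAt_Gamma _ hne').hasDerivAt
    simpa [Function.comp_def] using h.comp (α:ℂ) ((hasDerivAt_id (α:ℂ)).add_const v)
  have hBd : HasDerivAt (fun s : ℂ => cBeta s v)
      ((deriv Complex.Gamma (α:ℂ) * Complex.Gamma v * Complex.Gamma ((α:ℂ) + v)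
         - Complex.Gamma (α:ℂ) * Complex.Gamma v * deriv Complex.Gamma ((α:ℂ) + v))
        / Complex.Gamma ((α:ℂ) + v) ^ 2) (α:ℂ) :=
    (hGα.mul_const (Complex.Gamma v)).div hGαv hΓαv
  have heq : (fun s : ℂ => Complex.betaIntegral s v) =ᶠ[nhds (α:ℂ)] (fun s : ℂ => cBeta s v) := by
    have hopen : ∀ᶠ s : ℂ in nhds (α:ℂ), 0 < s.re :=
      (isOpen_lt continuous_const Complex.continuous_re).eventually_mem hαre
    refine hopen.mono fun s hs => ?_
    have h := Complex.Gamma_mul_Gamma_eq_betaIntegral hs hvre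
    have hsv : Complex.Gamma (s + v) ≠ 0 :=
      Complex.Gamma_ne_zero_of_re_pos (by simp [Complex.add_re]; positivity)
    simp only [cBeta]
    rw [eq_div_iff hsv, h]
    ring
  have hBd' : HasDerivAt (fun s : ℂ => Complex.betaIntegral s v)
      ((deriv Complex.Gamma (α:ℂ) * Complex.Gamma v * Complex.Gamma ((α:ℂ) + v)
         - Complex.Gamma (α:ℂ) * Complex.Gamma v * deriv Complex.Gamma ((α:ℂ) + v))
        / Complex.Gamma ((α:ℂ) + v) ^ 2) (α:ℂ) := hBd.congr_of_eventuallyEq heq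
  have huniq := (L3 hα ⟨hlam0, hlam1⟩).1.unique hBd'
  rw [huniq]
  simp only [cBeta, _root_.digamma]
  field_simp

lemma beta_eq_cBeta {u v : ℂ} (hu : 0 < u.re) (hv : 0 < v.re) :
    Complex.betaIntegral u v = cBeta u v := by
  have h := Complex.Gamma_mul_Gamma_eq_betaIntegral hu hv
  have hsv : Complex.Gamma (u + v) ≠ 0 :=
    Complex.Gamma_ne_zero_of_re_pos (by simp [Complex.add_re]; positivity)
  simp only [cBeta]
  rw [eq_div_iff hsv, h]
  ring

lemma L2 {β lam : ℝ} (α : ℝ) (hα : 0 < α) (hβ : 0 < β) (hlam : lam ∈ Set.Ioo (0:ℝ) 1) :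
    ∫ x in Set.Ioi (0:ℝ), (x:ℂ) * Complex.exp (-((α:ℂ) * β * x))
        / (((1 - Real.exp (-(β * x))) ^ lam : ℝ) : ℂ)
      = -(1/(β:ℂ)^2)
        * ∫ u in (0:ℝ)..1, Complex.log u * (u:ℂ) ^ ((α:ℂ) - 1)
            * (1 - (u:ℂ)) ^ (((1:ℂ) - lam) - 1) := by
  have hβ' : (β : ℂ) ≠ 0 := by exact_mod_cast hβ.ne'
  set g : ℝ → ℂ := fun u => (-(Real.log u) : ℂ) * (u:ℂ) ^ ((α:ℂ) - 1)
    * (1 - (u:ℂ)) ^ (((1:ℂ) - lam) - 1) with hg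
  have key := sub_master hβ g
  have h2 : ∫ x in Set.Ioi (0:ℝ), (β * Real.exp (-(β * x))) • g (Real.exp (-(β * x)))
      = ∫ x in Set.Ioi (0:ℝ), ((β:ℂ)^2) * ((x:ℂ) * Complex.exp (-((α:ℂ) * β * x))
        / (((1 - Real.exp (-(β * x))) ^ lam : ℝ) : ℂ)) := by
    refine setIntegral_congr_fun measurableSet_Ioi (fun x hx => ?_)
    set u := Real.exp (-(β * x)) with hu
    have h0 : 0 < u := Real.exp_pos _
    have h1 : u < 1 := by
      rw [hu, Real.exp_lt_one_iff]
      have : 0 < β * x := mul_pos hβ hx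
      linarith
    have hu0 : ((u : ℝ) : ℂ) ≠ 0 := by exact_mod_cast h0.ne'
    have hlogu : Real.log u = -(β * x) := by rw [hu, Real.log_exp]
    have hcpow : ((u : ℝ) : ℂ) ^ ((α:ℂ)) = Complex.exp (-((α:ℂ) * β * x)) := by
      have h := cpow_exp_eq x hβ.ne' ((α:ℂ) * β)
      rw [show ((α:ℂ) * β) / β = (α:ℂ) by field_simp] at h
      rw [h]
    have heq : ((u : ℝ) : ℂ) ^ ((α:ℂ) - 1) = Complex.exp (-((α:ℂ) * β * x)) / u := by
      rw [Complex.cpow_sub _ _ hu0, hcpow, Complex.cpow_one]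
    simp only [hg]
    rw [Complex.real_smul, one_sub_cpow_eq h0 h1, heq, hlogu]
    have hC : ((((1 - u) ^ lam : ℝ)) : ℂ) ≠ 0 := by
      exact_mod_cast (Real.rpow_pos_of_pos (by linarith) lam).ne'
    push_cast
    field_simp [hu0, hβ', hC]
  rw [h2, MeasureTheory.integral_const_mul] at key
  have h3 : ∫ u in (0:ℝ)..1, Complex.log u * (u:ℂ) ^ ((α:ℂ) - 1)
      * (1 - (u:ℂ)) ^ (((1:ℂ) - lam) - 1) = - ∫ u in Set.Ioo (0:ℝ) 1, g u := by
    rw [intervalIntegral.integral_of_le zero_le_one,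
      MeasureTheory.integral_Ioc_eq_integral_Ioo, ← MeasureTheory.integral_neg]
    refine setIntegral_congr_fun measurableSet_Ioo (fun u hu => ?_)
    simp only [hg]
    rw [← Complex.ofReal_log hu.1.le]
    push_cast
    ring
  rw [h3]
  have hβ2 : ((β:ℂ))^2 ≠ 0 := pow_ne_zero _ hβ'
  rw [key, neg_mul_neg, ← mul_assoc, one_div, inv_mul_cancel₀ hβ2, one_mul]

lemma int3 {β lam : ℝ} (α : ℝ) (hα : 0 < α) (hβ : 0 < β) (hlam : lam ∈ Set.Ioo (0:ℝ) 1) :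
    IntegrableOn (fun x : ℝ => (x:ℂ) * Complex.exp (-((α:ℂ) * β * x))
      / (((1 - Real.exp (-(β * x))) ^ lam : ℝ) : ℂ)) (Set.Ioi (0:ℝ)) := by
  have hβ' : (β : ℂ) ≠ 0 := by exact_mod_cast hβ.ne'
  set g : ℝ → ℂ := fun u => (1/(β:ℂ)^2) * ((-(Real.log u) : ℂ) * (u:ℂ) ^ ((α:ℂ) - 1)
    * (1 - (u:ℂ)) ^ (((1:ℂ) - lam) - 1)) with hg
  have hgint : IntegrableOn g (Set.Ioo (0:ℝ) 1) := by
    have hJ := (L3 hα hlam).2.def'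
    rw [uIoc_of_le (by norm_num : (0:ℝ) ≤ 1)] at hJ
    have hJ' : IntegrableOn (fun u : ℝ => (1/(β:ℂ)^2) * -(Complex.log u * (u:ℂ) ^ ((α:ℂ) - 1)
        * (1 - (u:ℂ)) ^ (((1:ℂ) - lam) - 1))) (Set.Ioo (0:ℝ) 1) :=
      ((hJ.mono_set Set.Ioo_subset_Ioc_self).neg.const_mul (1/(β:ℂ)^2))
    refine hJ'.congr_fun (fun u hu => ?_) measurableSet_Ioo
    simp only [hg]
    rw [← Complex.ofReal_log hu.1.le]
    push_cast
    ring
  have := sub_master_integrable hβ g hgint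
  refine this.congr_fun (fun x hx => ?_) measurableSet_Ioi
  set u := Real.exp (-(β * x)) with hu
  have h0 : 0 < u := Real.exp_pos _
  have h1 : u < 1 := by
    rw [hu, Real.exp_lt_one_iff]
    have : 0 < β * x := mul_pos hβ hx
    linarith
  have hu0 : ((u : ℝ) : ℂ) ≠ 0 := by exact_mod_cast h0.ne'
  have hlogu : Real.log u = -(β * x) := by rw [hu, Real.log_exp]
  have hcpow : ((u : ℝ) : ℂ) ^ ((α:ℂ)) = Complex.exp (-((α:ℂ) * β * x)) := by
    have h := cpow_exp_eq x hβ.ne' ((α:ℂ) * β)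
    rw [show ((α:ℂ) * β) / β = (α:ℂ) by field_simp] at h
    rw [h]
  have heq : ((u : ℝ) : ℂ) ^ ((α:ℂ) - 1) = Complex.exp (-((α:ℂ) * β * x)) / u := by
    rw [Complex.cpow_sub _ _ hu0, hcpow, Complex.cpow_one]
  simp only [hg]
  rw [Complex.real_smul, one_sub_cpow_eq h0 h1, heq, hlogu]
  have hC : ((((1 - u) ^ lam : ℝ)) : ℂ) ≠ 0 := by
    exact_mod_cast (Real.rpow_pos_of_pos (by linarith) lam).ne'
  push_cast
  field_simp [hu0, hβ', hC]
  rw [hu, Complex.ofReal_exp]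
  push_cast
  ring_nf

end Stmt11Aux

open Stmt11Aux in
/-- For `α, β > 0`, `c ≥ 0`, `λ ∈ (0,1)` and real `y`,
`∫₀^∞ (e^{ixy}-1-ixy) e^{-αβx}/(1-e^{-βx})^λ dx
 = (1/β)[B(α-iy/β,1-λ) - B(α,1-λ)] - (iy/β²) B(α,1-λ)(ψ(1+α-λ)-ψ(α))`. -/
theorem stmt11 (α β c lam : ℝ) (hα : 0 < α) (hβ : 0 < β) (hc : 0 ≤ c)
    (hlam : lam ∈ Set.Ioo (0 : ℝ) 1) (y : ℝ) :
    ∫ x in Set.Ioi (0 : ℝ),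
      (Complex.exp (Complex.I * x * y) - 1 - Complex.I * x * y)
        * Complex.exp (-(α * β * x) : ℂ)
        / (((1 - Real.exp (-(β * x))) ^ lam : ℝ) : ℂ)
    = (1 / (β : ℂ)) * (cBeta ((α : ℂ) - Complex.I * y / β) (1 - lam)
          - cBeta (α : ℂ) (1 - lam))
      - Complex.I * y / (β : ℂ) ^ 2 * cBeta (α : ℂ) (1 - lam)
          * (_root_.digamma (1 + (α : ℂ) - lam) - _root_.digamma (α : ℂ)) := by
  have hβ' : (β : ℂ) ≠ 0 := by exact_mod_cast hβ.ne'
  have hw1div : ((α:ℂ) * β - Complex.I * y) / β = (α:ℂ) - Complex.I * y / β := by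
    field_simp
  have hw2div : ((α:ℂ) * β) / β = (α:ℂ) := by field_simp
  have hw1re : 0 < (((α:ℂ) * β - Complex.I * y) / β).re := by
    rw [hw1div]
    have h : Complex.I * y / β = ((y/β : ℝ) : ℂ) * Complex.I := by push_cast; ring
    rw [h]
    simp [Complex.sub_re, Complex.mul_re, hα]
  have hw2re : 0 < (((α:ℂ) * β) / β).re := by rw [hw2div]; simpa using hα
  have h1 := int1 hβ hlam ((α:ℂ) * β - Complex.I * y) hw1re
  have h2 := int1 hβ hlam ((α:ℂ) * β) hw2re
  have h3 := int3 α hα hβ hlam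
  have h12 : IntegrableOn (fun x : ℝ =>
      Complex.exp (-(((α:ℂ) * β - Complex.I * y) * x))
        / (((1 - Real.exp (-(β * x))) ^ lam : ℝ) : ℂ)
      - Complex.exp (-(((α:ℂ) * β) * x))
        / (((1 - Real.exp (-(β * x))) ^ lam : ℝ) : ℂ)) (Set.Ioi (0:ℝ)) := h1.sub h2
  have h3' : IntegrableOn (fun x : ℝ =>
      Complex.I * y * ((x:ℂ) * Complex.exp (-((α:ℂ) * β * x))
        / (((1 - Real.exp (-(β * x))) ^ lam : ℝ) : ℂ))) (Set.Ioi (0:ℝ)) :=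
    h3.const_mul _
  have hsplit : ∀ x ∈ Set.Ioi (0:ℝ),
      (Complex.exp (Complex.I * x * y) - 1 - Complex.I * x * y)
        * Complex.exp (-(α * β * x) : ℂ)
        / (((1 - Real.exp (-(β * x))) ^ lam : ℝ) : ℂ)
      = (Complex.exp (-(((α:ℂ) * β - Complex.I * y) * x))
          / (((1 - Real.exp (-(β * x))) ^ lam : ℝ) : ℂ)
        - Complex.exp (-(((α:ℂ) * β) * x))
          / (((1 - Real.exp (-(β * x))) ^ lam : ℝ) : ℂ))
        - Complex.I * y * ((x:ℂ) * Complex.exp (-((α:ℂ) * β * x))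
          / (((1 - Real.exp (-(β * x))) ^ lam : ℝ) : ℂ)) := by
    intro x _
    have hE : Complex.exp (Complex.I * x * y) * Complex.exp (-(((α:ℂ) * β) * x))
        = Complex.exp (-((((α:ℂ) * β - Complex.I * y)) * x)) := by
      rw [← Complex.exp_add]
      congr 1
      push_cast
      ring
    have he2 : Complex.exp (-(α * β * x) : ℂ) = Complex.exp (-(((α:ℂ) * β) * x)) := rfl
    rw [he2, ← hE]
    ring
  rw [MeasureTheory.setIntegral_congr_fun measurableSet_Ioi hsplit,
    MeasureTheory.integral_sub h12 h3',
    MeasureTheory.integral_sub h1 h2,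
    MeasureTheory.integral_const_mul,
    L1 hβ ((α:ℂ) * β - Complex.I * y), L1 hβ ((α:ℂ) * β),
    L2 α hα hβ hlam, L4 hα hlam,
    beta_eq_cBeta hw1re (by simp [Complex.sub_re]; linarith [hlam.2]),
    beta_eq_cBeta hw2re (by simp [Complex.sub_re]; linarith [hlam.2]),
    hw1div, hw2div,
    show (α:ℂ) + (1 - (lam:ℂ)) = 1 + (α:ℂ) - lam by ring]
  ring
end

section
/- For real α > 0, β > 0 and every real y, ∫₀^∞ (e^{ixy} − 1 − ixy)·e^{−αβx}/(1−e^{−βx}) dx = −(1/β)[ψ(α − iy/β) − ψ(α)] − (iy/β²)·ψ'(α), where ψ is the digamma function. -/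
open Real Complex

noncomputable def rpsi (x : ℝ) : ℝ := deriv Real.Gamma x / Real.Gamma x

lemma summable_inv_mul (c : ℝ) (hc : 0 < c) :
    Summable (fun k : ℕ => 1 / (((k : ℝ) + c) * ((k : ℝ) + c))) := by
  have hbase : Summable (fun k : ℕ => 1 / ((k : ℝ) + 1) ^ 2) := by
    have h0 : Summable (fun n : ℕ => 1 / (n : ℝ) ^ 2) :=
      Real.summable_one_div_nat_pow.mpr one_lt_two
    have := (summable_nat_add_iff 1).mpr h0
    refine this.congr fun n => by push_cast; ring
  set M : ℝ := max 1 c⁻¹ with hM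
  have hM1 : (1 : ℝ) ≤ M := le_max_left _ _
  have hM0 : 0 < M := lt_of_lt_of_le one_pos hM1
  refine Summable.of_nonneg_of_le (fun k => by positivity) (fun k => ?_)
    ((hbase.mul_left (M * M)))
  have hk1 : (0:ℝ) < (k : ℝ) + 1 := by positivity
  have hkc : (0:ℝ) < (k : ℝ) + c := by positivity
  have key : (k : ℝ) + 1 ≤ M * ((k : ℝ) + c) := by
    rcases le_total 1 c with h | h
    · have : (k : ℝ) + 1 ≤ (k : ℝ) + c := by linarith
      nlinarith
    · have h2 : c⁻¹ ≤ M := le_max_right _ _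
      have h3 : (1:ℝ) ≤ c⁻¹ := (one_le_inv_iff₀).mpr ⟨hc, h⟩
      have h4 : c⁻¹ * ((k : ℝ) + c) = c⁻¹ * k + 1 := by
        field_simp
      nlinarith [Nat.cast_nonneg (α := ℝ) k]
  have hsq : ((k:ℝ)+1) * ((k:ℝ)+1) ≤ (M * ((k:ℝ)+c)) * (M * ((k:ℝ)+c)) :=
    mul_le_mul key key (by positivity) (by positivity)
  rw [mul_one_div, div_le_div_iff₀ (by positivity) (by positivity)]
  nlinarith [hsq]

lemma real_ne_neg_nat {x : ℝ} (hx : 0 < x) : ∀ m : ℕ, x ≠ -(m : ℝ) := by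
  intro m h
  rw [h] at hx
  have : (0:ℝ) ≤ (m:ℝ) := Nat.cast_nonneg m
  linarith

lemma rpsi_add_one {x : ℝ} (hx : 0 < x) : rpsi (x + 1) = rpsi x + 1 / x := by
  have hΓx : 0 < Real.Gamma x := Real.Gamma_pos_of_pos hx
  have hd : DifferentiableAt ℝ Real.Gamma x := Real.differentiableAt_Gamma (real_ne_neg_nat hx)
  have hder : HasDerivAt Real.Gamma (deriv Real.Gamma x) x := hd.hasDerivAt
  have h1 : HasDerivAt (fun t : ℝ => t * Real.Gamma t)
      (Real.Gamma x + x * deriv Real.Gamma x) x := by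
    have := (hasDerivAt_id x).mul hder
    rw [one_mul] at this; exact this
  have heq : (fun t : ℝ => Real.Gamma (t + 1)) =ᶠ[nhds x] (fun t : ℝ => t * Real.Gamma t) := by
    filter_upwards [eventually_gt_nhds hx] with t ht
    exact Real.Gamma_add_one ht.ne'
  have h2 : HasDerivAt (fun t : ℝ => Real.Gamma (t + 1))
      (Real.Gamma x + x * deriv Real.Gamma x) x := h1.congr_of_eventuallyEq heq
  have h3 : HasDerivAt (fun t : ℝ => Real.Gamma (t + 1)) (deriv Real.Gamma (x + 1)) x := by
    have hd1 : DifferentiableAt ℝ Real.Gamma (x + 1) :=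
      Real.differentiableAt_Gamma (real_ne_neg_nat (by linarith))
    have := hd1.hasDerivAt.comp x ((hasDerivAt_id x).add_const 1)
    rw [mul_one] at this; exact this
  have key : deriv Real.Gamma (x + 1) = Real.Gamma x + x * deriv Real.Gamma x := h3.unique h2
  have hΓ1 : Real.Gamma (x + 1) = x * Real.Gamma x := Real.Gamma_add_one hx.ne'
  rw [rpsi, rpsi, key, hΓ1]
  field_simp
  ring

lemma rpsi_add_nat {x : ℝ} (hx : 0 < x) (n : ℕ) :
    rpsi (x + n) = rpsi x + ∑ k ∈ Finset.range n, 1 / (x + k) := by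
  induction n with
  | zero => simp
  | succ n ih =>
    have h1 : x + (n + 1 : ℕ) = (x + n) + 1 := by push_cast; ring
    rw [h1, rpsi_add_one (by positivity), ih, Finset.sum_range_succ]
    ring

lemma rpsi_nat (n : ℕ) :
    rpsi ((n : ℝ) + 1) = -Real.eulerMascheroniConstant + (harmonic n : ℝ) := by
  have hfac : (Nat.factorial n : ℝ) ≠ 0 := by positivity
  rw [rpsi, Real.deriv_Gamma_nat, Real.Gamma_nat_eq_factorial, mul_div_cancel_left₀ _ hfac]

lemma rpsi_mono : MonotoneOn rpsi (Set.Ioi (0:ℝ)) := by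
  have hdiff : ∀ x ∈ Set.Ioi (0:ℝ), DifferentiableAt ℝ (Real.log ∘ Real.Gamma) x := by
    intro x hx
    exact (Real.differentiableAt_Gamma (real_ne_neg_nat hx)).log
      (Real.Gamma_pos_of_pos hx).ne'
  have hmono := Real.convexOn_log_Gamma.monotoneOn_deriv hdiff
  have hcongr : ∀ x ∈ Set.Ioi (0:ℝ), deriv (Real.log ∘ Real.Gamma) x = rpsi x := by
    intro x hx
    rw [Function.comp_def, deriv.log (Real.differentiableAt_Gamma (real_ne_neg_nat hx))
      (Real.Gamma_pos_of_pos hx).ne']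
    rfl
  intro a ha b hb hab
  rw [← hcongr a ha, ← hcongr b hb]
  exact hmono ha hb hab

lemma harmonic_cast (n : ℕ) : (harmonic n : ℝ) = ∑ k ∈ Finset.range n, 1 / ((k:ℝ) + 1) := by
  induction n with
  | zero => simp
  | succ n ih =>
    rw [harmonic_succ, Finset.sum_range_succ, ← ih]
    push_cast
    ring

lemma rpsi_hasSum {x : ℝ} (hx : 0 < x) :
    HasSum (fun k : ℕ => 1 / ((k : ℝ) + 1) - 1 / ((k : ℝ) + x))
      (rpsi x + Real.eulerMascheroniConstant) := by
  set f : ℕ → ℝ := fun k => 1 / ((k : ℝ) + 1) - 1 / ((k : ℝ) + x) with hf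
  set c : ℝ := min 1 x with hc
  have hc0 : 0 < c := lt_min one_pos hx
  have hsum : Summable f := by
    refine Summable.of_norm_bounded ((summable_inv_mul c hc0).mul_left |x - 1|) ?_
    intro k
    have hk1 : (0:ℝ) < (k:ℝ) + 1 := by positivity
    have hkx : (0:ℝ) < (k:ℝ) + x := by positivity
    have hkc : (0:ℝ) < (k:ℝ) + c := by positivity
    have hval : f k = (x - 1) / (((k:ℝ) + 1) * ((k:ℝ) + x)) := by
      rw [hf]; field_simp; ring
    rw [hval, Real.norm_eq_abs, abs_div,
      abs_of_pos (show (0:ℝ) < ((k:ℝ) + 1) * ((k:ℝ) + x) by positivity), mul_one_div]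
    have h1 : ((k:ℝ) + c) * ((k:ℝ) + c) ≤ ((k:ℝ) + 1) * ((k:ℝ) + x) := by
      have := min_le_left 1 x; have := min_le_right 1 x
      nlinarith
    gcongr
  -- limits
  have htend1 : Filter.Tendsto
      (fun n : ℕ => -Real.eulerMascheroniConstant + ∑ k ∈ Finset.range (n+1), f k)
      Filter.atTop (nhds (-Real.eulerMascheroniConstant + ∑' k, f k)) := by
    exact ((hsum.hasSum.tendsto_sum_nat).comp (Filter.tendsto_add_atTop_nat 1)).const_add _
  have hform : ∀ n : ℕ, -Real.eulerMascheroniConstant + ∑ k ∈ Finset.range (n+1), f k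
      = rpsi x + (rpsi ((n:ℝ) + 1 + 1) - rpsi (x + (n + 1 : ℕ))) := by
    intro n
    have hS : ∑ k ∈ Finset.range (n+1), f k
        = (harmonic (n+1) : ℝ) - ∑ k ∈ Finset.range (n+1), 1 / (x + (k:ℝ)) := by
      rw [Finset.sum_sub_distrib]
      congr 1
      · rw [harmonic_cast]
      · apply Finset.sum_congr rfl; intro k _; rw [add_comm]
    have hr1 : rpsi (x + (n + 1 : ℕ)) = rpsi x + ∑ k ∈ Finset.range (n+1), 1 / (x + (k:ℝ)) :=
      rpsi_add_nat hx (n+1)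
    have hr2 : rpsi ((n:ℝ) + 1 + 1) = -Real.eulerMascheroniConstant + (harmonic (n+1) : ℝ) := by
      have := rpsi_nat (n+1); push_cast at this ⊢; linarith [this]
    rw [hS, hr1, hr2]; ring
  have herr : Filter.Tendsto
      (fun n : ℕ => rpsi ((n:ℝ) + 1 + 1) - rpsi (x + (n + 1 : ℕ))) Filter.atTop (nhds 0) := by
    set m : ℕ := max 1 (Nat.ceil x) with hm
    have hm1 : (1:ℝ) ≤ m := by
      have : (1:ℕ) ≤ m := le_max_left _ _
      exact_mod_cast this
    have hxm : x ≤ m := le_trans (Nat.le_ceil x) (by exact_mod_cast le_max_right 1 (Nat.ceil x))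
    apply squeeze_zero_norm (a := fun n : ℕ => (m : ℝ) / ((n:ℝ) + 1))
    · intro n
      have hn1 : (0:ℝ) < (n:ℝ) + 1 := by positivity
      -- bounds via monotonicity
      have hmem1 : ((n:ℝ) + 1) ∈ Set.Ioi (0:ℝ) := by simp [hn1]
      have hxn : (0:ℝ) < x + ((n:ℕ) + 1 : ℕ) := by positivity
      have hub : rpsi ((n:ℝ)+1+m) = rpsi ((n:ℝ)+1) + ∑ k ∈ Finset.range m, 1/((n:ℝ)+1+k) :=
        rpsi_add_nat hn1 m
      have hsumle : ∑ k ∈ Finset.range m, 1/((n:ℝ)+1+k) ≤ (m:ℝ) / ((n:ℝ)+1) := by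
        calc ∑ k ∈ Finset.range m, 1/((n:ℝ)+1+k) ≤ ∑ _k ∈ Finset.range m, 1/((n:ℝ)+1) := by
              apply Finset.sum_le_sum; intro k _
              apply one_div_le_one_div_of_le hn1
              have : (0:ℝ) ≤ (k:ℝ) := Nat.cast_nonneg k
              linarith
        _ = (m:ℝ)/((n:ℝ)+1) := by
              rw [Finset.sum_const, Finset.card_range, nsmul_eq_mul, mul_one_div]
      have hA : rpsi ((n:ℝ)+1) ≤ rpsi ((n:ℝ)+1+1) := by
        apply rpsi_mono (by simp [hn1]) (by simp; linarith) (by linarith)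
      have hB : rpsi ((n:ℝ)+1+1) ≤ rpsi ((n:ℝ)+1+m) := by
        apply rpsi_mono (by simp; linarith) (by simp; linarith) (by linarith)
      have hC : rpsi ((n:ℝ)+1) ≤ rpsi (x + ((n:ℕ)+1:ℕ)) := by
        apply rpsi_mono (by simp [hn1]) (by simp; push_cast; linarith) (by push_cast; linarith)
      have hD : rpsi (x + ((n:ℕ)+1:ℕ)) ≤ rpsi ((n:ℝ)+1+m) := by
        apply rpsi_mono (by simp; push_cast; linarith) (by simp; linarith) (by push_cast; linarith)
      have hBA : rpsi ((n:ℝ)+1+m) - rpsi ((n:ℝ)+1) ≤ (m:ℝ) / ((n:ℝ)+1) := by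
        rw [hub]; linarith
      rw [Real.norm_eq_abs, abs_sub_le_iff]
      constructor <;> linarith
    · have h0 : Filter.Tendsto (fun n : ℕ => (m:ℝ) / (n:ℝ)) Filter.atTop (nhds 0) :=
        tendsto_const_div_atTop_nhds_zero_nat _
      have h1 := h0.comp (Filter.tendsto_add_atTop_nat 1)
      refine h1.congr fun n => ?_
      simp only [Function.comp]
      push_cast
      ring
  have htend2 : Filter.Tendsto
      (fun n : ℕ => -Real.eulerMascheroniConstant + ∑ k ∈ Finset.range (n+1), f k)
      Filter.atTop (nhds (rpsi x)) := by
    simp_rw [hform]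
    simpa using (herr.const_add (rpsi x))
  have hval : -Real.eulerMascheroniConstant + ∑' k, f k = rpsi x :=
    tendsto_nhds_unique htend1 htend2
  have heq2 : ∑' k, f k = rpsi x + Real.eulerMascheroniConstant := by linarith
  have h := hsum.hasSum
  rwa [heq2] at h


noncomputable def cH (z : ℂ) : ℂ :=
  -(Real.eulerMascheroniConstant : ℂ) + ∑' n : ℕ, (((n:ℂ) + 1)⁻¹ - ((n:ℂ) + z)⁻¹)

lemma complex_ne_neg_nat {z : ℂ} (hz : 0 < z.re) : ∀ m : ℕ, z ≠ -(m:ℂ) := by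
  intro m h
  have : z.re = -(m:ℝ) := by rw [h]; simp
  have hm : (0:ℝ) ≤ (m:ℝ) := Nat.cast_nonneg m
  rw [this] at hz; linarith

lemma nat_add_ne_zero {z : ℂ} (hz : 0 < z.re) (n : ℕ) : ((n:ℂ) + z) ≠ 0 := by
  intro h
  have : ((n:ℂ) + z).re = 0 := by rw [h]; simp
  simp only [Complex.add_re, Complex.natCast_re] at this
  have hm : (0:ℝ) ≤ (n:ℝ) := Nat.cast_nonneg n
  linarith

lemma norm_nat_add_ge {z : ℂ} (n : ℕ) : (n:ℝ) + z.re ≤ ‖(n:ℂ) + z‖ := by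
  have := Complex.re_le_norm ((n:ℂ) + z)
  simpa using this

lemma cH_props {z₀ : ℂ} (h : 0 < z₀.re) :
    DifferentiableAt ℂ cH z₀ ∧
      HasSum (fun n : ℕ => (((n:ℂ) + z₀)^2)⁻¹) (deriv cH z₀) := by
  set r := z₀.re / 2 with hrdef
  have hr : 0 < r := by positivity
  set V := Metric.ball z₀ r with hVdef
  have hVopen : IsOpen V := Metric.isOpen_ball
  have hre : ∀ w ∈ V, r < w.re := by
    intro w hw
    have h1 : |(w - z₀).re| ≤ ‖w - z₀‖ := Complex.abs_re_le_norm _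
    have h2 : ‖w - z₀‖ < r := mem_ball_iff_norm.mp hw
    have h3 := abs_lt.mp (lt_of_le_of_lt h1 h2)
    simp only [Complex.sub_re] at h3
    have := h3.1
    rw [hrdef] at *
    linarith
  set c : ℝ := min 1 r with hcdef
  have hc0 : 0 < c := lt_min one_pos hr
  set R : ℝ := ‖z₀‖ + r with hRdef
  have hnorm : ∀ w ∈ V, ‖w‖ ≤ R := by
    intro w hw
    have h2 : ‖w - z₀‖ < r := mem_ball_iff_norm.mp hw
    calc ‖w‖ = ‖z₀ + (w - z₀)‖ := by ring_nf
    _ ≤ ‖z₀‖ + ‖w - z₀‖ := norm_add_le _ _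
    _ ≤ R := by rw [hRdef]; linarith
  set F : ℕ → ℂ → ℂ := fun n w => ((n:ℂ) + 1)⁻¹ - ((n:ℂ) + w)⁻¹ with hFdef
  set u : ℕ → ℝ := fun n => (R + 1) * (1 / (((n:ℝ) + c) * ((n:ℝ) + c))) with hudef
  have hu : Summable u := (summable_inv_mul c hc0).mul_left _
  have hdiff : ∀ n : ℕ, DifferentiableOn ℂ (F n) V := by
    intro n
    apply DifferentiableOn.sub (differentiableOn_const _)
    apply DifferentiableOn.inv
    · exact (differentiable_const _).add differentiable_id |>.differentiableOn
    · intro w hw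
      exact nat_add_ne_zero (lt_trans hr (hre w hw)) n
  have hbound : ∀ (n : ℕ), ∀ w ∈ V, ‖F n w‖ ≤ u n := by
    intro n w hw
    have hwre : 0 < w.re := lt_trans hr (hre w hw)
    have hne1 : ((n:ℂ) + 1) ≠ 0 := by
      intro hcon
      have : ((n:ℂ)+1).re = 0 := by rw [hcon]; simp
      simp only [Complex.add_re, Complex.natCast_re, Complex.one_re] at this
      have : (0:ℝ) ≤ (n:ℝ) := Nat.cast_nonneg n
      linarith
    have hne2 := nat_add_ne_zero hwre n
    have hval : F n w = (w - 1) * (((n:ℂ) + 1)⁻¹ * ((n:ℂ) + w)⁻¹) := by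
      rw [hFdef]
      field_simp
      ring
    rw [hval, norm_mul, norm_mul, norm_inv, norm_inv]
    have e1 : ‖(n:ℂ) + 1‖ = (n:ℝ) + 1 := by
      have : ((n:ℂ) + 1) = (((n:ℝ) + 1 : ℝ) : ℂ) := by push_cast; ring
      rw [this, Complex.norm_real, Real.norm_eq_abs, abs_of_pos (by positivity)]
    have e2 : (n:ℝ) + w.re ≤ ‖(n:ℂ) + w‖ := norm_nat_add_ge n
    have hw1 : ‖w - 1‖ ≤ R + 1 := by
      have h4 := hnorm w hw
      calc ‖w - 1‖ ≤ ‖w‖ + ‖(1:ℂ)‖ := norm_sub_le _ _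
      _ ≤ R + 1 := by rw [norm_one]; linarith
    have hc1 : c ≤ 1 := min_le_left _ _
    have hcr : c ≤ r := min_le_right _ _
    have hb1 : ‖(n:ℂ) + 1‖⁻¹ ≤ ((n:ℝ) + c)⁻¹ := by
      rw [e1]
      apply inv_anti₀ (by positivity) (by linarith)
    have hb2 : ‖(n:ℂ) + w‖⁻¹ ≤ ((n:ℝ) + c)⁻¹ := by
      apply inv_anti₀ (by positivity)
      have : (n:ℝ) + c ≤ (n:ℝ) + w.re := by
        have := hre w hw; linarith
      linarith [e2]
    rw [hudef]
    have hfin : ‖w - 1‖ * (‖(n:ℂ)+1‖⁻¹ * ‖(n:ℂ)+w‖⁻¹) ≤ (R+1) * (((n:ℝ)+c)⁻¹ * ((n:ℝ)+c)⁻¹) := by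
      apply mul_le_mul hw1
      · apply mul_le_mul hb1 hb2 (by positivity) (by positivity)
      · positivity
      · positivity
    calc ‖w - 1‖ * (‖((n:ℂ)+1)‖⁻¹ * ‖((n:ℂ)+w)‖⁻¹)
        ≤ (R+1) * (((n:ℝ)+c)⁻¹ * ((n:ℝ)+c)⁻¹) := hfin
    _ = (R + 1) * (1 / (((n:ℝ) + c) * ((n:ℝ) + c))) := by
        rw [one_div, mul_inv]
  have hz₀V : z₀ ∈ V := Metric.mem_ball_self hr
  have hdsum := Complex.hasSum_deriv_of_summable_norm hu hdiff hVopen hbound hz₀V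
  have hdiffsum : DifferentiableAt ℂ (fun w : ℂ => ∑' n : ℕ, F n w) z₀ :=
    (Complex.differentiableOn_tsum_of_summable_norm hu hdiff hVopen hbound).differentiableAt
      (hVopen.mem_nhds hz₀V)
  have hderivF : ∀ n : ℕ, deriv (F n) z₀ = (((n:ℂ) + z₀)^2)⁻¹ := by
    intro n
    have hne := nat_add_ne_zero h n
    have h1 : HasDerivAt (fun w : ℂ => ((n:ℂ) + w)⁻¹) (-1 / ((n:ℂ) + z₀)^2) z₀ := by
      have := (((hasDerivAt_id z₀).const_add (n:ℂ)).inv hne); simp at this; exact this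
    have h2 : HasDerivAt (F n) (-(-1 / ((n:ℂ) + z₀)^2)) z₀ := h1.const_sub _
    rw [h2.deriv]
    field_simp
  have hderiv_cH : deriv cH z₀ = deriv (fun w : ℂ => ∑' n : ℕ, F n w) z₀ := by
    unfold cH
    exact deriv_const_add _
  constructor
  · have : DifferentiableAt ℂ (fun w : ℂ => -(Real.eulerMascheroniConstant : ℂ)
        + ∑' n : ℕ, F n w) z₀ := hdiffsum.const_add _
    exact this
  · rw [hderiv_cH]
    have := hdsum
    simp_rw [hderivF] at this
    exact this

lemma deriv_Gamma_ofReal {x : ℝ} (hx : 0 < x) :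
    deriv Complex.Gamma (x:ℂ) = ((deriv Real.Gamma x : ℝ) : ℂ) := by
  have hcne : ∀ m : ℕ, (x:ℂ) ≠ -(m:ℂ) := by
    have : (0:ℝ) < ((x:ℂ)).re := by simpa using hx
    exact complex_ne_neg_nat this
  have hd : DifferentiableAt ℂ Complex.Gamma (x:ℂ) := Complex.differentiableAt_Gamma _ hcne
  have hD := hd.hasDerivAt
  set d := deriv Complex.Gamma (x:ℂ) with hddef
  have hre : HasDerivAt (fun t : ℝ => (Complex.Gamma (t:ℂ)).re) d.re x := hD.real_of_complex
  have hre' : (fun t : ℝ => (Complex.Gamma (t:ℂ)).re) = Real.Gamma := by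
    ext t; rw [Complex.Gamma_ofReal]; exact Complex.ofReal_re _
  rw [hre'] at hre
  have h1 : deriv Real.Gamma x = d.re := hre.deriv
  have him : HasDerivAt (fun t : ℝ => Complex.Gamma (t:ℂ)) d x := hD.comp_ofReal
  have him2 : HasDerivAt (fun t : ℝ => (Complex.Gamma (t:ℂ)).im) d.im x :=
    Complex.imCLM.hasFDerivAt.comp_hasDerivAt x him
  have hzero : (fun t : ℝ => (Complex.Gamma (t:ℂ)).im) = fun _ => (0:ℝ) := by
    ext t; rw [Complex.Gamma_ofReal]; exact Complex.ofReal_im _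
  rw [hzero] at him2
  have h2 : d.im = 0 := him2.unique (hasDerivAt_const x 0)
  apply Complex.ext
  · simp [h1]
  · simp [h2]

lemma digamma_ofReal {x : ℝ} (hx : 0 < x) : _root_.digamma (x:ℂ) = ((rpsi x : ℝ) : ℂ) := by
  rw [_root_.digamma, deriv_Gamma_ofReal hx, Complex.Gamma_ofReal, ← Complex.ofReal_div, rpsi]

lemma cH_ofReal {x : ℝ} (hx : 0 < x) : cH (x:ℂ) = ((rpsi x : ℝ) : ℂ) := by
  have hts : ∑' n : ℕ, (((n:ℂ) + 1)⁻¹ - ((n:ℂ) + (x:ℂ))⁻¹)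
      = ((∑' n : ℕ, (1 / ((n:ℝ) + 1) - 1 / ((n:ℝ) + x)) : ℝ) : ℂ) := by
    rw [Complex.ofReal_tsum]
    apply tsum_congr
    intro n
    push_cast
    ring
  rw [cH, hts, (rpsi_hasSum hx).tsum_eq]
  push_cast
  ring

lemma digamma_eqOn_cH : Set.EqOn _root_.digamma cH {z : ℂ | 0 < z.re} := by
  have hU : IsOpen {z : ℂ | 0 < z.re} := by
    exact isOpen_lt continuous_const Complex.continuous_re
  have hΓdiff : DifferentiableOn ℂ Complex.Gamma {z : ℂ | 0 < z.re} := fun z hz =>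
    (Complex.differentiableAt_Gamma z (complex_ne_neg_nat hz)).differentiableWithinAt
  have hΓ : AnalyticOnNhd ℂ Complex.Gamma {z : ℂ | 0 < z.re} := hΓdiff.analyticOnNhd hU
  have hdig : AnalyticOnNhd ℂ _root_.digamma {z : ℂ | 0 < z.re} := by
    have := hΓ.deriv.div hΓ (fun z hz => Complex.Gamma_ne_zero (complex_ne_neg_nat hz))
    exact this
  have hcH : AnalyticOnNhd ℂ cH {z : ℂ | 0 < z.re} :=
    DifferentiableOn.analyticOnNhd
      (fun z hz => ((cH_props hz).1).differentiableWithinAt) hU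
  have hpre : IsPreconnected {z : ℂ | 0 < z.re} := (convex_halfSpace_re_gt 0).isPreconnected
  have h1mem : (1:ℂ) ∈ {z : ℂ | 0 < z.re} := by simp
  apply hdig.eqOn_of_preconnected_of_frequently_eq hcH hpre h1mem
  have htendR : Filter.Tendsto (fun k : ℕ => 1 + 1/((k:ℝ)+1)) Filter.atTop (nhds 1) := by
    have : Filter.Tendsto (fun n : ℕ => 1 / ((n : ℝ) + 1)) Filter.atTop (nhds 0) :=
      tendsto_one_div_add_atTop_nhds_zero_nat
    simpa using this.const_add 1
  have htendC : Filter.Tendsto (fun k : ℕ => ((1 + 1/((k:ℝ)+1) : ℝ) : ℂ))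
      Filter.atTop (nhds (1:ℂ)) := by
    have h5 := (Complex.continuous_ofReal.tendsto 1).comp htendR
    exact h5.congr fun k => rfl
  have htend' : Filter.Tendsto (fun k : ℕ => ((1 + 1/((k:ℝ)+1) : ℝ) : ℂ))
      Filter.atTop (nhdsWithin (1:ℂ) {(1:ℂ)}ᶜ) := by
    apply tendsto_nhdsWithin_of_tendsto_nhds_of_eventually_within _ htendC
    apply Filter.Eventually.of_forall
    intro k
    simp only [Set.mem_compl_iff, Set.mem_singleton_iff]
    intro hcon
    have : (1 + 1/((k:ℝ)+1) : ℝ) = 1 := by exact_mod_cast hcon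
    have hk : (0:ℝ) < 1/((k:ℝ)+1) := by positivity
    linarith
  apply htend'.frequently
  apply Filter.Frequently.of_forall
  intro k
  have hk : (0:ℝ) < 1 + 1/((k:ℝ)+1) := by positivity
  rw [digamma_ofReal hk, cH_ofReal hk]

lemma digamma_eq_cH {z : ℂ} (hz : 0 < z.re) : _root_.digamma z = cH z := digamma_eqOn_cH hz

lemma deriv_digamma_hasSum {x : ℂ} (hx : 0 < x.re) :
    HasSum (fun n : ℕ => (((n:ℂ) + x)^2)⁻¹) (deriv _root_.digamma x) := by
  have hU : IsOpen {z : ℂ | 0 < z.re} := isOpen_lt continuous_const Complex.continuous_re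
  have heq : _root_.digamma =ᶠ[nhds x] cH :=
    Filter.eventuallyEq_of_mem (hU.mem_nhds hx) digamma_eqOn_cH
  rw [heq.deriv_eq]
  exact (cH_props hx).2

lemma integrableOn_pow_exp (k : ℕ) {c : ℝ} (hc : 0 < c) :
    MeasureTheory.IntegrableOn (fun x : ℝ => x^k * Real.exp (-(c*x))) (Set.Ioi 0) := by
  apply integrable_of_isBigO_exp_neg (half_pos hc)
  · exact ((continuous_pow k).mul (Real.continuous_exp.comp
      (continuous_const.mul continuous_id).neg)).continuousOn
  · have h0 : Filter.Tendsto (fun x : ℝ => x^k * Real.exp (-(c/2*x))) Filter.atTop (nhds 0) := by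
      have h1 := tendsto_rpow_mul_exp_neg_mul_atTop_nhds_zero (k:ℝ) (c/2) (half_pos hc)
      apply h1.congr' ?_
      filter_upwards [Filter.eventually_ge_atTop (0:ℝ)] with x hx
      rw [Real.rpow_natCast, neg_mul]
    have heq : ∀ x : ℝ, x^k * Real.exp (-(c*x))
        = (x^k * Real.exp (-(c/2*x))) * Real.exp (-(c/2)*x) := by
      intro x
      rw [mul_assoc, ← Real.exp_add]
      ring_nf
    have hbig := (h0.isBigO_one ℝ).mul
      (Asymptotics.isBigO_refl (fun x : ℝ => Real.exp (-(c/2)*x)) Filter.atTop)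
    simp only [one_mul] at hbig
    exact hbig.congr' (Filter.EventuallyEq.of_eq (funext heq)).symm Filter.EventuallyEq.rfl

lemma integral_pow_exp (k : ℕ) {c : ℝ} (hc : 0 < c) :
    ∫ x in Set.Ioi (0:ℝ), x^k * Real.exp (-(c*x)) = (Nat.factorial k : ℝ) / c^(k+1) := by
  have h := Real.integral_rpow_mul_exp_neg_mul_Ioi (a := (k:ℝ)+1) (by positivity) hc
  have hcongr : ∀ x ∈ Set.Ioi (0:ℝ), x ^ (((k:ℝ)+1) - 1) * Real.exp (-(c*x))
      = x^k * Real.exp (-(c*x)) := by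
    intro x _
    rw [add_sub_cancel_right, Real.rpow_natCast]
  rw [MeasureTheory.setIntegral_congr_fun measurableSet_Ioi hcongr] at h
  rw [h, Real.Gamma_nat_eq_factorial,
    show ((k:ℝ)+1) = ((k+1 : ℕ) : ℝ) by push_cast; ring, Real.rpow_natCast, div_pow, one_pow]
  ring

lemma integrableOn_cexp_mul {s : ℂ} (hs : 0 < s.re) (k : ℕ) :
    MeasureTheory.IntegrableOn (fun x : ℝ => (x:ℂ)^k * Complex.exp (-(s * x)))
      (Set.Ioi 0) := by
  apply MeasureTheory.Integrable.mono' (integrableOn_pow_exp k hs)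
  · exact ((Complex.continuous_ofReal.pow k).mul (Complex.continuous_exp.comp
      ((continuous_const.mul Complex.continuous_ofReal).neg))).aestronglyMeasurable
  · rw [MeasureTheory.ae_restrict_iff' measurableSet_Ioi]
    apply Filter.Eventually.of_forall
    intro x hx
    rw [norm_mul, norm_pow, Complex.norm_real, Real.norm_eq_abs,
      abs_of_pos (Set.mem_Ioi.mp hx), Complex.norm_exp]
    have : (-(s * (x:ℂ))).re = -(s.re * x) := by
      simp [Complex.mul_re]
    rw [this]

lemma tendsto_cexp_zero_s12 {s : ℂ} (hs : 0 < s.re) (A B : ℝ) :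
    Filter.Tendsto (fun x : ℝ => (A * x + B) * Real.exp (-(s.re * x)))
      Filter.atTop (nhds 0) := by
  have h1 : Filter.Tendsto (fun x : ℝ => x * Real.exp (-(s.re*x))) Filter.atTop (nhds 0) := by
    have := tendsto_rpow_mul_exp_neg_mul_atTop_nhds_zero 1 s.re hs
    apply this.congr' ?_
    apply Filter.Eventually.of_forall
    intro x
    simp only [Real.rpow_one, neg_mul]
  have h2 : Filter.Tendsto (fun x : ℝ => Real.exp (-(s.re*x))) Filter.atTop (nhds 0) := by
    have h3 : Filter.Tendsto (fun x : ℝ => s.re * x) Filter.atTop Filter.atTop :=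
      Filter.Tendsto.const_mul_atTop hs Filter.tendsto_id
    have := Real.tendsto_exp_neg_atTop_nhds_zero.comp h3
    exact this.congr fun x => rfl
  have := ((h1.const_mul A).add (h2.const_mul B))
  simp only [mul_zero, add_zero] at this
  apply this.congr fun x => by ring

lemma integral_cexp {s : ℂ} (hs : 0 < s.re) :
    ∫ x in Set.Ioi (0:ℝ), Complex.exp (-(s * x)) = s⁻¹ := by
  have hsne : s ≠ 0 := fun h => by rw [h] at hs; simp at hs
  set f : ℝ → ℂ := fun x => -s⁻¹ * Complex.exp (-(s * x)) with hfdef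
  have hderiv : ∀ x ∈ Set.Ioi (0:ℝ), HasDerivAt f (Complex.exp (-(s * x))) x := by
    intro x _
    have h1 : HasDerivAt (fun z : ℂ => -(s * z)) (-s) (x:ℂ) := by
      have := ((hasDerivAt_id (x:ℂ)).const_mul s).neg; simp at this; exact this
    have h2 := h1.cexp
    have h3 := h2.const_mul (-s⁻¹)
    have h4 : -s⁻¹ * (Complex.exp (-(s * (x:ℂ))) * -s) = Complex.exp (-(s * (x:ℂ))) := by
      field_simp
    rw [h4] at h3
    exact h3.comp_ofReal
  have hcont : ContinuousWithinAt f (Set.Ici 0) 0 := by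
    apply Continuous.continuousWithinAt
    exact continuous_const.mul (Complex.continuous_exp.comp
      ((continuous_const.mul Complex.continuous_ofReal).neg))
  have hint : MeasureTheory.IntegrableOn (fun x : ℝ => Complex.exp (-(s * x)))
      (Set.Ioi 0) := by
    have := integrableOn_cexp_mul hs 0
    simpa using this
  have htend : Filter.Tendsto f Filter.atTop (nhds 0) := by
    apply squeeze_zero_norm' (a := fun x : ℝ => (0 * x + ‖s⁻¹‖) * Real.exp (-(s.re * x)))
    · filter_upwards [Filter.eventually_ge_atTop (0:ℝ)] with x _
      rw [hfdef]
      simp only [norm_mul, norm_neg, norm_inv]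
      rw [Complex.norm_exp]
      have : (-(s * (x:ℂ))).re = -(s.re * x) := by simp [Complex.mul_re]
      rw [this, zero_mul, zero_add]
    · exact tendsto_cexp_zero_s12 hs 0 ‖s⁻¹‖
  have := MeasureTheory.integral_Ioi_of_hasDerivAt_of_tendsto hcont hderiv hint htend
  rw [this, hfdef]
  simp

lemma integral_x_cexp {s : ℂ} (hs : 0 < s.re) :
    ∫ x in Set.Ioi (0:ℝ), (x:ℂ) * Complex.exp (-(s * x)) = (s^2)⁻¹ := by
  have hsne : s ≠ 0 := fun h => by rw [h] at hs; simp at hs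
  set f : ℝ → ℂ := fun x => -((x:ℂ) * s⁻¹ + (s^2)⁻¹) * Complex.exp (-(s * x)) with hfdef
  have hderiv : ∀ x ∈ Set.Ioi (0:ℝ), HasDerivAt f ((x:ℂ) * Complex.exp (-(s * x))) x := by
    intro x _
    have h1 : HasDerivAt (fun z : ℂ => -(z * s⁻¹ + (s^2)⁻¹)) (-s⁻¹) (x:ℂ) := by
      have := (((hasDerivAt_id (x:ℂ)).mul_const s⁻¹).add_const ((s^2)⁻¹)).neg; simp at this; exact this
    have h2 : HasDerivAt (fun z : ℂ => Complex.exp (-(s * z)))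
        (Complex.exp (-(s * (x:ℂ))) * -s) (x:ℂ) := by
      have h0 : HasDerivAt (fun z : ℂ => -(s * z)) (-s) (x:ℂ) := by
        have := ((hasDerivAt_id (x:ℂ)).const_mul s).neg; simp at this; exact this
      exact h0.cexp
    have h3 := h1.mul h2
    have h4 : -s⁻¹ * Complex.exp (-(s * (x:ℂ)))
        + -((x:ℂ) * s⁻¹ + (s^2)⁻¹) * (Complex.exp (-(s * (x:ℂ))) * -s)
        = (x:ℂ) * Complex.exp (-(s * (x:ℂ))) := by
      field_simp
      ring
    rw [h4] at h3
    exact h3.comp_ofReal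
  have hcont : ContinuousWithinAt f (Set.Ici 0) 0 := by
    apply Continuous.continuousWithinAt
    apply Continuous.mul
    · exact ((Complex.continuous_ofReal.mul continuous_const).add continuous_const).neg
    · exact Complex.continuous_exp.comp ((continuous_const.mul Complex.continuous_ofReal).neg)
  have hint : MeasureTheory.IntegrableOn (fun x : ℝ => (x:ℂ) * Complex.exp (-(s * x)))
      (Set.Ioi 0) := by
    have := integrableOn_cexp_mul hs 1
    simpa using this
  have htend : Filter.Tendsto f Filter.atTop (nhds 0) := by
    apply squeeze_zero_norm' (a := fun x : ℝ => (‖s⁻¹‖ * x + ‖(s^2)⁻¹‖) * Real.exp (-(s.re * x)))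
    · filter_upwards [Filter.eventually_ge_atTop (0:ℝ)] with x hx
      rw [hfdef]
      simp only [norm_mul, norm_neg]
      rw [Complex.norm_exp]
      have he : (-(s * (x:ℂ))).re = -(s.re * x) := by simp [Complex.mul_re]
      rw [he]
      apply mul_le_mul_of_nonneg_right _ (Real.exp_nonneg _)
      calc ‖(x:ℂ) * s⁻¹ + (s^2)⁻¹‖ ≤ ‖(x:ℂ) * s⁻¹‖ + ‖(s^2)⁻¹‖ := norm_add_le _ _
      _ = ‖s⁻¹‖ * x + ‖(s^2)⁻¹‖ := by
          rw [norm_mul, Complex.norm_real, Real.norm_eq_abs, _root_.abs_of_nonneg hx, mul_comm]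
    · exact tendsto_cexp_zero_s12 hs ‖s⁻¹‖ ‖(s^2)⁻¹‖
  have := MeasureTheory.integral_Ioi_of_hasDerivAt_of_tendsto hcont hderiv hint htend
  rw [this, hfdef]
  simp

lemma norm_cexp_sub_one_sub (t : ℝ) :
    ‖Complex.exp (Complex.I * t) - 1 - Complex.I * t‖ ≤ 3 * t^2 := by
  have habs : ‖Complex.I * t‖ = |t| := by
    rw [norm_mul, Complex.norm_I, Complex.norm_real, Real.norm_eq_abs, one_mul]
  rcases le_or_gt |t| 1 with h | h
  · have h1 := Complex.norm_exp_sub_one_sub_id_le (x := Complex.I * t) (by rw [habs]; exact h)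
    rw [habs] at h1
    have h2 : |t|^2 = t^2 := sq_abs t
    nlinarith
  · have h2 : t^2 = |t| * |t| := by rw [← _root_.sq_abs, sq]
    have hexp : ‖Complex.exp (Complex.I * t)‖ = 1 := by
      rw [Complex.norm_exp]
      have : (Complex.I * (t:ℂ)).re = 0 := by simp
      rw [this, Real.exp_zero]
    calc ‖Complex.exp (Complex.I * t) - 1 - Complex.I * t‖
        ≤ ‖Complex.exp (Complex.I * t) - 1‖ + ‖Complex.I * t‖ :=
          norm_sub_le _ _
    _ ≤ (‖Complex.exp (Complex.I * t)‖ + ‖(1:ℂ)‖) + |t| := by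
        rw [habs]
        have := norm_sub_le (Complex.exp (Complex.I * t)) 1
        linarith
    _ = 2 + |t| := by rw [hexp, norm_one]; ring
    _ ≤ 3 * t^2 := by nlinarith [abs_nonneg t]

lemma integral_term {c : ℝ} (hc : 0 < c) (y : ℝ) :
    ∫ x in Set.Ioi (0:ℝ),
      (Complex.exp (Complex.I * x * y) - 1 - Complex.I * x * y) * Complex.exp (-((c:ℂ) * x))
    = ((c:ℂ) - Complex.I*y)⁻¹ - (c:ℂ)⁻¹ - Complex.I*y * (((c:ℂ)^2)⁻¹) := by
  have hcre : 0 < ((c:ℂ)).re := by simpa using hc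
  have hsre : 0 < ((c:ℂ) - Complex.I*y).re := by
    simpa using hc
  have hfun : (fun x : ℝ => (Complex.exp (Complex.I * x * y) - 1 - Complex.I * x * y)
        * Complex.exp (-((c:ℂ) * x)))
      = fun x : ℝ => Complex.exp (-(((c:ℂ) - Complex.I*y) * x)) - Complex.exp (-((c:ℂ) * x))
          - Complex.I*y * ((x:ℂ) * Complex.exp (-((c:ℂ) * x))) := by
    funext x
    have hexp : Complex.exp (Complex.I * x * y) * Complex.exp (-((c:ℂ) * x))
        = Complex.exp (-(((c:ℂ) - Complex.I*y) * x)) := by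
      rw [← Complex.exp_add]; congr 1; ring
    calc (Complex.exp (Complex.I * x * y) - 1 - Complex.I * x * y) * Complex.exp (-((c:ℂ) * x))
        = Complex.exp (Complex.I * x * y) * Complex.exp (-((c:ℂ) * x))
          - Complex.exp (-((c:ℂ) * x))
          - Complex.I*y*((x:ℂ) * Complex.exp (-((c:ℂ) * x))) := by ring
    _ = _ := by rw [hexp]
  rw [hfun]
  have hA : MeasureTheory.IntegrableOn
      (fun x : ℝ => Complex.exp (-(((c:ℂ) - Complex.I*y) * x))) (Set.Ioi 0) := by
    simpa using integrableOn_cexp_mul hsre 0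
  have hB : MeasureTheory.IntegrableOn
      (fun x : ℝ => Complex.exp (-((c:ℂ) * x))) (Set.Ioi 0) := by
    simpa using integrableOn_cexp_mul hcre 0
  have hC0 : MeasureTheory.IntegrableOn
      (fun x : ℝ => (x:ℂ) * Complex.exp (-((c:ℂ) * x))) (Set.Ioi 0) := by
    simpa using integrableOn_cexp_mul hcre 1
  have hC : MeasureTheory.IntegrableOn
      (fun x : ℝ => Complex.I*y * ((x:ℂ) * Complex.exp (-((c:ℂ) * x)))) (Set.Ioi 0) :=
    hC0.const_mul _
  have hAB : MeasureTheory.IntegrableOn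
      (fun x : ℝ => Complex.exp (-(((c:ℂ) - Complex.I*y) * x)) - Complex.exp (-((c:ℂ) * x)))
      (Set.Ioi 0) := hA.sub hB
  rw [MeasureTheory.integral_sub hAB hC, MeasureTheory.integral_sub hA hB,
    MeasureTheory.integral_const_mul, integral_cexp hsre, integral_cexp hcre,
    integral_x_cexp hcre]

lemma csummable_term {z : ℂ} (hz : 0 < z.re) :
    Summable (fun n : ℕ => ((n:ℂ) + 1)⁻¹ - ((n:ℂ) + z)⁻¹) := by
  set c : ℝ := min 1 z.re with hcdef
  have hc0 : 0 < c := lt_min one_pos hz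
  apply Summable.of_norm_bounded ((summable_inv_mul c hc0).mul_left (‖z‖+1))
  intro n
  have hne1 : ((n:ℂ) + 1) ≠ 0 := by
    intro hcon
    have : ((n:ℂ)+1).re = 0 := by rw [hcon]; simp
    simp only [Complex.add_re, Complex.natCast_re, Complex.one_re] at this
    have : (0:ℝ) ≤ (n:ℝ) := Nat.cast_nonneg n
    linarith
  have hne2 := nat_add_ne_zero hz n
  have hval : ((n:ℂ) + 1)⁻¹ - ((n:ℂ) + z)⁻¹ = (z - 1) * (((n:ℂ) + 1)⁻¹ * ((n:ℂ) + z)⁻¹) := by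
    field_simp
    ring
  rw [hval, norm_mul, norm_mul, norm_inv, norm_inv]
  have e1 : ‖(n:ℂ) + 1‖ = (n:ℝ) + 1 := by
    have : ((n:ℂ) + 1) = (((n:ℝ) + 1 : ℝ) : ℂ) := by push_cast; ring
    rw [this, Complex.norm_real, Real.norm_eq_abs, abs_of_pos (by positivity)]
  have e2 : (n:ℝ) + z.re ≤ ‖(n:ℂ) + z‖ := norm_nat_add_ge n
  have hw1 : ‖z - 1‖ ≤ ‖z‖ + 1 := by
    calc ‖z - 1‖ ≤ ‖z‖ + ‖(1:ℂ)‖ := norm_sub_le _ _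
    _ = ‖z‖ + 1 := by rw [norm_one]
  have hc1 : c ≤ 1 := min_le_left _ _
  have hcz : c ≤ z.re := min_le_right _ _
  have hb1 : ‖(n:ℂ) + 1‖⁻¹ ≤ ((n:ℝ) + c)⁻¹ := by
    rw [e1]
    apply inv_anti₀ (by positivity) (by linarith)
  have hb2 : ‖(n:ℂ) + z‖⁻¹ ≤ ((n:ℝ) + c)⁻¹ := by
    apply inv_anti₀ (by positivity)
    linarith [e2]
  have hfin : ‖z - 1‖ * (‖(n:ℂ)+1‖⁻¹ * ‖(n:ℂ)+z‖⁻¹)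
      ≤ (‖z‖+1) * (((n:ℝ)+c)⁻¹ * ((n:ℝ)+c)⁻¹) := by
    apply mul_le_mul hw1
    · apply mul_le_mul hb1 hb2 (by positivity) (by positivity)
    · positivity
    · positivity
  calc ‖z - 1‖ * (‖(n:ℂ)+1‖⁻¹ * ‖(n:ℂ)+z‖⁻¹)
      ≤ (‖z‖+1) * (((n:ℝ)+c)⁻¹ * ((n:ℝ)+c)⁻¹) := hfin
  _ = (‖z‖+1) * (1 / (((n:ℝ) + c) * ((n:ℝ) + c))) := by rw [one_div, mul_inv]

set_option maxHeartbeats 1000000 in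
/-- For `α > 0`, `β > 0` and every real `y`,
`∫₀^∞ (e^{ixy}-1-ixy) e^{-αβx}/(1-e^{-βx}) dx
 = -(1/β)[ψ(α-iy/β) - ψ(α)] - (iy/β²) ψ'(α)`. -/
theorem stmt12 (α β : ℝ) (hα : 0 < α) (hβ : 0 < β) (y : ℝ) :
    ∫ x in Set.Ioi (0 : ℝ),
      (Complex.exp (Complex.I * x * y) - 1 - Complex.I * x * y)
        * Complex.exp (-(α * β * x) : ℂ)
        / ((1 - Real.exp (-(β * x)) : ℝ) : ℂ)
    = -(1 / (β : ℂ)) * (_root_.digamma ((α : ℂ) - Complex.I * y / β) - _root_.digamma (α : ℂ))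
      - Complex.I * y / (β : ℂ) ^ 2 * deriv _root_.digamma (α : ℂ) := by
  have hβc : (β:ℂ) ≠ 0 := by exact_mod_cast hβ.ne'
  set a : ℂ := (α : ℂ) - Complex.I * y / β with hadef
  have haRe : 0 < a.re := by
    rw [hadef]
    have h0 : (Complex.I * (y:ℂ) / (β:ℂ)).re = 0 := by
      rw [mul_div_assoc, ← Complex.ofReal_div]
      simp
    simp [Complex.sub_re, h0, hα]
  have hαRe : 0 < ((α:ℂ)).re := by simpa using hα
  have hcpos : ∀ n : ℕ, 0 < (α + (n:ℝ)) * β := fun n => by positivity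
  set E : ℝ → ℂ := fun x => Complex.exp (Complex.I * x * y) - 1 - Complex.I * x * y with hEdef
  set F : ℕ → ℝ → ℂ := fun n x => E x * ((Real.exp (-((α + (n:ℝ)) * β * x)) : ℝ) : ℂ) with hFdef
  set cc : ℕ → ℂ := fun n => (((α + (n:ℝ)) * β : ℝ) : ℂ) with hccdef
  have hEcont : Continuous E := by
    rw [hEdef]
    apply Continuous.sub
    apply Continuous.sub
    · exact Complex.continuous_exp.comp
        ((continuous_const.mul Complex.continuous_ofReal).mul continuous_const)
    · exact continuous_const
    · exact (continuous_const.mul Complex.continuous_ofReal).mul continuous_const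
  have hEbound : ∀ x : ℝ, ‖E x‖ ≤ 3 * y^2 * x^2 := by
    intro x
    have h1 : Complex.I * (x:ℂ) * (y:ℂ) = Complex.I * ((x*y : ℝ) : ℂ) := by push_cast; ring
    rw [hEdef]
    simp only [h1]
    calc ‖Complex.exp (Complex.I * ((x*y:ℝ):ℂ)) - 1 - Complex.I * ((x*y:ℝ):ℂ)‖
        ≤ 3*(x*y)^2 := norm_cexp_sub_one_sub (x*y)
    _ = 3*y^2*x^2 := by ring
  have hptbound : ∀ n : ℕ, ∀ x ∈ Set.Ioi (0:ℝ),
      ‖F n x‖ ≤ 3*y^2 * (x^2 * Real.exp (-((α + (n:ℝ)) * β * x))) := by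
    intro n x hx
    rw [hFdef]
    simp only []
    rw [norm_mul, Complex.norm_real, Real.norm_eq_abs, abs_of_pos (Real.exp_pos _)]
    calc ‖E x‖ * Real.exp (-((α + (n:ℝ))*β*x))
        ≤ (3*y^2*x^2) * Real.exp (-((α + (n:ℝ))*β*x)) :=
          mul_le_mul_of_nonneg_right (hEbound x) (Real.exp_nonneg _)
    _ = 3*y^2 * (x^2 * Real.exp (-((α + (n:ℝ))*β*x))) := by ring
  have hFmeas : ∀ n : ℕ, MeasureTheory.AEStronglyMeasurable (F n)
      (MeasureTheory.volume.restrict (Set.Ioi 0)) := by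
    intro n
    apply Continuous.aestronglyMeasurable
    exact hEcont.mul (Complex.continuous_ofReal.comp (Real.continuous_exp.comp
      ((continuous_const.mul continuous_id).neg)))
  have hFint : ∀ n : ℕ, MeasureTheory.IntegrableOn (F n) (Set.Ioi 0) := by
    intro n
    apply MeasureTheory.Integrable.mono'
      ((integrableOn_pow_exp 2 (hcpos n)).const_mul (3*y^2)) (hFmeas n)
    rw [MeasureTheory.ae_restrict_iff' measurableSet_Ioi]
    exact Filter.Eventually.of_forall (hptbound n)
  have hIbound : ∀ n : ℕ, (∫ x in Set.Ioi (0:ℝ), ‖F n x‖)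
      ≤ 3*y^2 * (2 / ((α + (n:ℝ))*β)^3) := by
    intro n
    have h1 : (∫ x in Set.Ioi (0:ℝ), ‖F n x‖)
        ≤ ∫ x in Set.Ioi (0:ℝ), 3*y^2 * (x^2 * Real.exp (-((α + (n:ℝ))*β*x))) := by
      apply MeasureTheory.setIntegral_mono_on ((hFint n).norm)
        ((integrableOn_pow_exp 2 (hcpos n)).const_mul (3*y^2)) measurableSet_Ioi
      exact hptbound n
    have h2 : (∫ x in Set.Ioi (0:ℝ), 3*y^2 * (x^2 * Real.exp (-((α + (n:ℝ))*β*x))))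
        = 3*y^2 * (2 / ((α + (n:ℝ))*β)^3) := by
      rw [MeasureTheory.integral_const_mul, integral_pow_exp 2 (hcpos n)]
      norm_num [Nat.factorial]
    rw [h2] at h1
    exact h1
  have husum : Summable (fun n : ℕ => 3*y^2 * (2 / ((α + (n:ℝ))*β)^3)) := by
    apply Summable.of_nonneg_of_le (fun n => by positivity) _
      ((summable_inv_mul α hα).mul_left (6*y^2/(α*β^3)))
    intro n
    have hterm : 3*y^2*(2/((α + (n:ℝ))*β)^3) = 6*y^2 / ((α+(n:ℝ))^3*β^3) := by
      rw [mul_pow]; ring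
    have hC0 : ((n:ℝ)+α)*((n:ℝ)+α) ≠ 0 := by positivity
    have hterm2 : 6*y^2/(α*β^3) * (1/(((n:ℝ)+α)*((n:ℝ)+α)))
        = 6*y^2 / (α*β^3*(((n:ℝ)+α)*((n:ℝ)+α))) := by
      field_simp
    rw [hterm, hterm2]
    have hineq : α*β^3*(((n:ℝ)+α)*((n:ℝ)+α)) ≤ (α+(n:ℝ))^3*β^3 := by
      have h0 : (0:ℝ) ≤ (n:ℝ) := Nat.cast_nonneg n
      have key : α * (((n:ℝ)+α)*((n:ℝ)+α)) ≤ (α+(n:ℝ))^3 := by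
        nlinarith [mul_nonneg h0 (mul_nonneg (by positivity : (0:ℝ) ≤ (n:ℝ)+α)
          (by positivity : (0:ℝ) ≤ (n:ℝ)+α))]
      calc α*β^3*(((n:ℝ)+α)*((n:ℝ)+α)) = (α*(((n:ℝ)+α)*((n:ℝ)+α)))*β^3 := by ring
      _ ≤ (α+(n:ℝ))^3*β^3 := mul_le_mul_of_nonneg_right key (by positivity)
    rw [div_le_div_iff₀ (by positivity) (by positivity)]
    exact mul_le_mul_of_nonneg_left hineq (by positivity)
  have hFsummInt : Summable (fun n : ℕ => ∫ x in Set.Ioi (0:ℝ), ‖F n x‖) :=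
    Summable.of_nonneg_of_le
      (fun n => MeasureTheory.integral_nonneg (fun x => norm_nonneg _)) hIbound husum
  have hswap := MeasureTheory.integral_tsum_of_summable_integral_norm hFint hFsummInt
  have hpt : ∀ x ∈ Set.Ioi (0:ℝ), (∑' n : ℕ, F n x)
      = E x * Complex.exp (-((α:ℂ) * β * x)) / ((1 - Real.exp (-(β*x)) : ℝ) : ℂ) := by
    intro x hx
    have hx0 : (0:ℝ) < x := hx
    have hq1 : Real.exp (-(β*x)) < 1 := by
      apply Real.exp_lt_one_iff.mpr
      have := mul_pos hβ hx0
      linarith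
    have hq0 : (0:ℝ) ≤ Real.exp (-(β*x)) := (Real.exp_pos _).le
    have hgeo := tsum_geometric_of_lt_one hq0 hq1
    have hterm : ∀ n : ℕ, Real.exp (-((α + (n:ℝ)) * β * x))
        = Real.exp (-(α*β*x)) * Real.exp (-(β*x))^n := by
      intro n
      rw [← Real.exp_nat_mul, ← Real.exp_add]
      congr 1
      ring
    have hsum : ∑' n : ℕ, Real.exp (-((α + (n:ℝ)) * β * x))
        = Real.exp (-(α*β*x)) * (1 - Real.exp (-(β*x)))⁻¹ := by
      simp_rw [hterm]
      rw [tsum_mul_left, hgeo]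
    calc (∑' n : ℕ, F n x)
        = E x * ((∑' n : ℕ, Real.exp (-((α + (n:ℝ)) * β * x)) : ℝ) : ℂ) := by
          rw [hFdef]
          simp only []
          rw [Complex.ofReal_tsum, tsum_mul_left]
    _ = E x * Complex.exp (-((α:ℂ) * β * x)) / ((1 - Real.exp (-(β*x)) : ℝ) : ℂ) := by
          rw [hsum, Complex.ofReal_mul, Complex.ofReal_inv, Complex.ofReal_exp]
          rw [show ((-(α*β*x):ℝ):ℂ) = -((α:ℂ)*β*x) by push_cast; ring]
          rw [div_eq_mul_inv]
          ring
  have hFval : ∀ n : ℕ, (∫ x in Set.Ioi (0:ℝ), F n x)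
      = (cc n - Complex.I*y)⁻¹ - (cc n)⁻¹ - Complex.I*y * ((cc n)^2)⁻¹ := by
    intro n
    have h0 := integral_term (hcpos n) y
    rw [← h0]
    apply MeasureTheory.setIntegral_congr_fun measurableSet_Ioi
    intro x hx
    rw [hFdef, hEdef]
    simp only []
    congr 1
    rw [Complex.ofReal_exp]
    congr 1
    push_cast
    ring
  -- RHS computations
  have hsum_a := csummable_term haRe
  have hsum_α := csummable_term hαRe
  have hdiff : _root_.digamma a - _root_.digamma (α:ℂ)
      = ∑' n : ℕ, (((n:ℂ) + α)⁻¹ - ((n:ℂ) + a)⁻¹) := by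
    rw [digamma_eq_cH haRe, digamma_eq_cH hαRe, cH, cH]
    have h0 : (-(Real.eulerMascheroniConstant:ℂ) + ∑' n : ℕ, (((n:ℂ) + 1)⁻¹ - ((n:ℂ) + a)⁻¹))
        - (-(Real.eulerMascheroniConstant:ℂ) + ∑' n : ℕ, (((n:ℂ) + 1)⁻¹ - ((n:ℂ) + (α:ℂ))⁻¹))
        = (∑' n : ℕ, (((n:ℂ) + 1)⁻¹ - ((n:ℂ) + a)⁻¹))
          - ∑' n : ℕ, (((n:ℂ) + 1)⁻¹ - ((n:ℂ) + (α:ℂ))⁻¹) := by ring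
    rw [h0, ← Summable.tsum_sub hsum_a hsum_α]
    apply tsum_congr
    intro n
    ring
  have hterm_eq : ∀ n : ℕ, -(1/(β:ℂ)) * (((n:ℂ) + α)⁻¹ - ((n:ℂ) + a)⁻¹)
      = (cc n - Complex.I*y)⁻¹ - (cc n)⁻¹ := by
    intro n
    have h1 : cc n - Complex.I*y = (β:ℂ) * ((n:ℂ) + a) := by
      rw [hccdef, hadef]
      push_cast
      field_simp
      ring
    have h2 : cc n = (β:ℂ) * ((n:ℂ) + α) := by rw [hccdef]; push_cast; ring
    rw [h1, h2, mul_inv, mul_inv]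
    have hne1 : ((n:ℂ) + a) ≠ 0 := nat_add_ne_zero haRe n
    have hne2 : ((n:ℂ) + (α:ℂ)) ≠ 0 := nat_add_ne_zero hαRe n
    field_simp
    ring
  have hRHS1 : -(1/(β:ℂ)) * (_root_.digamma a - _root_.digamma (α:ℂ))
      = ∑' n : ℕ, ((cc n - Complex.I*y)⁻¹ - (cc n)⁻¹) := by
    rw [hdiff, ← tsum_mul_left]
    exact tsum_congr hterm_eq
  have hds := deriv_digamma_hasSum hαRe
  have hterm2_eq : ∀ n : ℕ, Complex.I * y / (β:ℂ)^2 * ((((n:ℂ)+(α:ℂ))^2)⁻¹)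
      = Complex.I*y * ((cc n)^2)⁻¹ := by
    intro n
    have h2 : cc n = (β:ℂ) * ((n:ℂ) + α) := by rw [hccdef]; push_cast; ring
    have hne2 : ((n:ℂ) + (α:ℂ)) ≠ 0 := nat_add_ne_zero hαRe n
    rw [h2, mul_pow, mul_inv]
    field_simp
  have hRHS2 : Complex.I * y / (β:ℂ)^2 * deriv _root_.digamma (α:ℂ)
      = ∑' n : ℕ, Complex.I*y * ((cc n)^2)⁻¹ := by
    rw [← hds.tsum_eq, ← tsum_mul_left]
    exact tsum_congr hterm2_eq
  have hsumAB : Summable (fun n : ℕ => (cc n - Complex.I*y)⁻¹ - (cc n)⁻¹) := by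
    have h0 : Summable (fun n : ℕ => (((n:ℂ)+(α:ℂ))⁻¹ - ((n:ℂ)+a)⁻¹)) := by
      have h1 := hsum_a.sub hsum_α
      exact h1.congr fun n => by ring
    exact ((h0.mul_left (-(1/(β:ℂ)))).congr hterm_eq)
  have hsumC : Summable (fun n : ℕ => Complex.I*y * ((cc n)^2)⁻¹) :=
    ((hds.summable.mul_left (Complex.I * y / (β:ℂ)^2)).congr hterm2_eq)
  -- final chain
  have hv : ∑' n : ℕ, (∫ x in Set.Ioi (0:ℝ), F n x)
      = (∑' n : ℕ, ((cc n - Complex.I*y)⁻¹ - (cc n)⁻¹))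
        - ∑' n : ℕ, Complex.I*y * ((cc n)^2)⁻¹ := by
    rw [← Summable.tsum_sub hsumAB hsumC]
    apply tsum_congr
    intro n
    rw [hFval n]
  rw [hRHS1, hRHS2, ← hv, hswap]
  apply MeasureTheory.setIntegral_congr_fun measurableSet_Ioi
  intro x hx
  exact (hpt x hx).symm
end
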